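/- arXiv:1107.0893 — 8 statements merged into one kernel-verified Lean document; each statement's English description precedes it below -/
import Mathlib

section
/- For any function φ : ℕ → {+,−} and any a ∈ ℂ, the φ-Verma module M_φ(a) is an irreducible L-module (i.e., its only L-submodules are 0 and M_φ(a)) if and only if a ≠ 0. -/
/-!
STATEMENT 1: For any function φ : ℕ → {+,−} and any a ∈ ℂ, the φ-Verma module M_φ(a)
is an irreducible L-module iff a ≠ 0.
We model the sign set {+,−} by `Bool`, with `true` standing for `+`.
`ℕ` in the paper means positive integers, so conditions carry `1 ≤ ·`.
-/

open UniversalEnvelopingAlgebra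

/-- The Heisenberg Lie algebra `L` with basis `{c} ∪ {x_{k,i} : k ∈ ℤ∖{0}, 1 ≤ i ≤ d |k|}`,
`c` central, and `[x_{k,i}, x_{l,j}] = δ_{k,-l} δ_{i,j} k c`. -/
structure HeisenbergL (d : ℕ → ℕ) (L : Type) [LieRing L] [LieAlgebra ℂ L] : Type where
  c : L
  x : ℤ → ℕ → L
  basis : Module.Basis (Option {p : ℤ × ℕ // p.1 ≠ 0 ∧ 1 ≤ p.2 ∧ p.2 ≤ d p.1.natAbs}) ℂ L
  basis_none : basis none = c
  basis_some : ∀ p, basis (some p) = x p.1.1 p.1.2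
  lie_c : ∀ y : L, ⁅c, y⁆ = 0
  lie_x_x : ∀ k l i j, k ≠ 0 → l ≠ 0 → 1 ≤ i → i ≤ d k.natAbs → 1 ≤ j → j ≤ d l.natAbs →
    ⁅x k i, x l j⁆ = if k = -l ∧ i = j then (k : ℂ) • c else 0

/-- The index set of the basis vectors `x_{k,i}` spanning `L_φ^+`:
`x_{k,i}` with `k > 0` and `φ k = +`, together with `x_{-k,i}` with `k > 0` and `φ k = -`. -/
def posIdx (d : ℕ → ℕ) (φ : ℕ → Bool) : Set (ℤ × ℕ) :=
  {p | p.1 ≠ 0 ∧ 1 ≤ p.2 ∧ p.2 ≤ d p.1.natAbs ∧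
    ((0 < p.1 ∧ φ p.1.natAbs = true) ∨ (p.1 < 0 ∧ φ p.1.natAbs = false))}

variable {d : ℕ → ℕ} {L : Type} [LieRing L] [LieAlgebra ℂ L]

/-- The left ideal of `U(L)` by which one quotients to obtain the induced module
`M_φ(a) = U(L) ⊗_{U(ℂc ⊕ L_φ^+)} ℂv`: it is generated by `c - a·1` and `L_φ^+`. -/
def vermaIdeal (E : HeisenbergL d L) (φ : ℕ → Bool) (a : ℂ) :
    Submodule (UniversalEnvelopingAlgebra ℂ L) (UniversalEnvelopingAlgebra ℂ L) :=
  Submodule.span (UniversalEnvelopingAlgebra ℂ L)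
    ({ι ℂ E.c - algebraMap ℂ (UniversalEnvelopingAlgebra ℂ L) a} ∪
      ((fun p : ℤ × ℕ => ι ℂ (E.x p.1 p.2)) '' posIdx d φ))

/-- The φ-Verma module `M_φ(a)`, realized as `U(L)/U(L)·⟨c - a, L_φ^+⟩`. -/
def VermaMod (E : HeisenbergL d L) (φ : ℕ → Bool) (a : ℂ) :=
  UniversalEnvelopingAlgebra ℂ L ⧸ vermaIdeal E φ a

instance (E : HeisenbergL d L) (φ : ℕ → Bool) (a : ℂ) : AddCommGroup (VermaMod E φ a) :=
  inferInstanceAs (AddCommGroup (UniversalEnvelopingAlgebra ℂ L ⧸ vermaIdeal E φ a))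

instance (E : HeisenbergL d L) (φ : ℕ → Bool) (a : ℂ) :
    Module (UniversalEnvelopingAlgebra ℂ L) (VermaMod E φ a) :=
  inferInstanceAs (Module (UniversalEnvelopingAlgebra ℂ L)
    (UniversalEnvelopingAlgebra ℂ L ⧸ vermaIdeal E φ a))

/-! ### Auxiliary development -/

attribute [local instance] LieRing.ofAssociativeRing

noncomputable section Aux

open MvPolynomial

/-- The negative index set. -/
def negIdx (d : ℕ → ℕ) (φ : ℕ → Bool) : Set (ℤ × ℕ) :=
  {p | p.1 ≠ 0 ∧ 1 ≤ p.2 ∧ p.2 ≤ d p.1.natAbs ∧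
    ((0 < p.1 ∧ φ p.1.natAbs = false) ∨ (p.1 < 0 ∧ φ p.1.natAbs = true))}

variable {φ : ℕ → Bool}

lemma negIdx_of_not_pos {p : ℤ × ℕ} (h1 : p.1 ≠ 0) (h2 : 1 ≤ p.2) (h3 : p.2 ≤ d p.1.natAbs)
    (h : p ∉ posIdx d φ) : p ∈ negIdx d φ := by
  refine ⟨h1, h2, h3, ?_⟩
  rcases h1.lt_or_gt with hk | hk
  · cases hb : φ p.1.natAbs
    · exact absurd ⟨h1, h2, h3, Or.inr ⟨hk, hb⟩⟩ h
    · exact Or.inr ⟨hk, rfl⟩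
  · cases hb : φ p.1.natAbs
    · exact Or.inl ⟨hk, rfl⟩
    · exact absurd ⟨h1, h2, h3, Or.inl ⟨hk, hb⟩⟩ h

lemma not_posIdx_of_negIdx {p : ℤ × ℕ} (h : p ∈ negIdx d φ) : p ∉ posIdx d φ := by
  rintro ⟨-, -, -, (⟨hk, hb⟩ | ⟨hk, hb⟩)⟩ <;>
    rcases h with ⟨-, -, -, (⟨hk', hb'⟩ | ⟨hk', hb'⟩)⟩ <;>
      first | omega | simp_all

lemma neg_mem_negIdx {p : ℤ × ℕ} (h : p ∈ posIdx d φ) : (-p.1, p.2) ∈ negIdx d φ := by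
  obtain ⟨h1, h2, h3, h4⟩ := h
  refine ⟨by simpa using h1, h2, by simpa using h3, ?_⟩
  rcases h4 with ⟨hk, hb⟩ | ⟨hk, hb⟩
  · exact Or.inr ⟨by omega, by simpa using hb⟩
  · exact Or.inl ⟨by omega, by simpa using hb⟩

lemma neg_mem_posIdx {p : ℤ × ℕ} (h : p ∈ negIdx d φ) : (-p.1, p.2) ∈ posIdx d φ := by
  obtain ⟨h1, h2, h3, h4⟩ := h
  refine ⟨by simpa using h1, h2, by simpa using h3, ?_⟩
  rcases h4 with ⟨hk, hb⟩ | ⟨hk, hb⟩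
  · exact Or.inr ⟨by omega, by simpa using hb⟩
  · exact Or.inl ⟨by omega, by simpa using hb⟩

lemma not_pair_pos_pos {p q : ℤ × ℕ} (hp : p ∈ posIdx d φ) (hq : q ∈ posIdx d φ) :
    ¬(p.1 = -q.1 ∧ p.2 = q.2) := by
  rintro ⟨h, -⟩
  have : p.1.natAbs = q.1.natAbs := by omega
  rcases hp.2.2.2 with ⟨hk, hb⟩ | ⟨hk, hb⟩ <;> rcases hq.2.2.2 with ⟨hk', hb'⟩ | ⟨hk', hb'⟩ <;>
    simp_all <;> omega

lemma not_pair_neg_neg {p q : ℤ × ℕ} (hp : p ∈ negIdx d φ) (hq : q ∈ negIdx d φ) :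
    ¬(p.1 = -q.1 ∧ p.2 = q.2) := by
  rintro ⟨h, -⟩
  have : p.1.natAbs = q.1.natAbs := by omega
  rcases hp.2.2.2 with ⟨hk, hb⟩ | ⟨hk, hb⟩ <;> rcases hq.2.2.2 with ⟨hk', hb'⟩ | ⟨hk', hb'⟩ <;>
    simp_all <;> omega

end Aux

noncomputable section FockOps

open MvPolynomial

lemma pderiv_comm_apply {σ : Type*} (i j : σ) (p : MvPolynomial σ ℂ) :
    pderiv i (pderiv j p) = pderiv j (pderiv i p) := by
  classical
  induction p using MvPolynomial.induction_on' with
  | add p q hp hq => simp [hp, hq]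
  | monomial s c =>
    simp only [pderiv_monomial]
    rcases eq_or_ne i j with rfl | hij
    · rfl
    · congr 1
      · rw [tsub_tsub, tsub_tsub, add_comm]
      · rw [Finsupp.tsub_apply, Finsupp.tsub_apply, Finsupp.single_eq_of_ne hij,
          Finsupp.single_eq_of_ne (Ne.symm hij)]
        push_cast [Nat.sub_zero]
        ring

lemma pderiv_commute {σ : Type*} (i j : σ) :
    Commute ((pderiv i).toLinearMap : Module.End ℂ (MvPolynomial σ ℂ))
      (pderiv j).toLinearMap := by
  apply LinearMap.ext
  intro p
  exact pderiv_comm_apply i j p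

lemma derX_bracket {σ : Type*} [DecidableEq σ] (u v : σ) :
    ⁅((pderiv u).toLinearMap : Module.End ℂ (MvPolynomial σ ℂ)), LinearMap.mulLeft ℂ (X v)⁆ =
      if u = v then (1 : Module.End ℂ (MvPolynomial σ ℂ)) else 0 := by
  apply LinearMap.ext
  intro p
  rw [LieRing.of_associative_ring_bracket]
  simp only [LinearMap.sub_apply, Module.End.mul_apply, LinearMap.mulLeft_apply,
    Derivation.coeFn_coe]
  rw [pderiv_mul, pderiv_X]
  rcases eq_or_ne u v with rfl | huv
  · simp
  · simp [huv]

lemma mulX_commute {σ : Type*} (u v : σ) :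
    Commute (LinearMap.mulLeft ℂ (X u) : Module.End ℂ (MvPolynomial σ ℂ))
      (LinearMap.mulLeft ℂ (X v)) := by
  apply LinearMap.ext
  intro p
  simp only [Module.End.mul_apply, LinearMap.mulLeft_apply]
  ring

end FockOps
noncomputable section Rho

open MvPolynomial

/-- Basis index type for `L`. -/
abbrev BIdx (d : ℕ → ℕ) := {p : ℤ × ℕ // p.1 ≠ 0 ∧ 1 ≤ p.2 ∧ p.2 ≤ d p.1.natAbs}

/-- The Fock space. -/
abbrev Fk (d : ℕ → ℕ) (φ : ℕ → Bool) := MvPolynomial ↥(negIdx d φ) ℂ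

def pPos {d : ℕ → ℕ} {φ : ℕ → Bool} (p : ↥(posIdx d φ)) : ↥(negIdx d φ) :=
  ⟨(-p.1.1, p.1.2), neg_mem_negIdx p.2⟩

open Classical in
/-- The family of operators on the Fock space given by the basis elements of `L`. -/
def opFam (d : ℕ → ℕ) (φ : ℕ → Bool) (a : ℂ) : Option (BIdx d) → Module.End ℂ (Fk d φ)
  | none => a • 1
  | some p =>
    if h : p.1 ∈ posIdx d φ then
      ((p.1.1 : ℂ) * a) • ((pderiv (pPos ⟨p.1, h⟩)).toLinearMap : Module.End ℂ (Fk d φ))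
    else LinearMap.mulLeft ℂ (X ⟨p.1, negIdx_of_not_pos p.2.1 p.2.2.1 p.2.2.2 h⟩)

variable {d : ℕ → ℕ} {φ : ℕ → Bool} {a : ℂ}

lemma opFam_none : opFam d φ a none = a • 1 := rfl

lemma opFam_pos (p : BIdx d) (hp : p.1 ∈ posIdx d φ) :
    opFam d φ a (some p) =
      ((p.1.1 : ℂ) * a) • ((pderiv (pPos ⟨p.1, hp⟩)).toLinearMap : Module.End ℂ (Fk d φ)) := by
  rw [opFam, dif_pos hp]

lemma opFam_neg (p : BIdx d) (hn : p.1 ∈ negIdx d φ) :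
    opFam d φ a (some p) = LinearMap.mulLeft ℂ (X (⟨p.1, hn⟩ : ↥(negIdx d φ))) := by
  rw [opFam, dif_neg (not_posIdx_of_negIdx hn)]

lemma commute_bracket_eq_zero {A : Type*} [Ring A] {x y : A} (h : Commute x y) :
    ⁅x, y⁆ = 0 := by
  rw [LieRing.of_associative_ring_bracket, h.eq, sub_self]

lemma smul_bracket {d : ℕ → ℕ} {φ : ℕ → Bool} (α : ℂ) (S T : Module.End ℂ (Fk d φ)) :
    ⁅α • S, T⁆ = α • ⁅S, T⁆ := by
  rw [LieRing.of_associative_ring_bracket, LieRing.of_associative_ring_bracket,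
    smul_mul_assoc, mul_smul_comm, smul_sub]

lemma bracket_smul {d : ℕ → ℕ} {φ : ℕ → Bool} (α : ℂ) (S T : Module.End ℂ (Fk d φ)) :
    ⁅S, α • T⁆ = α • ⁅S, T⁆ := by
  rw [LieRing.of_associative_ring_bracket, LieRing.of_associative_ring_bracket,
    smul_mul_assoc, mul_smul_comm, smul_sub]

lemma smul_one_bracket (T : Module.End ℂ (Fk d φ)) : ⁅a • (1 : Module.End ℂ (Fk d φ)), T⁆ = 0 := by
  rw [LieRing.of_associative_ring_bracket]
  rw [smul_mul_assoc, mul_smul_comm, one_mul, mul_one, sub_self]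

variable (E : HeisenbergL d L)

/-- The linear part of the Fock representation. -/
def rhoLin (E : HeisenbergL d L) (φ : ℕ → Bool) (a : ℂ) : L →ₗ[ℂ] Module.End ℂ (Fk d φ) :=
  E.basis.constr ℕ (opFam d φ a)

lemma rhoLin_basis (q : Option (BIdx d)) : rhoLin E φ a (E.basis q) = opFam d φ a q :=
  Module.Basis.constr_basis _ _ _ _

lemma rhoLin_c : rhoLin E φ a E.c = a • 1 := by
  rw [← E.basis_none, rhoLin_basis]; rfl

lemma rhoLin_key (q r : Option (BIdx d)) :
    rhoLin E φ a ⁅E.basis q, E.basis r⁆ = ⁅rhoLin E φ a (E.basis q), rhoLin E φ a (E.basis r)⁆ := by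
  classical
  match q, r with
  | none, r =>
    rw [rhoLin_basis, rhoLin_basis, E.basis_none, E.lie_c, map_zero, opFam_none, smul_one_bracket]
  | some p, none =>
    have hL : (⁅E.basis (some p), E.basis none⁆ : L) = 0 := by
      rw [E.basis_none, ← lie_skew, E.lie_c, neg_zero]
    rw [hL, map_zero, rhoLin_basis, rhoLin_basis, opFam_none, ← lie_skew, smul_one_bracket,
      neg_zero]
  | some p, some p' =>
    obtain ⟨h1, h2, h3⟩ := p.2
    obtain ⟨h1', h2', h3'⟩ := p'.2
    rw [rhoLin_basis, rhoLin_basis, E.basis_some, E.basis_some,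
      E.lie_x_x _ _ _ _ h1 h1' h2 h3 h2' h3']
    by_cases hp : p.1 ∈ posIdx d φ
    · by_cases hp' : p'.1 ∈ posIdx d φ
      · -- pos-pos
        rw [if_neg (not_pair_pos_pos hp hp'), map_zero, opFam_pos p hp, opFam_pos p' hp']
        exact .symm <| commute_bracket_eq_zero (((pderiv_commute (pPos ⟨p.1, hp⟩) (pPos ⟨p'.1, hp'⟩)).smul_left ((p.1.1 : ℂ) * a)).smul_right ((p'.1.1 : ℂ) * a))
      · -- pos-neg
        have hn' : p'.1 ∈ negIdx d φ := negIdx_of_not_pos h1' h2' h3' hp'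
        rw [opFam_pos p hp, opFam_neg p' hn', smul_bracket, derX_bracket]
        have hiff : (pPos (⟨p.1, hp⟩ : ↥(posIdx d φ)) = (⟨p'.1, hn'⟩ : ↥(negIdx d φ)))
            ↔ (p.1.1 = -p'.1.1 ∧ p.1.2 = p'.1.2) := by
          simp only [pPos, Subtype.ext_iff, Prod.ext_iff]
          constructor
          · rintro ⟨hx, hy⟩; exact ⟨by omega, hy⟩
          · rintro ⟨hx, hy⟩; exact ⟨by omega, hy⟩
        by_cases hc : p.1.1 = -p'.1.1 ∧ p.1.2 = p'.1.2
        · rw [if_pos hc, if_pos (hiff.mpr hc), map_smul, rhoLin_c, smul_smul]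
        · rw [if_neg hc, if_neg (fun h => hc (hiff.mp h)), map_zero, smul_zero]
    · have hn : p.1 ∈ negIdx d φ := negIdx_of_not_pos h1 h2 h3 hp
      by_cases hp' : p'.1 ∈ posIdx d φ
      · -- neg-pos
        rw [opFam_neg p hn, opFam_pos p' hp', ← lie_skew, smul_bracket, derX_bracket]
        have hiff : (pPos (⟨p'.1, hp'⟩ : ↥(posIdx d φ)) = (⟨p.1, hn⟩ : ↥(negIdx d φ)))
            ↔ (p.1.1 = -p'.1.1 ∧ p.1.2 = p'.1.2) := by
          simp only [pPos, Subtype.ext_iff, Prod.ext_iff]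
          constructor
          · rintro ⟨hx, hy⟩; exact ⟨by omega, hy.symm⟩
          · rintro ⟨hx, hy⟩; exact ⟨by omega, hy.symm⟩
        by_cases hc : p.1.1 = -p'.1.1 ∧ p.1.2 = p'.1.2
        · have hcc : (p.1.1 : ℂ) = -(p'.1.1 : ℂ) := by rw [hc.1]; push_cast; ring
          rw [if_pos hc, if_pos (hiff.mpr hc), map_smul, rhoLin_c, smul_smul, hcc, neg_mul,
            neg_smul]
        · rw [if_neg hc, if_neg (fun h => hc (hiff.mp h)), map_zero, smul_zero, neg_zero]
      · -- neg-neg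
        have hn' : p'.1 ∈ negIdx d φ := negIdx_of_not_pos h1' h2' h3' hp'
        rw [if_neg (not_pair_neg_neg hn hn'), map_zero, opFam_neg p hn, opFam_neg p' hn']
        exact (commute_bracket_eq_zero (mulX_commute _ _)).symm

/-- The Fock representation of `L`. -/
def rho (E : HeisenbergL d L) (φ : ℕ → Bool) (a : ℂ) : L →ₗ⁅ℂ⁆ Module.End ℂ (Fk d φ) :=
  { rhoLin E φ a with
    map_lie' := by
      intro u v
      show rhoLin E φ a ⁅u, v⁆ = ⁅rhoLin E φ a u, rhoLin E φ a v⁆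
      have hv : v ∈ Submodule.span ℂ (Set.range E.basis) := by rw [E.basis.span_eq]; trivial
      have key2 : ∀ q (w : L), w ∈ Submodule.span ℂ (Set.range E.basis) →
          rhoLin E φ a ⁅E.basis q, w⁆ = ⁅rhoLin E φ a (E.basis q), rhoLin E φ a w⁆ := by
        intro q w hw
        induction hw using Submodule.span_induction with
        | mem w hw => obtain ⟨r, rfl⟩ := hw; exact rhoLin_key E q r
        | zero => rw [lie_zero, map_zero, lie_zero]
        | add x y _ _ hx hy => rw [lie_add, map_add, hx, hy, map_add, lie_add]
        | smul t x _ hx => rw [lie_smul, map_smul, hx, map_smul, bracket_smul]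
      have hu : u ∈ Submodule.span ℂ (Set.range E.basis) := by rw [E.basis.span_eq]; trivial
      induction hu using Submodule.span_induction with
      | mem w hw => obtain ⟨q, rfl⟩ := hw; exact key2 q v hv
      | zero => rw [zero_lie, map_zero, zero_lie]
      | add x y _ _ hx hy => rw [add_lie, map_add, hx, hy, map_add, add_lie]
      | smul t x _ hx => rw [smul_lie, map_smul, hx, map_smul, smul_bracket] }

end Rho
noncomputable section Pi

open MvPolynomial

theorem uea_ind {R : Type*} [CommRing R] {L' : Type*} [LieRing L'] [LieAlgebra R L']
    {C : UniversalEnvelopingAlgebra R L' → Prop}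
    (halg : ∀ r, C (algebraMap R (UniversalEnvelopingAlgebra R L') r))
    (hι : ∀ z : L', C (ι R z))
    (hmul : ∀ x y, C x → C y → C (x * y)) (hadd : ∀ x y, C x → C y → C (x + y)) :
    ∀ u, C u := by
  intro u
  have hs : Function.Surjective (mkAlgHom R L') :=
    RingCon.mkₐ_surjective _
  obtain ⟨t, rfl⟩ := hs u
  induction t using TensorAlgebra.induction with
  | algebraMap r => rw [AlgHom.commutes]; exact halg r
  | ι z => exact (UniversalEnvelopingAlgebra.ι_apply R z) ▸ hι z
  | mul x y hx hy => rw [map_mul]; exact hmul _ _ hx hy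
  | add x y hx hy => rw [map_add]; exact hadd _ _ hx hy

variable {d : ℕ → ℕ} {φ : ℕ → Bool} {a : ℂ}

/-- The Fock representation of `U(L)`. -/
def piF (E : HeisenbergL d L) (φ : ℕ → Bool) (a : ℂ) :
    UniversalEnvelopingAlgebra ℂ L →ₐ[ℂ] Module.End ℂ (Fk d φ) :=
  UniversalEnvelopingAlgebra.lift ℂ (rho E φ a)

variable (E : HeisenbergL d L)

lemma piF_ι (z : L) : piF E φ a (ι ℂ z) = rhoLin E φ a z := by
  rw [piF, lift_ι_apply]; rfl

lemma piF_c : piF E φ a (ι ℂ E.c) = a • 1 := by rw [piF_ι, rhoLin_c]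

lemma piF_xneg (j : ↥(negIdx d φ)) :
    piF E φ a (ι ℂ (E.x j.1.1 j.1.2)) = LinearMap.mulLeft ℂ (X j) := by
  rw [piF_ι, ← E.basis_some ⟨j.1, j.2.1, j.2.2.1, j.2.2.2.1⟩, rhoLin_basis,
    opFam_neg _ j.2]

lemma piF_xpos (p : ↥(posIdx d φ)) :
    piF E φ a (ι ℂ (E.x p.1.1 p.1.2)) =
      ((p.1.1 : ℂ) * a) • ((pderiv (pPos p)).toLinearMap : Module.End ℂ (Fk d φ)) := by
  rw [piF_ι, ← E.basis_some ⟨p.1, p.2.1, p.2.2.1, p.2.2.2.1⟩, rhoLin_basis,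
    opFam_pos _ p.2]

lemma piF_ideal_one {u : UniversalEnvelopingAlgebra ℂ L} (hu : u ∈ vermaIdeal E φ a) :
    piF E φ a u 1 = 0 := by
  induction hu using Submodule.span_induction with
  | mem g hg =>
    rcases hg with hg | ⟨p, hp, rfl⟩
    · rw [Set.mem_singleton_iff] at hg
      subst hg
      rw [map_sub, piF_c, AlgHom.commutes, Module.algebraMap_end_eq_smul_id]
      simp
    · rw [piF_xpos E ⟨p, hp⟩]
      simp
  | zero => simp
  | add x y _ _ hx hy => rw [map_add, LinearMap.add_apply, hx, hy, add_zero]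
  | smul r x _ hx => rw [smul_eq_mul, map_mul, Module.End.mul_apply, hx, map_zero]

lemma ic_central (u : UniversalEnvelopingAlgebra ℂ L) : Commute (ι ℂ E.c) u := by
  induction u using uea_ind with
  | halg r => exact (Algebra.commutes r _).symm
  | hι z =>
    have h : (ι ℂ ⁅E.c, z⁆ : UniversalEnvelopingAlgebra ℂ L) = ⁅ι ℂ E.c, ι ℂ z⁆ :=
      LieHom.map_lie _ _ _
    rw [E.lie_c, LieRing.of_associative_ring_bracket, map_zero] at h
    exact (sub_eq_zero.mp h.symm)
  | hmul x y hx hy => exact hx.mul_right hy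
  | hadd x y hx hy => exact hx.add_right hy

/-- Generators indexed by the negative indices. -/
def negGen (E : HeisenbergL d L) (j : ↥(negIdx d φ)) : UniversalEnvelopingAlgebra ℂ L :=
  ι ℂ (E.x j.1.1 j.1.2)

lemma x_commute_of_not_pair {p q : ℤ × ℕ}
    (hp : p.1 ≠ 0 ∧ 1 ≤ p.2 ∧ p.2 ≤ d p.1.natAbs) (hq : q.1 ≠ 0 ∧ 1 ≤ q.2 ∧ q.2 ≤ d q.1.natAbs)
    (h : ¬(p.1 = -q.1 ∧ p.2 = q.2)) :
    Commute (ι ℂ (E.x p.1 p.2) : UniversalEnvelopingAlgebra ℂ L) (ι ℂ (E.x q.1 q.2)) := by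
  have hl : (ι ℂ ⁅E.x p.1 p.2, E.x q.1 q.2⁆ : UniversalEnvelopingAlgebra ℂ L)
      = ⁅ι ℂ (E.x p.1 p.2), ι ℂ (E.x q.1 q.2)⁆ := LieHom.map_lie _ _ _
  rw [E.lie_x_x _ _ _ _ hp.1 hq.1 hp.2.1 hp.2.2 hq.2.1 hq.2.2, if_neg h,
    LieRing.of_associative_ring_bracket, map_zero] at hl
  exact sub_eq_zero.mp hl.symm

lemma negGen_commute (j j' : ↥(negIdx d φ)) : Commute (negGen E j) (negGen E j') :=
  x_commute_of_not_pair E ⟨j.2.1, j.2.2.1, j.2.2.2.1⟩ ⟨j'.2.1, j'.2.2.1, j'.2.2.2.1⟩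
    (not_pair_neg_neg j.2 j'.2)

/-- The subalgebra generated by the negative generators. -/
def negAdj (E : HeisenbergL d L) (φ : ℕ → Bool) : Subalgebra ℂ (UniversalEnvelopingAlgebra ℂ L) :=
  Algebra.adjoin ℂ (Set.range (negGen (φ := φ) E))

def negAdjCommRing : CommRing ↥(negAdj E φ) :=
  Algebra.adjoinCommRingOfComm ℂ (by
    rintro x ⟨j, rfl⟩ y ⟨j', rfl⟩
    exact (negGen_commute E j j').eq)

attribute [reducible] negAdjCommRing

/-- The monomial-lifting algebra morphism from the Fock space into `U(L)`. -/
def tau (E : HeisenbergL d L) (φ : ℕ → Bool) : Fk d φ →ₐ[ℂ] UniversalEnvelopingAlgebra ℂ L :=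
  letI : CommRing ↥(negAdj E φ) := negAdjCommRing E
  letI : @Algebra ℂ ↥(negAdj E φ) _ CommSemiring.toSemiring := (negAdj E φ).algebra
  (negAdj E φ).val.comp
    (MvPolynomial.aeval fun j => (⟨negGen E j, Algebra.subset_adjoin ⟨j, rfl⟩⟩ : ↥(negAdj E φ)))

lemma tau_X (j : ↥(negIdx d φ)) : tau E φ (X j) = negGen E j := by
  rw [tau]
  letI : CommRing ↥(negAdj E φ) := negAdjCommRing E
  letI : @Algebra ℂ ↥(negAdj E φ) _ CommSemiring.toSemiring := (negAdj E φ).algebra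
  exact congrArg Subtype.val (MvPolynomial.aeval_X _ j)

lemma piF_tau (p : Fk d φ) :
    piF E φ a (tau E φ p) = Algebra.lmul ℂ (Fk d φ) p := by
  have h : (piF E φ a).comp (tau E φ) = Algebra.lmul ℂ (Fk d φ) := by
    apply MvPolynomial.algHom_ext
    intro j
    rw [AlgHom.comp_apply, tau_X, negGen, piF_xneg]
    apply LinearMap.ext
    intro q
    simp [LinearMap.mulLeft_apply]
  exact DFunLike.congr_fun h p

lemma piF_tau_one (p : Fk d φ) : piF E φ a (tau E φ p) 1 = p := by
  rw [piF_tau]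
  simp

end Pi
noncomputable section Straighten

open MvPolynomial

variable {d : ℕ → ℕ} {φ : ℕ → Bool} {a : ℂ} (E : HeisenbergL d L)

lemma pPos_eq_iff (p : ↥(posIdx d φ)) (j : ↥(negIdx d φ)) :
    pPos p = j ↔ (p.1.1 = -j.1.1 ∧ p.1.2 = j.1.2) := by
  simp only [pPos, Subtype.ext_iff, Prod.ext_iff]
  constructor
  · rintro ⟨hx, hy⟩; exact ⟨by omega, hy⟩
  · rintro ⟨hx, hy⟩; exact ⟨by omega, hy⟩

lemma xpos_mul_negGen (p : ↥(posIdx d φ)) (j : ↥(negIdx d φ)) :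
    ι ℂ (E.x p.1.1 p.1.2) * negGen E j =
      negGen E j * ι ℂ (E.x p.1.1 p.1.2) +
        (if pPos p = j then (p.1.1 : ℂ) • ι ℂ E.c else 0) := by
  classical
  have hl : (ι ℂ ⁅E.x p.1.1 p.1.2, E.x j.1.1 j.1.2⁆ : UniversalEnvelopingAlgebra ℂ L)
      = ⁅ι ℂ (E.x p.1.1 p.1.2), ι ℂ (E.x j.1.1 j.1.2)⁆ := LieHom.map_lie _ _ _
  rw [E.lie_x_x _ _ _ _ p.2.1 j.2.1 p.2.2.1 p.2.2.2.1 j.2.2.1 j.2.2.2.1,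
    LieRing.of_associative_ring_bracket] at hl
  by_cases hc : pPos p = j
  · rw [if_pos ((pPos_eq_iff p j).mp hc), map_smul] at hl
    rw [if_pos hc, ← sub_eq_iff_eq_add']
    · exact hl.symm ▸ rfl
  · rw [if_neg (fun h => hc ((pPos_eq_iff p j).mpr h)), map_zero] at hl
    rw [if_neg hc, add_zero]
    exact sub_eq_zero.mp hl.symm

set_option maxHeartbeats 800000 in
lemma straighten (p : ↥(posIdx d φ)) (q : Fk d φ) :
    ι ℂ (E.x p.1.1 p.1.2) * tau E φ q =
      tau E φ q * ι ℂ (E.x p.1.1 p.1.2) +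
        (p.1.1 : ℂ) • (ι ℂ E.c * tau E φ (pderiv (pPos p) q)) := by
  classical
  induction q using MvPolynomial.induction_on with
  | C r =>
    rw [pderiv_C, map_zero, mul_zero, smul_zero, add_zero,
      show (C r : Fk d φ) = algebraMap ℂ _ r from rfl, AlgHom.commutes]
    exact (Algebra.commutes r _).symm
  | add f g hf hg =>
    rw [map_add, mul_add, add_mul, hf, hg, map_add, map_add, mul_add, smul_add]
    abel
  | mul_X q j ih =>
    have hτX : tau E φ (X j) = negGen E j := tau_X E j
    by_cases hc : pPos p = j
    · have hA : ι ℂ (E.x p.1.1 p.1.2) * negGen E j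
          = negGen E j * ι ℂ (E.x p.1.1 p.1.2) + (p.1.1 : ℂ) • ι ℂ E.c := by
        rw [xpos_mul_negGen E p j, if_pos hc]
      have hD : pderiv (pPos p) (q * X j) = pderiv (pPos p) q * X j + q := by
        rw [pderiv_mul, hc, pderiv_X_self, mul_one]
      rw [hD, map_mul, hτX, map_add, map_mul, hτX]
      calc ι ℂ (E.x p.1.1 p.1.2) * (tau E φ q * negGen E j)
          = (ι ℂ (E.x p.1.1 p.1.2) * tau E φ q) * negGen E j := by rw [mul_assoc]
        _ = (tau E φ q * ι ℂ (E.x p.1.1 p.1.2)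
              + (p.1.1 : ℂ) • (ι ℂ E.c * tau E φ (pderiv (pPos p) q))) * negGen E j := by
            rw [ih]
        _ = tau E φ q * (ι ℂ (E.x p.1.1 p.1.2) * negGen E j)
              + (p.1.1 : ℂ) • (ι ℂ E.c * (tau E φ (pderiv (pPos p) q) * negGen E j)) := by
            rw [add_mul, mul_assoc, smul_mul_assoc, mul_assoc]
        _ = tau E φ q * negGen E j * ι ℂ (E.x p.1.1 p.1.2)
              + ((p.1.1 : ℂ) • (ι ℂ E.c * tau E φ q)
                + (p.1.1 : ℂ) • (ι ℂ E.c * (tau E φ (pderiv (pPos p) q) * negGen E j))) := by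
            rw [hA, mul_add, mul_smul_comm, ← mul_assoc, ← (ic_central E (tau E φ q)).eq]
            abel
        _ = tau E φ q * negGen E j * ι ℂ (E.x p.1.1 p.1.2)
              + (p.1.1 : ℂ) • (ι ℂ E.c * (tau E φ (pderiv (pPos p) q) * negGen E j + tau E φ q)) := by
            rw [mul_add, smul_add]
            abel
    · have hA : ι ℂ (E.x p.1.1 p.1.2) * negGen E j
          = negGen E j * ι ℂ (E.x p.1.1 p.1.2) := by
        rw [xpos_mul_negGen E p j, if_neg hc, add_zero]
      have hD : pderiv (pPos p) (q * X j) = pderiv (pPos p) q * X j := by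
        rw [pderiv_mul, pderiv_X_of_ne (fun h => hc h.symm), mul_zero, add_zero]
      rw [hD, map_mul, hτX, map_mul, hτX]
      calc ι ℂ (E.x p.1.1 p.1.2) * (tau E φ q * negGen E j)
          = (ι ℂ (E.x p.1.1 p.1.2) * tau E φ q) * negGen E j := by rw [mul_assoc]
        _ = (tau E φ q * ι ℂ (E.x p.1.1 p.1.2)
              + (p.1.1 : ℂ) • (ι ℂ E.c * tau E φ (pderiv (pPos p) q))) * negGen E j := by
            rw [ih]
        _ = tau E φ q * (ι ℂ (E.x p.1.1 p.1.2) * negGen E j)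
              + (p.1.1 : ℂ) • (ι ℂ E.c * (tau E φ (pderiv (pPos p) q) * negGen E j)) := by
            rw [add_mul, mul_assoc, smul_mul_assoc, mul_assoc]
        _ = tau E φ q * negGen E j * ι ℂ (E.x p.1.1 p.1.2)
              + (p.1.1 : ℂ) • (ι ℂ E.c * (tau E φ (pderiv (pPos p) q) * negGen E j)) := by
            rw [hA, ← mul_assoc]

end Straighten
noncomputable section Span

open MvPolynomial

variable {d : ℕ → ℕ} {φ : ℕ → Bool} {a : ℂ} (E : HeisenbergL d L)

/-- The ℂ-submodule given by the Verma ideal together with the "PBW monomial" part. -/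
def SSub (E : HeisenbergL d L) (φ : ℕ → Bool) (a : ℂ) :
    Submodule ℂ (UniversalEnvelopingAlgebra ℂ L) :=
  (vermaIdeal E φ a).restrictScalars ℂ ⊔ LinearMap.range (tau E φ).toLinearMap

lemma ideal_mem_S {u : UniversalEnvelopingAlgebra ℂ L} (hu : u ∈ vermaIdeal E φ a) :
    u ∈ SSub E φ a :=
  Submodule.mem_sup_left hu

lemma tau_mem_S (q : Fk d φ) : tau E φ q ∈ SSub E φ a :=
  Submodule.mem_sup_right ⟨q, rfl⟩

lemma cgen_mem_ideal : ι ℂ E.c - algebraMap ℂ (UniversalEnvelopingAlgebra ℂ L) a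
    ∈ vermaIdeal E φ a :=
  Submodule.subset_span (Set.mem_union_left _ rfl)

lemma xpos_mem_ideal (p : ↥(posIdx d φ)) :
    ι ℂ (E.x p.1.1 p.1.2) ∈ vermaIdeal E φ a :=
  Submodule.subset_span (Set.mem_union_right _ ⟨p.1, p.2, rfl⟩)

lemma mul_ideal_mem {g : UniversalEnvelopingAlgebra ℂ L} (hg : g ∈ vermaIdeal E φ a)
    (u : UniversalEnvelopingAlgebra ℂ L) : u * g ∈ vermaIdeal E φ a := by
  have := Submodule.smul_mem (vermaIdeal E φ a) u hg
  rwa [smul_eq_mul] at this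

lemma ic_mul_tau_mem (q : Fk d φ) : ι ℂ E.c * tau E φ q ∈ SSub E φ a := by
  have h : ι ℂ E.c * tau E φ q
      = tau E φ q * (ι ℂ E.c - algebraMap ℂ (UniversalEnvelopingAlgebra ℂ L) a)
        + a • tau E φ q := by
    rw [mul_sub, ← Algebra.commutes a (tau E φ q), ← Algebra.smul_def, (ic_central E _).eq]
    abel
  rw [h]
  exact add_mem (ideal_mem_S E (mul_ideal_mem E (cgen_mem_ideal E) _))
    (Submodule.smul_mem _ _ (tau_mem_S E q))

lemma xpos_mul_tau_mem (p : ↥(posIdx d φ)) (q : Fk d φ) :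
    ι ℂ (E.x p.1.1 p.1.2) * tau E φ q ∈ SSub E φ a := by
  rw [straighten]
  exact add_mem (ideal_mem_S E (mul_ideal_mem E (xpos_mem_ideal E p) _))
    (Submodule.smul_mem _ _ (ic_mul_tau_mem E _))

lemma iota_mul_tau_mem (z : L) (q : Fk d φ) : ι ℂ z * tau E φ q ∈ SSub E φ a := by
  have hz : z ∈ Submodule.span ℂ (Set.range E.basis) := by rw [E.basis.span_eq]; trivial
  induction hz using Submodule.span_induction with
  | mem w hw =>
    obtain ⟨r, rfl⟩ := hw
    match r with
    | none => rw [E.basis_none]; exact ic_mul_tau_mem E q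
    | some pb =>
      rw [E.basis_some]
      by_cases hp : pb.1 ∈ posIdx d φ
      · exact xpos_mul_tau_mem E ⟨pb.1, hp⟩ q
      · have hn : pb.1 ∈ negIdx d φ := negIdx_of_not_pos pb.2.1 pb.2.2.1 pb.2.2.2 hp
        have heq : ι ℂ (E.x pb.1.1 pb.1.2) * tau E φ q = tau E φ (X ⟨pb.1, hn⟩ * q) := by
          rw [map_mul, tau_X]; rfl
        rw [heq]; exact tau_mem_S E _
  | zero => rw [map_zero, zero_mul]; exact zero_mem _
  | add x y _ _ hx hy => rw [map_add, add_mul]; exact add_mem hx hy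
  | smul t x _ hx => rw [map_smul, smul_mul_assoc]; exact Submodule.smul_mem _ _ hx

lemma mul_S_mem : ∀ u : UniversalEnvelopingAlgebra ℂ L, ∀ s ∈ SSub E φ a,
    u * s ∈ SSub E φ a := by
  intro u
  induction u using uea_ind with
  | halg r =>
    intro s hs
    rw [← Algebra.smul_def]
    exact Submodule.smul_mem _ _ hs
  | hι z =>
    intro s hs
    obtain ⟨i, hi, t, ht, rfl⟩ := Submodule.mem_sup.mp hs
    obtain ⟨q, rfl⟩ := ht
    rw [mul_add]
    exact add_mem (ideal_mem_S E (mul_ideal_mem E hi _)) (iota_mul_tau_mem E z q)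
  | hmul x y hx hy =>
    intro s hs
    rw [mul_assoc]
    exact hx _ (hy s hs)
  | hadd x y hx hy =>
    intro s hs
    rw [add_mul]
    exact add_mem (hx s hs) (hy s hs)

lemma top_S (u : UniversalEnvelopingAlgebra ℂ L) : u ∈ SSub E φ a := by
  have h1 : (1 : UniversalEnvelopingAlgebra ℂ L) ∈ SSub E φ a := by
    have := tau_mem_S (a := a) E (1 : Fk d φ)
    rwa [map_one] at this
  have := mul_S_mem E u 1 h1
  rwa [mul_one] at this

lemma ker_sub_ideal {u : UniversalEnvelopingAlgebra ℂ L} (h : piF E φ a u 1 = 0) :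
    u ∈ vermaIdeal E φ a := by
  obtain ⟨i, hi, t, ht, hu⟩ := Submodule.mem_sup.mp (top_S (a := a) E u)
  obtain ⟨q, rfl⟩ := ht
  have hq : q = 0 := by
    have h2 : piF E φ a u 1 = q := by
      rw [← hu, map_add, LinearMap.add_apply, piF_ideal_one E hi, zero_add,
        show ((tau E φ).toLinearMap q) = tau E φ q from rfl, piF_tau_one]
    exact h2.symm.trans h
  rw [← hu, hq, map_zero, add_zero]
  exact hi

end Span
noncomputable section DOpSec

open MvPolynomial

variable {σ : Type*}

lemma pderiv_pow_monomial (j : σ) (n : ℕ) (s : σ →₀ ℕ) (c : ℂ) :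
    ((((pderiv j).toLinearMap : Module.End ℂ (MvPolynomial σ ℂ))) ^ n) (monomial s c) =
      monomial (s - Finsupp.single j n) (c * ∏ t ∈ Finset.range n, ((s j - t : ℕ) : ℂ)) := by
  classical
  induction n generalizing s c with
  | zero => simp
  | succ n ih =>
    rw [pow_succ, Module.End.mul_apply]
    simp only [Derivation.coeFn_coe]
    rw [pderiv_monomial, ih]
    congr 1
    · rw [tsub_tsub, ← Finsupp.single_add, add_comm 1 n]
    · rw [Finsupp.tsub_apply, Finsupp.single_eq_same]
      have hprod : ∏ t ∈ Finset.range n, ((s j - 1 - t : ℕ) : ℂ)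
          = ∏ t ∈ Finset.range n, ((s j - (t + 1) : ℕ) : ℂ) :=
        Finset.prod_congr rfl (fun t _ => by congr 1; omega)
      rw [hprod, Finset.prod_range_succ']
      rw [Nat.sub_zero]
      ring

/-- Iterated partial derivative operator. -/
def DOp (m : σ →₀ ℕ) : Module.End ℂ (MvPolynomial σ ℂ) :=
  m.support.noncommProd (fun j => ((pderiv j).toLinearMap : Module.End ℂ (MvPolynomial σ ℂ)) ^ m j)
    (fun _ _ _ _ _ => (pderiv_commute _ _).pow_pow _ _)

/-- Falling-factorial coefficient. -/
def coefD (m s : σ →₀ ℕ) : ℂ :=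
  ∏ j ∈ m.support, ∏ t ∈ Finset.range (m j), ((s j - t : ℕ) : ℂ)

lemma DOp_monomial (m s : σ →₀ ℕ) (c : ℂ) :
    DOp m (monomial s c) = monomial (s - m) (c * coefD m s) := by
  classical
  induction m using Finsupp.induction with
  | zero => simp [DOp, coefD]
  | single_add j n m hjm hn ih =>
    have hsupp : (Finsupp.single j n + m).support = insert j m.support := by
      rw [Finsupp.support_add_eq, Finsupp.support_single_ne_zero _ hn, ← Finset.insert_eq]
      rw [Finsupp.support_single_ne_zero _ hn]
      simp [Finset.disjoint_singleton_left, hjm]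
    have happ : (Finsupp.single j n + m) j = n := by
      rw [Finsupp.add_apply, Finsupp.single_eq_same, Finsupp.notMem_support_iff.mp hjm, add_zero]
    have happ' : ∀ j' ∈ m.support, (Finsupp.single j n + m) j' = m j' := fun j' hj' => by
      rw [Finsupp.add_apply, Finsupp.single_eq_of_ne (fun h => hjm (by rw [← h]; exact hj')), zero_add]
    have hD : DOp (Finsupp.single j n + m)
        = (((pderiv j).toLinearMap : Module.End ℂ (MvPolynomial σ ℂ)) ^ n) * DOp m := by
      calc DOp (Finsupp.single j n + m)
          = (insert j m.support).noncommProd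
              (fun j' => ((pderiv j').toLinearMap : Module.End ℂ (MvPolynomial σ ℂ))
                ^ (Finsupp.single j n + m) j')
              (fun _ _ _ _ _ => (pderiv_commute _ _).pow_pow _ _) :=
            Finset.noncommProd_congr hsupp (fun _ _ => rfl) _
        _ = ((pderiv j).toLinearMap : Module.End ℂ (MvPolynomial σ ℂ))
              ^ ((Finsupp.single j n + m) j)
            * m.support.noncommProd
              (fun j' => ((pderiv j').toLinearMap : Module.End ℂ (MvPolynomial σ ℂ))
                ^ (Finsupp.single j n + m) j')
              (fun _ _ _ _ _ => (pderiv_commute _ _).pow_pow _ _) :=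
            Finset.noncommProd_insert_of_notMem _ _ _ _ hjm
        _ = (((pderiv j).toLinearMap : Module.End ℂ (MvPolynomial σ ℂ)) ^ n) * DOp m := by
            rw [happ]
            congr 1
            exact Finset.noncommProd_congr rfl (fun j' hj' => by rw [happ' j' hj']) _
    have hcoef : coefD (Finsupp.single j n + m) s
        = (∏ t ∈ Finset.range n, ((s j - t : ℕ) : ℂ)) * coefD m s := by
      rw [coefD, hsupp, Finset.prod_insert hjm, happ, coefD]
      congr 1
      exact Finset.prod_congr rfl (fun j' hj' => by rw [happ' j' hj'])
    rw [hD, Module.End.mul_apply, ih, pderiv_pow_monomial, hcoef]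
    have h1 : (s - m) j = s j := by
      rw [Finsupp.tsub_apply, Finsupp.notMem_support_iff.mp hjm, Nat.sub_zero]
    congr 1
    · rw [tsub_tsub, add_comm m]
    · rw [h1]; ring

lemma coefD_self_ne_zero (m : σ →₀ ℕ) : coefD m m ≠ 0 := by
  rw [coefD]
  apply Finset.prod_ne_zero_iff.mpr
  intro j hj
  apply Finset.prod_ne_zero_iff.mpr
  intro t ht
  rw [Finset.mem_range] at ht
  have hnz : m j - t ≠ 0 := by omega
  exact Nat.cast_ne_zero.mpr hnz

lemma DOp_monomial_self (m : σ →₀ ℕ) (c : ℂ) :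
    DOp m (monomial m c) = C (c * coefD m m) := by
  rw [DOp_monomial, tsub_self]
  rfl

lemma DOp_monomial_not_le {m s : σ →₀ ℕ} (h : ¬ m ≤ s) (c : ℂ) :
    DOp m (monomial s c) = 0 := by
  have hc : coefD m s = 0 := by
    rw [Finsupp.le_iff] at h
    push_neg at h
    obtain ⟨j, hj, hlt⟩ := h
    rw [coefD]
    apply Finset.prod_eq_zero hj
    apply Finset.prod_eq_zero (Finset.mem_range.mpr hlt)
    simp
  rw [DOp_monomial, hc, mul_zero, map_zero]

lemma exists_DOp_const {p : MvPolynomial σ ℂ} (hp : p ≠ 0) :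
    ∃ m c₀, DOp m p = C c₀ ∧ c₀ ≠ 0 := by
  classical
  have hne : p.support.Nonempty := by
    rw [Finset.nonempty_iff_ne_empty]
    intro hemp
    exact hp (MvPolynomial.support_eq_empty.mp hemp)
  obtain ⟨m, hm, hmax⟩ := Finset.exists_maximal hne
  refine ⟨m, coeff m p * coefD m m, ?_, ?_⟩
  · conv_lhs => rw [p.as_sum]
    rw [map_sum]
    rw [Finset.sum_eq_single m]
    · exact DOp_monomial_self m _
    · intro s hs hsm
      apply DOp_monomial_not_le
      intro hle
      exact hsm (le_antisymm (hmax hs hle) hle)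
    · intro hm'; exact absurd hm hm'
  · exact mul_ne_zero (by rwa [MvPolynomial.mem_support_iff] at hm) (coefD_self_ne_zero m)

end DOpSec

noncomputable section WOp

open MvPolynomial

variable {d : ℕ → ℕ} {φ : ℕ → Bool} {a : ℂ} (E : HeisenbergL d L)

def posOf (j : ↥(negIdx d φ)) : ↥(posIdx d φ) := ⟨(-j.1.1, j.1.2), neg_mem_posIdx j.2⟩

lemma pPos_posOf (j : ↥(negIdx d φ)) : pPos (posOf j) = j := by
  apply Subtype.ext
  apply Prod.ext
  · exact neg_neg _
  · rfl

/-- Scaled preimages of the partial derivative operators. -/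
def elD (E : HeisenbergL d L) (a : ℂ) (j : ↥(negIdx d φ)) : UniversalEnvelopingAlgebra ℂ L :=
  ((((-j.1.1 : ℤ) : ℂ)) * a)⁻¹ • ι ℂ (E.x (-j.1.1) j.1.2)

lemma piF_elD (ha : a ≠ 0) (j : ↥(negIdx d φ)) :
    piF E φ a (elD E a j) = ((pderiv j).toLinearMap : Module.End ℂ (Fk d φ)) := by
  have h := piF_xpos (a := a) E (posOf j)
  rw [pPos_posOf] at h
  have hsc : (((posOf (φ := φ) j).1.1 : ℤ) : ℂ) = ((-j.1.1 : ℤ) : ℂ) := rfl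
  rw [elD, map_smul, show E.x (-j.1.1) j.1.2 = E.x (posOf j).1.1 (posOf j).1.2 from rfl, h,
    hsc, smul_smul, inv_mul_cancel₀, one_smul]
  exact mul_ne_zero (Int.cast_ne_zero.mpr (by have := j.2.1; omega)) ha

lemma elD_commute (j j' : ↥(negIdx d φ)) : Commute (elD E a j) (elD E a j') := by
  apply Commute.smul_left
  apply Commute.smul_right
  exact x_commute_of_not_pair E
    ⟨(posOf j).2.1, (posOf j).2.2.1, (posOf j).2.2.2.1⟩
    ⟨(posOf (φ := φ) j').2.1, (posOf j').2.2.1, (posOf j').2.2.2.1⟩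
    (not_pair_pos_pos (posOf j).2 (posOf j').2)

/-- `U(L)` element mapping to the iterated derivative operator. -/
def wOp (E : HeisenbergL d L) (a : ℂ) (m : ↥(negIdx d φ) →₀ ℕ) :
    UniversalEnvelopingAlgebra ℂ L :=
  m.support.noncommProd (fun j => elD E a j ^ m j)
    (fun _ _ _ _ _ => ((elD_commute E _ _).pow_pow _ _))

lemma piF_wOp (ha : a ≠ 0) (m : ↥(negIdx d φ) →₀ ℕ) :
    piF E φ a (wOp E a m) = DOp m := by
  rw [wOp]
  refine (Finset.map_noncommProd _ _ _ (piF E φ a)).trans ?_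
  rw [DOp]
  apply Finset.noncommProd_congr rfl
  intro j hj
  rw [map_pow, piF_elD E ha]

end WOp

noncomputable section Main

open MvPolynomial

variable {d : ℕ → ℕ} {φ : ℕ → Bool} {a : ℂ} (E : HeisenbergL d L)

lemma one_notin_ideal : (1 : UniversalEnvelopingAlgebra ℂ L) ∉ vermaIdeal E φ a := by
  intro h
  have h1 := piF_ideal_one E h
  have h2 : piF E φ a (1 : UniversalEnvelopingAlgebra ℂ L) 1 = (1 : Fk d φ) := by
    rw [show piF E φ a (1 : UniversalEnvelopingAlgebra ℂ L) = 1 from map_one _,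
      Module.End.one_apply]
  exact one_ne_zero (h2.symm.trans h1)

lemma ideal_coatom (ha : a ≠ 0) : IsCoatom (vermaIdeal E φ a) := by
  constructor
  · intro htop
    exact one_notin_ideal E (htop ▸ Submodule.mem_top)
  · intro J hJ
    obtain ⟨u, huJ, huI⟩ := SetLike.exists_of_lt hJ
    have hp : piF E φ a u 1 ≠ 0 := fun h => huI (ker_sub_ideal E h)
    obtain ⟨m, c₀, hD, hc₀⟩ := exists_DOp_const hp
    have hw : piF E φ a ((c₀⁻¹ • wOp E a m) * u) 1 = 1 := by
      rw [map_mul, Module.End.mul_apply, map_smul, LinearMap.smul_apply, piF_wOp E ha, hD,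
        MvPolynomial.smul_eq_C_mul, ← map_mul, inv_mul_cancel₀ hc₀, map_one]
    have hmem : (c₀⁻¹ • wOp E a m) * u - 1 ∈ vermaIdeal E φ a := by
      apply ker_sub_ideal E
      rw [map_sub, LinearMap.sub_apply, hw,
        show piF E φ a (1 : UniversalEnvelopingAlgebra ℂ L) = 1 from map_one _,
        Module.End.one_apply, sub_self]
    have h1 : (1 : UniversalEnvelopingAlgebra ℂ L) ∈ J := by
      have hu2 : (c₀⁻¹ • wOp E a m) * u ∈ J := by
        have := Submodule.smul_mem J (c₀⁻¹ • wOp E a m) huJ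
        rwa [smul_eq_mul] at this
      have h3 := sub_mem hu2 (hJ.le hmem)
      simpa using h3
    rw [eq_top_iff]
    intro v _
    have := Submodule.smul_mem J v h1
    rwa [smul_eq_mul, mul_one] at this

/-- The trivial (counit) representation of `U(L)`. -/
def etaHom : UniversalEnvelopingAlgebra ℂ L →ₐ[ℂ] ℂ :=
  UniversalEnvelopingAlgebra.lift ℂ (0 : L →ₗ⁅ℂ⁆ ℂ)

lemma etaHom_ι (z : L) : etaHom (ι ℂ z) = 0 := by
  rw [etaHom, lift_ι_apply]
  rfl

/-- The kernel of `etaHom` as a left submodule. -/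
def etaKer : Submodule (UniversalEnvelopingAlgebra ℂ L) (UniversalEnvelopingAlgebra ℂ L) where
  carrier := {v | etaHom v = 0}
  add_mem' := by intro x y hx hy; simp only [Set.mem_setOf_eq, map_add] at *; rw [hx, hy, add_zero]
  zero_mem' := by simp
  smul_mem' := by
    intro r v hv
    simp only [Set.mem_setOf_eq, smul_eq_mul, map_mul] at *
    rw [hv, mul_zero]

lemma not_coatom_of_azero (hd1 : 1 ≤ d 1) : ¬ IsCoatom (vermaIdeal E φ (0 : ℂ)) := by
  intro hco
  classical
  set k₁ : ℤ := if φ 1 = true then (-1 : ℤ) else 1 with hk₁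
  have hk1nz : k₁ ≠ 0 := by
    rw [hk₁]; split <;> omega
  have habs : k₁.natAbs = 1 := by
    rw [hk₁]; split <;> rfl
  have hn : ((k₁, 1) : ℤ × ℕ) ∈ negIdx d φ := by
    refine ⟨hk1nz, le_refl 1, by rw [habs]; exact hd1, ?_⟩
    by_cases hφ : φ 1 = true
    · refine Or.inr ⟨by rw [hk₁, if_pos hφ]; omega, by rw [habs]; exact hφ⟩
    · refine Or.inl ⟨by rw [hk₁, if_neg hφ]; omega, by rw [habs]; exact Bool.not_eq_true _ ▸ hφ⟩
  set y : UniversalEnvelopingAlgebra ℂ L := ι ℂ (E.x k₁ 1) with hy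
  set J : Submodule (UniversalEnvelopingAlgebra ℂ L) (UniversalEnvelopingAlgebra ℂ L) :=
    vermaIdeal E φ 0 ⊔ Submodule.span _ {y} with hJdef
  have hyJ : y ∈ J := Submodule.mem_sup_right (Submodule.subset_span rfl)
  have hyI : y ∉ vermaIdeal E φ 0 := by
    intro h
    have h1 := piF_ideal_one E h
    have h2 : piF E φ 0 (ι ℂ (E.x k₁ 1)) =
        LinearMap.mulLeft ℂ (X (⟨(k₁, 1), hn⟩ : ↥(negIdx d φ))) := piF_xneg (φ := φ) (a := (0 : ℂ)) E ⟨(k₁, 1), hn⟩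
    rw [hy, h2, LinearMap.mulLeft_apply, mul_one] at h1
    exact MvPolynomial.X_ne_zero _ h1
  have hlt : vermaIdeal E φ 0 < J :=
    lt_of_le_of_ne le_sup_left (fun h => hyI (h ▸ hyJ))
  have hJtop := hco.2 J hlt
  have hJK : J ≤ etaKer (L := L) := by
    apply sup_le
    · rw [vermaIdeal]
      apply Submodule.span_le.mpr
      rintro g (hg | ⟨p, hp, rfl⟩)
      · rw [Set.mem_singleton_iff] at hg
        subst hg
        show etaHom _ = 0
        rw [map_sub, etaHom_ι, map_zero, map_zero, sub_zero]
      · exact etaHom_ι _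
    · apply Submodule.span_le.mpr
      rintro g hg
      rw [Set.mem_singleton_iff] at hg
      subst hg
      exact etaHom_ι _
  have h1J : (1 : UniversalEnvelopingAlgebra ℂ L) ∈ J := hJtop ▸ Submodule.mem_top
  have := hJK h1J
  simp only [etaKer, Submodule.mem_mk, AddSubmonoid.mem_mk, AddSubsemigroup.mem_mk,
    Set.mem_setOf_eq, map_one] at this
  exact one_ne_zero this

end Main

theorem stmt_1 (d : ℕ → ℕ) (hd : ∀ k, 1 ≤ d k) (L : Type) [LieRing L] [LieAlgebra ℂ L]
    (E : HeisenbergL d L) (φ : ℕ → Bool) (a : ℂ) :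
    IsSimpleModule (UniversalEnvelopingAlgebra ℂ L) (VermaMod E φ a) ↔ a ≠ 0 := by
  have hiff : IsSimpleModule (UniversalEnvelopingAlgebra ℂ L) (VermaMod E φ a)
      ↔ IsCoatom (vermaIdeal E φ a) := isSimpleModule_iff_isCoatom
  rw [hiff]
  constructor
  · rintro hco rfl
    exact not_coatom_of_azero E (hd 1) hco
  · exact fun ha => ideal_coatom E ha
end

section
/- For any a ∈ ℂ and any functions φ₁, φ₂ : ℕ → {+,−} with φ₁ ≠ φ₂, the φ₁-Verma module M_{φ₁}(a) and the φ₂-Verma module M_{φ₂}(a) are not isomorphic as L-modules. -/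
/-!
STATEMENT 2: For any a ∈ ℂ and φ₁ ≠ φ₂ : ℕ → {+,−}, the modules M_{φ₁}(a) and M_{φ₂}(a)
are not isomorphic as L-modules.
We model the sign set {+,−} by `Bool`, with `true` standing for `+`.
`ℕ` in the paper means positive integers, so conditions carry `1 ≤ ·`.
-/

open UniversalEnvelopingAlgebra

section Aux

attribute [local instance] LieRing.ofAssociativeRing

open MvPolynomial

lemma pderiv_comm' {σ R : Type*} [CommRing R] (i j : σ) (f : MvPolynomial σ R) :
    pderiv i (pderiv j f) = pderiv j (pderiv i f) := by
  classical
  induction f using MvPolynomial.induction_on with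
  | C a => simp [pderiv_C]
  | add p q hp hq => simp [map_add, hp, hq]
  | mul_X p n h =>
    simp only [pderiv_mul, map_add, pderiv_X, h, Pi.single_apply]
    split_ifs <;> simp <;> ring

lemma uea_induction {R L : Type*} [CommRing R] [LieRing L] [LieAlgebra R L]
    {C : UniversalEnvelopingAlgebra R L → Prop}
    (halg : ∀ r, C (algebraMap R (UniversalEnvelopingAlgebra R L) r))
    (hι : ∀ x, C (ι R x))
    (hmul : ∀ a b, C a → C b → C (a * b))
    (hadd : ∀ a b, C a → C b → C (a + b))
    (u : UniversalEnvelopingAlgebra R L) : C u := by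
  obtain ⟨t, rfl⟩ : ∃ t, mkAlgHom R L t = u := RingCon.mkₐ_surjective _ u
  induction t using TensorAlgebra.induction with
  | algebraMap r => rw [AlgHom.commutes]; exact halg r
  | ι x => exact hι x
  | mul a b ha hb => rw [map_mul]; exact hmul _ _ ha hb
  | add a b ha hb => rw [map_add]; exact hadd _ _ ha hb

noncomputable def Dop (i : ℤ × ℕ) : Module.End ℂ (MvPolynomial (ℤ × ℕ) ℂ) :=
  (pderiv i).toLinearMap

noncomputable def Mop (i : ℤ × ℕ) : Module.End ℂ (MvPolynomial (ℤ × ℕ) ℂ) :=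
  LinearMap.mulLeft ℂ (X i)

/-- commutator of pderiv with multiplication by a variable -/
lemma lie_D_X (i j : ℤ × ℕ) :
    ⁅Dop i, Mop j⁆
      = if i = j then (1 : Module.End ℂ (MvPolynomial (ℤ × ℕ) ℂ)) else 0 := by
  classical
  refine LinearMap.ext fun f => ?_
  rw [Ring.lie_def]
  simp only [Dop, Mop]
  simp only [LinearMap.sub_apply, Module.End.mul_apply, LinearMap.mulLeft_apply,
    Derivation.coeFn_coe, pderiv_mul, pderiv_X, Pi.single_apply]
  split_ifs <;> simp_all

lemma lie_D_D (i j : ℤ × ℕ) :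
    ⁅Dop i, Dop j⁆
      = (0 : Module.End ℂ (MvPolynomial (ℤ × ℕ) ℂ)) := by
  refine LinearMap.ext fun f => ?_
  rw [Ring.lie_def]
  simp only [Dop, LinearMap.sub_apply, Module.End.mul_apply, LinearMap.zero_apply,
    Derivation.coeFn_coe]
  rw [pderiv_comm']
  exact sub_self _

lemma lie_X_X (i j : ℤ × ℕ) :
    ⁅Mop i, Mop j⁆
      = (0 : Module.End ℂ (MvPolynomial (ℤ × ℕ) ℂ)) := by
  refine LinearMap.ext fun f => ?_
  rw [Ring.lie_def]
  simp [Mop, Module.End.mul_apply, mul_left_comm]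

lemma smul_lieE (t : ℂ) (A B : Module.End ℂ (MvPolynomial (ℤ × ℕ) ℂ)) :
    ⁅t • A, B⁆ = t • ⁅A, B⁆ := by
  simp [Ring.lie_def, smul_sub, smul_mul_assoc, mul_smul_comm]

lemma lie_smulE (t : ℂ) (A B : Module.End ℂ (MvPolynomial (ℤ × ℕ) ℂ)) :
    ⁅A, t • B⁆ = t • ⁅A, B⁆ := by
  simp [Ring.lie_def, smul_sub, smul_mul_assoc, mul_smul_comm]

lemma lie_skewE (A B : Module.End ℂ (MvPolynomial (ℤ × ℕ) ℂ)) :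
    ⁅A, B⁆ = -⁅B, A⁆ := by
  simp [Ring.lie_def]

lemma smul_one_lieE (t : ℂ) (B : Module.End ℂ (MvPolynomial (ℤ × ℕ) ℂ)) :
    ⁅t • (1 : Module.End ℂ (MvPolynomial (ℤ × ℕ) ℂ)), B⁆ = 0 := by
  simp [Ring.lie_def, smul_sub, smul_mul_assoc, mul_smul_comm]

lemma lie_smul_oneE (t : ℂ) (B : Module.End ℂ (MvPolynomial (ℤ × ℕ) ℂ)) :
    ⁅B, t • (1 : Module.End ℂ (MvPolynomial (ℤ × ℕ) ℂ))⁆ = 0 := by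
  simp [Ring.lie_def, smul_sub, smul_mul_assoc, mul_smul_comm]

end Aux



variable {d : ℕ → ℕ} {L : Type} [LieRing L] [LieAlgebra ℂ L]

attribute [local instance] LieRing.ofAssociativeRing

section MyRep

open MvPolynomial



variable {d : ℕ → ℕ} {L : Type} [LieRing L] [LieAlgebra ℂ L]

lemma not_pos_char {φ : ℕ → Bool} {p : ℤ × ℕ}
    (hval : p.1 ≠ 0 ∧ 1 ≤ p.2 ∧ p.2 ≤ d p.1.natAbs) (hnp : p ∉ posIdx d φ) :
    (0 < p.1 ∧ φ p.1.natAbs = false) ∨ (p.1 < 0 ∧ φ p.1.natAbs = true) := by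
  obtain ⟨h0, h1, h2⟩ := hval
  rcases lt_or_gt_of_ne h0 with hneg | hpos
  · right
    refine ⟨hneg, ?_⟩
    by_contra hb
    rw [Bool.not_eq_true] at hb
    refine hnp ?_
    simp only [posIdx, Set.mem_setOf_eq]
    exact ⟨h0, h1, h2, Or.inr ⟨hneg, hb⟩⟩
  · left
    refine ⟨hpos, ?_⟩
    by_contra hb
    rw [Bool.not_eq_false] at hb
    refine hnp ?_
    simp only [posIdx, Set.mem_setOf_eq]
    exact ⟨h0, h1, h2, Or.inl ⟨hpos, hb⟩⟩

lemma natAbs_eq_of_neg {p q : ℤ} (h : p = -q) : p.natAbs = q.natAbs := by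
  subst h; exact Int.natAbs_neg q

lemma no_pair_pos_pos {φ : ℕ → Bool} {p q : ℤ × ℕ}
    (hp : p ∈ posIdx d φ) (hq : q ∈ posIdx d φ) : p.1 ≠ -q.1 := by
  intro h
  have habs := natAbs_eq_of_neg h
  simp only [posIdx, Set.mem_setOf_eq] at hp hq
  obtain ⟨-, -, -, hp4⟩ := hp
  obtain ⟨-, -, -, hq4⟩ := hq
  rcases hp4 with ⟨hs, hb⟩ | ⟨hs, hb⟩ <;> rcases hq4 with ⟨hs', hb'⟩ | ⟨hs', hb'⟩ <;>
    rw [habs] at hb <;> first | omega | (rw [hb] at hb'; exact Bool.noConfusion hb')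

lemma no_pair_neg_neg {φ : ℕ → Bool} {p q : ℤ × ℕ}
    (hvp : p.1 ≠ 0 ∧ 1 ≤ p.2 ∧ p.2 ≤ d p.1.natAbs) (hp : p ∉ posIdx d φ)
    (hvq : q.1 ≠ 0 ∧ 1 ≤ q.2 ∧ q.2 ≤ d q.1.natAbs) (hq : q ∉ posIdx d φ) : p.1 ≠ -q.1 := by
  intro h
  have habs := natAbs_eq_of_neg h
  rcases not_pos_char hvp hp with ⟨hs, hb⟩ | ⟨hs, hb⟩ <;>
    rcases not_pos_char hvq hq with ⟨hs', hb'⟩ | ⟨hs', hb'⟩ <;>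
      rw [habs] at hb <;> first | omega | (rw [hb] at hb'; exact Bool.noConfusion hb')

open scoped Classical in
/-- The representation of `L` on polynomials modelling `M_φ(a)`. -/
noncomputable def heisRep (E : HeisenbergL d L) (φ : ℕ → Bool) (a : ℂ) :
    L →ₗ[ℂ] Module.End ℂ (MvPolynomial (ℤ × ℕ) ℂ) :=
  E.basis.constr ℂ fun o =>
    Option.elim o (a • (1 : Module.End ℂ (MvPolynomial (ℤ × ℕ) ℂ))) fun p =>
      if p.1 ∈ posIdx d φ then ((p.1.1 : ℂ) * a) • Dop (-p.1.1, p.1.2)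
      else Mop p.1

lemma heisRep_c (E : HeisenbergL d L) (φ : ℕ → Bool) (a : ℂ) :
    heisRep E φ a E.c = a • (1 : Module.End ℂ (MvPolynomial (ℤ × ℕ) ℂ)) := by
  rw [← E.basis_none, heisRep, Module.Basis.constr_basis]
  rfl

open scoped Classical in
lemma heisRep_x (E : HeisenbergL d L) (φ : ℕ → Bool) (a : ℂ)
    (p : ℤ × ℕ) (hp : p.1 ≠ 0 ∧ 1 ≤ p.2 ∧ p.2 ≤ d p.1.natAbs) :
    heisRep E φ a (E.x p.1 p.2)
      = if p ∈ posIdx d φ then ((p.1 : ℂ) * a) • Dop (-p.1, p.2) else Mop p := by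
  rw [← E.basis_some ⟨p, hp⟩, heisRep, Module.Basis.constr_basis]
  rfl

lemma heisRep_lie (E : HeisenbergL d L) (φ : ℕ → Bool) (a : ℂ) (x y : L) :
    heisRep E φ a ⁅x, y⁆ = ⁅heisRep E φ a x, heisRep E φ a y⁆ := by
  classical
  set ρ := heisRep E φ a with hρ
  let F : L →ₗ[ℂ] L →ₗ[ℂ] Module.End ℂ (MvPolynomial (ℤ × ℕ) ℂ) :=
    LinearMap.mk₂ ℂ (fun x y => ρ ⁅x, y⁆)
      (fun m n z => by show ρ ⁅m + n, z⁆ = ρ ⁅m, z⁆ + ρ ⁅n, z⁆; rw [add_lie, map_add])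
      (fun t m z => by show ρ ⁅t • m, z⁆ = t • ρ ⁅m, z⁆; rw [smul_lie, map_smul])
      (fun m z w => by show ρ ⁅m, z + w⁆ = ρ ⁅m, z⁆ + ρ ⁅m, w⁆; rw [lie_add, map_add])
      (fun t m z => by show ρ ⁅m, t • z⁆ = t • ρ ⁅m, z⁆; rw [lie_smul, map_smul])
  let G : L →ₗ[ℂ] L →ₗ[ℂ] Module.End ℂ (MvPolynomial (ℤ × ℕ) ℂ) :=
    LinearMap.mk₂ ℂ (fun x y => ⁅ρ x, ρ y⁆)
      (fun m n z => by show ⁅ρ (m + n), ρ z⁆ = ⁅ρ m, ρ z⁆ + ⁅ρ n, ρ z⁆; rw [map_add, add_lie])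
      (fun t m z => by show ⁅ρ (t • m), ρ z⁆ = t • ⁅ρ m, ρ z⁆; rw [map_smul, smul_lieE])
      (fun m z w => by show ⁅ρ m, ρ (z + w)⁆ = ⁅ρ m, ρ z⁆ + ⁅ρ m, ρ w⁆; rw [map_add, lie_add])
      (fun t m z => by show ⁅ρ m, ρ (t • z)⁆ = t • ⁅ρ m, ρ z⁆; rw [map_smul, lie_smulE])
  have key : ∀ i j, ρ ⁅E.basis i, E.basis j⁆ = ⁅ρ (E.basis i), ρ (E.basis j)⁆ := by
    rintro (_ | p) (_ | q)
    · rw [E.basis_none, E.lie_c, map_zero, lie_self]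
    · rw [E.basis_none, E.lie_c, map_zero, heisRep_c, smul_one_lieE]
    · rw [E.basis_none, ← lie_skew, E.lie_c, neg_zero, map_zero, heisRep_c, lie_smul_oneE]
    · obtain ⟨hp0, hp1, hp2⟩ := p.2
      obtain ⟨hq0, hq1, hq2⟩ := q.2
      rw [E.basis_some p, E.basis_some q,
        E.lie_x_x p.1.1 q.1.1 p.1.2 q.1.2 hp0 hq0 hp1 hp2 hq1 hq2,
        heisRep_x E φ a p.1 p.2, heisRep_x E φ a q.1 q.2]
      by_cases hp : p.1 ∈ posIdx d φ <;> by_cases hq : q.1 ∈ posIdx d φ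
      · -- both positive: derivations commute, bracket zero
        rw [if_pos hp, if_pos hq, if_neg, map_zero, smul_lieE, lie_smulE, lie_D_D,
          smul_zero, smul_zero]
        rintro ⟨h, -⟩
        exact no_pair_pos_pos hp hq h
      · -- p positive, q negative
        rw [if_pos hp, if_neg hq, smul_lieE, lie_D_X]
        by_cases h : p.1.1 = -q.1.1 ∧ p.1.2 = q.1.2
        · have : ((-p.1.1, p.1.2) : ℤ × ℕ) = q.1 := by
            obtain ⟨h1, h2⟩ := h
            ext <;> simp [h1, h2]
          rw [if_pos h, if_pos this, map_smul, heisRep_c, smul_smul]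
        · have : ((-p.1.1, p.1.2) : ℤ × ℕ) ≠ q.1 := by
            intro hc
            apply h
            constructor
            · have := congrArg Prod.fst hc; simp at this; omega
            · have := congrArg Prod.snd hc; simpa using this
          rw [if_neg h, if_neg this, map_zero, smul_zero]
      · -- p negative, q positive
        rw [if_neg hp, if_pos hq, lie_smulE, lie_skewE, lie_D_X]
        by_cases h : p.1.1 = -q.1.1 ∧ p.1.2 = q.1.2
        · have : ((-q.1.1, q.1.2) : ℤ × ℕ) = p.1 := by
            obtain ⟨h1, h2⟩ := h
            ext <;> simp [h1, h2]
          rw [if_pos h, if_pos this, map_smul, heisRep_c, smul_neg, smul_smul]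
          have hc : ((p.1.1 : ℤ) : ℂ) = -((q.1.1 : ℤ) : ℂ) := by
            rw [h.1]; push_cast; ring
          rw [hc]
          module
        · have : ((-q.1.1, q.1.2) : ℤ × ℕ) ≠ p.1 := by
            intro hc
            apply h
            constructor
            · have := congrArg Prod.fst hc; simp at this; omega
            · have := congrArg Prod.snd hc
              simp at this
              omega
          rw [if_neg h, if_neg this, map_zero, neg_zero, smul_zero]
      · -- both negative: multiplications commute
        rw [if_neg hp, if_neg hq, if_neg, map_zero, lie_X_X]
        rintro ⟨h, -⟩
        exact no_pair_neg_neg p.2 hp q.2 hq h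
  have hFG : F = G := by
    apply E.basis.ext
    intro i
    apply E.basis.ext
    intro j
    exact key i j
  exact LinearMap.congr_fun (LinearMap.congr_fun hFG x) y

/-- The representation as a morphism of Lie algebras. -/
noncomputable def heisRepL (E : HeisenbergL d L) (φ : ℕ → Bool) (a : ℂ) :
    L →ₗ⁅ℂ⁆ Module.End ℂ (MvPolynomial (ℤ × ℕ) ℂ) :=
  { heisRep E φ a with map_lie' := fun {x y} => heisRep_lie E φ a x y }

/-- The induced algebra morphism on the universal enveloping algebra. -/
noncomputable def heisΦ (E : HeisenbergL d L) (φ : ℕ → Bool) (a : ℂ) :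
    UniversalEnvelopingAlgebra ℂ L →ₐ[ℂ] Module.End ℂ (MvPolynomial (ℤ × ℕ) ℂ) :=
  lift ℂ (heisRepL E φ a)

lemma heisΦ_vanish (E : HeisenbergL d L) (φ : ℕ → Bool) (a : ℂ)
    {z : UniversalEnvelopingAlgebra ℂ L} (hz : z ∈ vermaIdeal E φ a) :
    heisΦ E φ a z 1 = 0 := by
  classical
  induction hz using Submodule.span_induction with
  | mem w hw =>
    rcases hw with hw | ⟨p, hp, rfl⟩
    · rw [Set.mem_singleton_iff] at hw
      subst hw
      rw [map_sub, AlgHom.commutes]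
      simp only [LinearMap.sub_apply]
      rw [heisΦ, lift_ι_apply, heisRepL]
      show heisRep E φ a E.c 1 - _ = 0
      rw [heisRep_c]
      simp [Algebra.algebraMap_eq_smul_one]
    · have hval : p.1 ≠ 0 ∧ 1 ≤ p.2 ∧ p.2 ≤ d p.1.natAbs := by
        simp only [posIdx, Set.mem_setOf_eq] at hp
        exact ⟨hp.1, hp.2.1, hp.2.2.1⟩
      rw [heisΦ, lift_ι_apply, heisRepL]
      show heisRep E φ a (E.x p.1 p.2) 1 = 0
      rw [heisRep_x E φ a p hval, if_pos hp]
      simp [Dop, pderiv_one]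
  | zero => simp
  | add w₁ w₂ _ _ h1 h2 => rw [map_add]; simp only [LinearMap.add_apply, h1, h2, add_zero]
  | smul r w _ h => rw [smul_eq_mul, map_mul]; simp only [Module.End.mul_apply, h, map_zero]

end MyRep



variable {d : ℕ → ℕ} {L : Type} [LieRing L] [LieAlgebra ℂ L]

lemma bracket_mem_span_c (E : HeisenbergL d L) {ε : ℤ} (hε : ε ≠ 0) (hdε : 1 ≤ d ε.natAbs)
    (y : L) : ⁅E.x ε 1, y⁆ ∈ Submodule.span ℂ {E.c} := by
  have hy : y ∈ Submodule.span ℂ (Set.range E.basis) := by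
    rw [E.basis.span_eq]; trivial
  induction hy using Submodule.span_induction with
  | mem w hw =>
    obtain ⟨i, rfl⟩ := hw
    match i with
    | none =>
      rw [E.basis_none, ← lie_skew, E.lie_c, neg_zero]
      exact Submodule.zero_mem _
    | some q =>
      rw [E.basis_some q, E.lie_x_x ε q.1.1 1 q.1.2 hε q.2.1 le_rfl hdε q.2.2.1 q.2.2.2]
      split_ifs
      · exact Submodule.smul_mem _ _ (Submodule.mem_span_singleton_self _)
      · exact Submodule.zero_mem _
  | zero => rw [lie_zero]; exact Submodule.zero_mem _
  | add w₁ w₂ _ _ h1 h2 => rw [lie_add]; exact Submodule.add_mem _ h1 h2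
  | smul t w _ h => rw [lie_smul]; exact Submodule.smul_mem _ _ h

lemma lie_lie_eq_zero (E : HeisenbergL d L) {ε : ℤ} (hε : ε ≠ 0) (hdε : 1 ≤ d ε.natAbs)
    (y : L) : ⁅E.x ε 1, ⁅E.x ε 1, y⁆⁆ = 0 := by
  obtain ⟨t, ht⟩ := Submodule.mem_span_singleton.mp (bracket_mem_span_c E hε hdε y)
  rw [← ht, lie_smul, ← lie_skew, E.lie_c, neg_zero, smul_zero]

lemma commute_u_B (E : HeisenbergL d L) {ε : ℤ} (hε : ε ≠ 0) (hdε : 1 ≤ d ε.natAbs) (y : L) :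
    Commute (ι ℂ (E.x ε 1) : UniversalEnvelopingAlgebra ℂ L) (ι ℂ ⁅E.x ε 1, y⁆) := by
  have h : (ι ℂ : L →ₗ⁅ℂ⁆ UniversalEnvelopingAlgebra ℂ L) ⁅E.x ε 1, ⁅E.x ε 1, y⁆⁆
      = ⁅ι ℂ (E.x ε 1), ι ℂ ⁅E.x ε 1, y⁆⁆ := LieHom.map_lie _ _ _
  rw [lie_lie_eq_zero E hε hdε y, map_zero, Ring.lie_def] at h
  exact sub_eq_zero.mp h.symm

lemma ι_lie_expand (y z : L) :
    (ι ℂ ⁅y, z⁆ : UniversalEnvelopingAlgebra ℂ L) = ι ℂ y * ι ℂ z - ι ℂ z * ι ℂ y := by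
  have h : (ι ℂ : L →ₗ⁅ℂ⁆ UniversalEnvelopingAlgebra ℂ L) ⁅y, z⁆
      = ⁅ι ℂ y, ι ℂ z⁆ := LieHom.map_lie _ _ _
  rw [Ring.lie_def] at h
  exact h

lemma u_pow_mul_ι (E : HeisenbergL d L) {ε : ℤ} (hε : ε ≠ 0) (hdε : 1 ≤ d ε.natAbs)
    (y : L) (n : ℕ) :
    (ι ℂ (E.x ε 1) : UniversalEnvelopingAlgebra ℂ L) ^ (n + 1) * ι ℂ y
      = ι ℂ y * (ι ℂ (E.x ε 1)) ^ (n + 1)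
        + (n + 1) • (ι ℂ ⁅E.x ε 1, y⁆ * (ι ℂ (E.x ε 1)) ^ n) := by
  set u : UniversalEnvelopingAlgebra ℂ L := ι ℂ (E.x ε 1) with hu
  set B : UniversalEnvelopingAlgebra ℂ L := ι ℂ ⁅E.x ε 1, y⁆ with hBdef
  set Y : UniversalEnvelopingAlgebra ℂ L := ι ℂ y with hY
  have hB : Commute u B := commute_u_B E hε hdε y
  have hbase : u * Y = Y * u + B := by
    rw [hBdef, ι_lie_expand, hu, hY]; abel
  induction n with
  | zero => simpa using hbase
  | succ n ih =>
    calc u ^ (n + 1 + 1) * Y = u * (u ^ (n + 1) * Y) := by rw [← mul_assoc, ← pow_succ']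
      _ = u * (Y * u ^ (n + 1)) + (n + 1) • (u * (B * u ^ n)) := by
          rw [ih, mul_add, mul_smul_comm]
      _ = (u * Y) * u ^ (n + 1) + (n + 1) • (B * u ^ (n + 1)) := by
          rw [← mul_assoc u Y, ← mul_assoc u B, hB.eq, mul_assoc B u, ← pow_succ']
      _ = Y * u ^ (n + 1 + 1) + B * u ^ (n + 1) + (n + 1) • (B * u ^ (n + 1)) := by
          rw [hbase, add_mul, mul_assoc, ← pow_succ']
      _ = Y * u ^ (n + 1 + 1) + (n + 1 + 1) • (B * u ^ (n + 1)) := by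
          rw [add_assoc, ← succ_nsmul']

lemma exists_pow_mul_mem (E : HeisenbergL d L) (φ : ℕ → Bool) (a : ℂ) {ε : ℤ}
    (hε : ε ≠ 0) (hdε : 1 ≤ d ε.natAbs) (hmem : ((ε, 1) : ℤ × ℕ) ∈ posIdx d φ)
    (w : UniversalEnvelopingAlgebra ℂ L) :
    ∃ n : ℕ, (ι ℂ (E.x ε 1) : UniversalEnvelopingAlgebra ℂ L) ^ n * w ∈ vermaIdeal E φ a := by
  set u : UniversalEnvelopingAlgebra ℂ L := ι ℂ (E.x ε 1) with hu
  set I := vermaIdeal E φ a with hI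
  have hmul_mem : ∀ (r z : UniversalEnvelopingAlgebra ℂ L), z ∈ I → r * z ∈ I := fun r z hz => by
    simpa [smul_eq_mul] using I.smul_mem r hz
  have hukey : u ∈ I := by
    apply Submodule.subset_span
    right
    exact ⟨(ε, 1), hmem, rfl⟩
  have hmono : ∀ (n m : ℕ) (z : UniversalEnvelopingAlgebra ℂ L),
      u ^ n * z ∈ I → u ^ (n + m) * z ∈ I := by
    intro n m z hz
    rw [add_comm n m, pow_add, mul_assoc]
    exact hmul_mem _ _ hz
  have main : ∀ w z : UniversalEnvelopingAlgebra ℂ L,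
      (∃ n, u ^ n * z ∈ I) → (∃ n, u ^ n * (w * z) ∈ I) := by
    intro w
    induction w using uea_induction with
    | halg r =>
      rintro z ⟨n, hn⟩
      refine ⟨n, ?_⟩
      rw [← Algebra.smul_def, mul_smul_comm]
      exact I.smul_of_tower_mem r hn
    | hι y =>
      rintro z ⟨n, hn⟩
      refine ⟨n + 1, ?_⟩
      rw [← mul_assoc, u_pow_mul_ι E hε hdε y n, add_mul, mul_assoc, smul_mul_assoc, mul_assoc]
      exact I.add_mem (hmul_mem _ _ (hmono n 1 z hn))
        (nsmul_mem (hmul_mem _ _ hn) (n + 1))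
    | hmul w₁ w₂ h1 h2 =>
      intro z hz
      rw [mul_assoc]
      exact h1 _ (h2 _ hz)
    | hadd w₁ w₂ h1 h2 =>
      intro z hz
      obtain ⟨n₁, hn₁⟩ := h1 z hz
      obtain ⟨n₂, hn₂⟩ := h2 z hz
      refine ⟨n₁ + n₂, ?_⟩
      rw [add_mul, mul_add]
      refine I.add_mem (hmono n₁ n₂ _ hn₁) ?_
      rw [add_comm n₁ n₂]
      exact hmono n₂ n₁ _ hn₂
  obtain ⟨n, hn⟩ := main w 1 ⟨1, by rw [pow_one, mul_one]; exact hukey⟩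
  rw [mul_one] at hn
  exact ⟨n, hn⟩



/-- if φ₁ ≠ φ₂ (as functions on the positive integers), then `M_{φ₁}(a)` and
`M_{φ₂}(a)` are not isomorphic as `L`-modules (equivalently, as `U(L)`-modules). -/
theorem stmt_2 (d : ℕ → ℕ) (hd : ∀ k, 1 ≤ d k) (L : Type) [LieRing L] [LieAlgebra ℂ L]
    (E : HeisenbergL d L) (a : ℂ) (φ₁ φ₂ : ℕ → Bool)
    (hφ : ∃ k : ℕ, 1 ≤ k ∧ φ₁ k ≠ φ₂ k) :
    ¬ Nonempty ((VermaMod E φ₁ a) ≃ₗ[UniversalEnvelopingAlgebra ℂ L] (VermaMod E φ₂ a)) := by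
  rintro ⟨f⟩
  obtain ⟨k, hk1, hkneq⟩ := hφ
  set ε : ℤ := if φ₁ k = true then (k : ℤ) else -(k : ℤ) with hεdef
  have hkpos : (0 : ℤ) < (k : ℤ) := by exact_mod_cast hk1
  have hε : ε ≠ 0 := by
    rw [hεdef]; split_ifs <;> omega
  have hnatAbs : ε.natAbs = k := by
    rw [hεdef]; split_ifs <;> simp
  have hdε : 1 ≤ d ε.natAbs := by rw [hnatAbs]; exact hd k
  have hmem1 : ((ε, 1) : ℤ × ℕ) ∈ posIdx d φ₁ := by
    simp only [posIdx, Set.mem_setOf_eq]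
    refine ⟨hε, le_rfl, hdε, ?_⟩
    rcases Bool.eq_false_or_eq_true (φ₁ k) with hb | hb
    · left
      constructor
      · show 0 < ε
        rw [hεdef, if_pos hb]; omega
      · rw [hnatAbs]; exact hb
    · right
      constructor
      · show ε < 0
        rw [hεdef, if_neg (by simp [hb])]; omega
      · rw [hnatAbs]; exact hb
  have hmem2 : ((ε, 1) : ℤ × ℕ) ∉ posIdx d φ₂ := by
    intro hmem
    simp only [posIdx, Set.mem_setOf_eq] at hmem
    obtain ⟨-, -, -, h4⟩ := hmem
    rcases Bool.eq_false_or_eq_true (φ₁ k) with hb | hb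
    · have hεpos : 0 < ε := by rw [hεdef, if_pos hb]; omega
      rcases h4 with ⟨-, hb'⟩ | ⟨hs, -⟩
      · rw [hnatAbs] at hb'
        exact hkneq (hb.trans hb'.symm)
      · omega
    · have hεneg : ε < 0 := by rw [hεdef, if_neg (by simp [hb])]; omega
      rcases h4 with ⟨hs, -⟩ | ⟨-, hb'⟩
      · omega
      · rw [hnatAbs] at hb'
        exact hkneq (hb.trans hb'.symm)
  set u : UniversalEnvelopingAlgebra ℂ L := ι ℂ (E.x ε 1) with hu
  -- a representative of f.symm ⟦1⟧
  obtain ⟨w, hw⟩ := Submodule.Quotient.mk_surjective (vermaIdeal E φ₁ a)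
    (f.symm (Submodule.Quotient.mk 1))
  obtain ⟨n, hn⟩ := exists_pow_mul_mem E φ₁ a hε hdε hmem1 w
  have h1 : (u ^ n) • f.symm (Submodule.Quotient.mk 1 : VermaMod E φ₂ a) = 0 := by
    rw [← hw]
    show (Submodule.Quotient.mk (u ^ n * w) : UniversalEnvelopingAlgebra ℂ L ⧸ vermaIdeal E φ₁ a) = 0
    rw [Submodule.Quotient.mk_eq_zero]
    exact hn
  have h2 : (u ^ n) • (Submodule.Quotient.mk 1 : VermaMod E φ₂ a) = 0 := by
    have := congrArg f h1
    rw [map_smul, map_zero] at this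
    have e := f.apply_symm_apply (Submodule.Quotient.mk 1 : VermaMod E φ₂ a)
    exact (congrArg (fun z : VermaMod E φ₂ a => (u ^ n) • z) e.symm).trans this
  have h3 : u ^ n ∈ vermaIdeal E φ₂ a := by
    rw [← Submodule.Quotient.mk_eq_zero]
    have : (Submodule.Quotient.mk (u ^ n • (1 : UniversalEnvelopingAlgebra ℂ L)) :
        VermaMod E φ₂ a) = (u ^ n) • (Submodule.Quotient.mk 1 : VermaMod E φ₂ a) :=
      Submodule.Quotient.mk_smul _ _ _
    rw [smul_eq_mul, mul_one] at this
    rw [this]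
    exact h2
  have h4 := heisΦ_vanish E φ₂ a h3
  rw [map_pow] at h4
  have hx : heisΦ E φ₂ a u = Mop (ε, 1) := by
    rw [hu, heisΦ, lift_ι_apply]
    show heisRep E φ₂ a (E.x ε 1) = Mop (ε, 1)
    rw [heisRep_x E φ₂ a (ε, 1) ⟨hε, le_rfl, hdε⟩, if_neg hmem2]
  rw [hx, Mop, LinearMap.pow_mulLeft, LinearMap.mulLeft_apply, mul_one] at h4
  exact pow_ne_zero n (MvPolynomial.X_ne_zero (ε, 1)) h4
end

section
/- Let V be an irreducible H-module on which c acts as multiplication by a scalar. If for some i ∈ ℤ∖{0} the operator e_i e_{−i} has an eigenvector in V, then V is spanned by eigenvectors of e_i e_{−i}; in particular, e_i e_{−i} is diagonalizable on V and V has an at most countable basis consisting of eigenvectors of e_i e_{−i}. -/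
/-!
STATEMENT 4: if an irreducible H-module V (with c acting by a scalar) has i-torsion
(e_i e_{−i} has an eigenvector), then V is spanned by eigenvectors of e_i e_{−i};
in particular e_i e_{−i} is diagonalizable on V and V has an at most countable basis
consisting of eigenvectors of e_i e_{−i}.
-/

/-- The infinite-dimensional Heisenberg Lie algebra `H` over ℂ, with basis
`{c} ∪ {e_i : i ∈ ℤ∖{0}}`, `c` central and `[e_i, e_j] = δ_{i,-j}·c`
(normalized so that `[e_i, e_{-i}] = c` for `i > 0`). -/
structure HeisenbergH (H : Type) [LieRing H] [LieAlgebra ℂ H] : Type where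
  c : H
  e : ℤ → H
  basis : Module.Basis (Option {i : ℤ // i ≠ 0}) ℂ H
  basis_none : basis none = c
  basis_some : ∀ i, basis (some i) = e i.1
  lie_c : ∀ y : H, ⁅c, y⁆ = 0
  lie_e_e_same : ∀ i : ℤ, 0 < i → ⁅e i, e (-i)⁆ = c
  lie_e_e_other : ∀ i j : ℤ, i ≠ 0 → j ≠ 0 → i ≠ -j → ⁅e i, e j⁆ = 0

/-- bracket with fixed module element, linear in the Lie algebra argument -/
private def brL (H : Type) [LieRing H] [LieAlgebra ℂ H]
    (V : Type) [AddCommGroup V] [Module ℂ V] [LieRingModule H V] [LieModule ℂ H V]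
    (w : V) : H →ₗ[ℂ] V where
  toFun x := ⁅x, w⁆
  map_add' x y := add_lie x y w
  map_smul' t x := smul_lie t x w

/-- bracket with fixed Lie algebra element, linear in the module argument -/
private def brR (H : Type) [LieRing H] [LieAlgebra ℂ H]
    (V : Type) [AddCommGroup V] [Module ℂ V] [LieRingModule H V] [LieModule ℂ H V]
    (x : H) : V →ₗ[ℂ] V where
  toFun v := ⁅x, v⁆
  map_add' v w := lie_add x v w
  map_smul' t v := lie_smul t x v

private lemma top_of_invariant (H : Type) [LieRing H] [LieAlgebra ℂ H]
    (V : Type) [AddCommGroup V] [Module ℂ V] [LieRingModule H V] [LieModule ℂ H V]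
    (hirr : ∀ N : LieSubmodule ℂ H V, N = ⊥ ∨ N = ⊤)
    (p : Submodule ℂ V) (hinv : ∀ x : H, ∀ v ∈ p, ⁅x, v⁆ ∈ p)
    (hne : p ≠ ⊥) : p = ⊤ := by
  let N : LieSubmodule ℂ H V := { p with lie_mem := fun {x v} hv => hinv x v hv }
  have hNp : N.toSubmodule = p := rfl
  rcases hirr N with h | h
  · exact absurd (by rw [← hNp, h]; rfl) hne
  · rw [← hNp, h]; rfl

/-- invariance from basis elements acting on generators -/
private lemma invariant_of_basis (H : Type) [LieRing H] [LieAlgebra ℂ H]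
    (V : Type) [AddCommGroup V] [Module ℂ V] [LieRingModule H V] [LieModule ℂ H V]
    {ι : Type} (b : Module.Basis ι ℂ H) (S : Set V)
    (hb : ∀ j : ι, ∀ w ∈ S, ⁅b j, w⁆ ∈ Submodule.span ℂ S) :
    ∀ x : H, ∀ v ∈ Submodule.span ℂ S, ⁅x, v⁆ ∈ Submodule.span ℂ S := by
  intro x v hv
  have hgen : ∀ w ∈ S, ⁅x, w⁆ ∈ Submodule.span ℂ S := by
    intro w hw
    have hx : x ∈ Submodule.span ℂ (Set.range b) := by
      rw [b.span_eq]; trivial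
    have : Submodule.span ℂ (Set.range b) ≤
        (Submodule.span ℂ S).comap (brL H V w) := by
      rw [Submodule.span_le]
      rintro _ ⟨j, rfl⟩
      exact hb j w hw
    exact this hx
  have : Submodule.span ℂ S ≤ (Submodule.span ℂ S).comap (brR H V x) := by
    rw [Submodule.span_le]
    intro w hw
    exact hgen w hw
  exact this hv

theorem stmt_4 (H : Type) [LieRing H] [LieAlgebra ℂ H] (E : HeisenbergH H)
    (V : Type) [AddCommGroup V] [Module ℂ V] [LieRingModule H V] [LieModule ℂ H V]
    (hnt : Nontrivial V)
    (hirr : ∀ N : LieSubmodule ℂ H V, N = ⊥ ∨ N = ⊤)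
    (a : ℂ) (hc : ∀ v : V, ⁅E.c, v⁆ = a • v)
    (i : ℤ) (hi : i ≠ 0)
    (htor : ∃ v : V, v ≠ 0 ∧ ∃ μ : ℂ, ⁅E.e i, ⁅E.e (-i), v⁆⁆ = μ • v) :
    Submodule.span ℂ {v : V | v ≠ 0 ∧ ∃ μ : ℂ, ⁅E.e i, ⁅E.e (-i), v⁆⁆ = μ • v} = ⊤ ∧
    ∃ s : Set V, s.Countable ∧
      (∀ v ∈ s, ∃ μ : ℂ, ⁅E.e i, ⁅E.e (-i), v⁆⁆ = μ • v) ∧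
      Nonempty (Module.Basis s ℂ V) := by
  classical
  obtain ⟨v₀, hv₀, μ₀, hμ₀⟩ := htor
  set S : Set V := {v : V | v ≠ 0 ∧ ∃ μ : ℂ, ⁅E.e i, ⁅E.e (-i), v⁆⁆ = μ • v} with hSdef
  -- sign of the bracket [e_i, e_{-i}]
  obtain ⟨ε, hε⟩ : ∃ ε : ℂ, ⁅E.e i, E.e (-i)⁆ = ε • E.c := by
    rcases lt_or_gt_of_ne hi with h | h
    · refine ⟨-1, ?_⟩
      have h2 := E.lie_e_e_same (-i) (by omega)
      rw [neg_neg] at h2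
      rw [← lie_skew, h2, neg_one_smul]
    · exact ⟨1, by rw [E.lie_e_e_same i h, one_smul]⟩
  have comm : ∀ w : V, ⁅E.e i, ⁅E.e (-i), w⁆⁆ - ⁅E.e (-i), ⁅E.e i, w⁆⁆ = (ε * a) • w := by
    intro w
    rw [← lie_lie, hε, smul_lie, hc, smul_smul]
  -- key eigenvector computation
  have key : ∀ b : Option {k : ℤ // k ≠ 0}, ∀ w : V, ∀ μ : ℂ,
      ⁅E.e i, ⁅E.e (-i), w⁆⁆ = μ • w →
      ∃ ν : ℂ, ⁅E.e i, ⁅E.e (-i), ⁅E.basis b, w⁆⁆⁆ = ν • ⁅E.basis b, w⁆ := by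
    rintro (_ | ⟨j, hj⟩) w μ hμ
    · refine ⟨μ, ?_⟩
      rw [E.basis_none, hc, lie_smul, lie_smul, hμ, smul_smul, smul_smul, mul_comm]
    · rw [E.basis_some ⟨j, hj⟩]
      by_cases hji : j = i
      · subst hji
        refine ⟨μ - ε * a, ?_⟩
        have hinner : ⁅E.e (-j), ⁅E.e j, w⁆⁆ = (μ - ε * a) • w := by
          have h := comm w
          rw [hμ] at h
          rw [sub_smul, ← h]
          abel
        rw [hinner, lie_smul]
      · by_cases hjmi : j = -i
        · subst hjmi
          refine ⟨μ + ε * a, ?_⟩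
          have := comm ⁅E.e (-i), w⁆
          rw [sub_eq_iff_eq_add] at this
          rw [this, hμ, lie_smul, add_smul, add_comm]
        · refine ⟨μ, ?_⟩
          have h1 : ⁅E.e (-i), E.e j⁆ = 0 :=
            E.lie_e_e_other (-i) j (neg_ne_zero.2 hi) hj (by omega)
          have h2 : ⁅E.e i, E.e j⁆ = 0 :=
            E.lie_e_e_other i j hi hj (by omega)
          rw [leibniz_lie (E.e (-i)) (E.e j) w, h1, zero_lie, zero_add,
            leibniz_lie (E.e i) (E.e j), h2, zero_lie, zero_add, hμ, lie_smul]
  -- span S is invariant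
  have hinv : ∀ x : H, ∀ v ∈ Submodule.span ℂ S, ⁅x, v⁆ ∈ Submodule.span ℂ S := by
    apply invariant_of_basis H V E.basis
    intro b w hw
    obtain ⟨hw0, μ, hμ⟩ := hw
    obtain ⟨ν, hν⟩ := key b w μ hμ
    by_cases hz : ⁅E.basis b, w⁆ = 0
    · rw [hz]; exact Submodule.zero_mem _
    · exact Submodule.subset_span ⟨hz, ν, hν⟩
  have hne : Submodule.span ℂ S ≠ ⊥ := by
    intro h
    apply hv₀
    have : v₀ ∈ Submodule.span ℂ S := Submodule.subset_span ⟨hv₀, μ₀, hμ₀⟩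
    rwa [h, Submodule.mem_bot] at this
  have hstop : Submodule.span ℂ S = ⊤ := top_of_invariant H V hirr _ hinv hne
  refine ⟨hstop, ?_⟩
  -- countable rank: V is spanned by iterated brackets of basis elements on v₀
  have hrank : Module.rank ℂ V ≤ Cardinal.aleph0 := by
    let f : List (Option {k : ℤ // k ≠ 0}) → V := fun l => l.foldr (fun b v => ⁅E.basis b, v⁆) v₀
    have hWinv : ∀ x : H, ∀ v ∈ Submodule.span ℂ (Set.range f),
        ⁅x, v⁆ ∈ Submodule.span ℂ (Set.range f) := by
      apply invariant_of_basis H V E.basis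
      rintro b _ ⟨l, rfl⟩
      exact Submodule.subset_span ⟨b :: l, rfl⟩
    have hWne : Submodule.span ℂ (Set.range f) ≠ ⊥ := by
      intro h
      apply hv₀
      have : v₀ ∈ Submodule.span ℂ (Set.range f) := Submodule.subset_span ⟨[], rfl⟩
      rwa [h, Submodule.mem_bot] at this
    have hWtop : Submodule.span ℂ (Set.range f) = ⊤ := top_of_invariant H V hirr _ hWinv hWne
    have h1 : Module.rank ℂ V = Module.rank ℂ (Submodule.span ℂ (Set.range f)) := by
      rw [hWtop, rank_top]
    rw [h1]
    refine (rank_span_le _).trans ?_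
    rw [Cardinal.mk_le_aleph0_iff, Set.countable_coe_iff]
    exact Set.countable_range f
  obtain ⟨t, hts, hspan, hli⟩ := exists_linearIndependent ℂ S
  have htop : ⊤ ≤ Submodule.span ℂ (Set.range (Subtype.val : t → V)) := by
    rw [Subtype.range_coe, hspan, hstop]
  refine ⟨t, ?_, fun v hv => (hts hv).2, ⟨Module.Basis.mk hli htop⟩⟩
  rw [← Set.countable_coe_iff, ← Cardinal.mk_le_aleph0_iff]
  exact hli.cardinal_le_rank.trans hrank
end

section
/- Let V be an irreducible H-module on which c acts as multiplication by a scalar, and suppose V is a torsion module, i.e., for every i ∈ ℤ∖{0} the operator e_i e_{−i} has an eigenvector in V. Then V is locally finite: for every i ∈ ℤ∖{0} and every v ∈ V, the subspace span_ℂ{(e_i e_{−i})^k·v : k ≥ 0} is finite-dimensional. -/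
section Aux

variable {H : Type} [LieRing H] [LieAlgebra ℂ H] (E : HeisenbergH H)
variable {V : Type} [AddCommGroup V] [Module ℂ V] [LieRingModule H V] [LieModule ℂ H V]

/-- `[e_i, e_{-i}]` acts by a scalar (namely `±a`). -/
lemma heis_bracket_scalar (a : ℂ) (hc : ∀ v : V, ⁅E.c, v⁆ = a • v)
    (i : ℤ) (hi : i ≠ 0) : ∃ b : ℂ, ∀ u : V, ⁅(⁅E.e i, E.e (-i)⁆ : H), u⁆ = b • u := by
  rcases lt_or_gt_of_ne hi with h | h
  · refine ⟨-a, fun u => ?_⟩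
    have h1 : ⁅E.e (-i), E.e (-(-i))⁆ = E.c := E.lie_e_e_same (-i) (by omega)
    have h2 : ⁅E.e i, E.e (-i)⁆ = -E.c := by
      rw [← h1]; simp only [neg_neg]; rw [← lie_skew]
    rw [h2, neg_lie, hc, neg_smul]
  · refine ⟨a, fun u => ?_⟩
    rw [E.lie_e_e_same i h, hc]

/-- Key commutation relation: `T ∘ ad(e_j) = ad(e_j) ∘ T + λ • ad(e_j)` where
`T = ad(e_i) ∘ ad(e_{-i})`. -/
lemma heis_comm (a : ℂ) (hc : ∀ v : V, ⁅E.c, v⁆ = a • v)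
    (i : ℤ) (hi : i ≠ 0) (j : ℤ) (hj : j ≠ 0) :
    ∃ lam : ℂ, ∀ u : V, ⁅E.e i, ⁅E.e (-i), ⁅E.e j, u⁆⁆⁆
      = ⁅E.e j, ⁅E.e i, ⁅E.e (-i), u⁆⁆⁆ + lam • ⁅E.e j, u⁆ := by
  obtain ⟨b, hb⟩ := heis_bracket_scalar E a hc i hi
  rcases eq_or_ne j i with rfl | hji
  · refine ⟨-b, fun u => ?_⟩
    have h1 : ⁅E.e (-j), ⁅E.e j, u⁆⁆ = ⁅(⁅E.e (-j), E.e j⁆ : H), u⁆ + ⁅E.e j, ⁅E.e (-j), u⁆⁆ :=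
      leibniz_lie _ _ _
    have h2 : ⁅(⁅E.e (-j), E.e j⁆ : H), u⁆ = (-b) • u := by
      rw [← lie_skew, neg_lie, hb, neg_smul]
    rw [h1, lie_add, h2, lie_smul]
    abel
  · rcases eq_or_ne j (-i) with rfl | hji'
    · refine ⟨b, fun u => ?_⟩
      have h1 : ⁅E.e i, ⁅E.e (-i), ⁅E.e (-i), u⁆⁆⁆
          = ⁅(⁅E.e i, E.e (-i)⁆ : H), ⁅E.e (-i), u⁆⁆ + ⁅E.e (-i), ⁅E.e i, ⁅E.e (-i), u⁆⁆⁆ :=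
        leibniz_lie _ _ _
      rw [h1, hb, add_comm]
    · refine ⟨0, fun u => ?_⟩
      have h1 : ⁅E.e (-i), ⁅E.e j, u⁆⁆ = ⁅(⁅E.e (-i), E.e j⁆ : H), u⁆ + ⁅E.e j, ⁅E.e (-i), u⁆⁆ :=
        leibniz_lie _ _ _
      have h2 : ⁅E.e (-i), E.e j⁆ = 0 := E.lie_e_e_other (-i) j (by omega) hj (by omega)
      have h3 : ⁅E.e i, ⁅E.e j, ⁅E.e (-i), u⁆⁆⁆
          = ⁅(⁅E.e i, E.e j⁆ : H), ⁅E.e (-i), u⁆⁆ + ⁅E.e j, ⁅E.e i, ⁅E.e (-i), u⁆⁆⁆ :=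
        leibniz_lie _ _ _
      have h4 : ⁅E.e i, E.e j⁆ = 0 := E.lie_e_e_other i j hi hj (by omega)
      rw [h1, h2, zero_lie, zero_add, h3, h4, zero_lie, zero_add, zero_smul, add_zero]

end Aux

theorem stmt_5 (H : Type) [LieRing H] [LieAlgebra ℂ H] (E : HeisenbergH H)
    (V : Type) [AddCommGroup V] [Module ℂ V] [LieRingModule H V] [LieModule ℂ H V]
    (hnt : Nontrivial V)
    (hirr : ∀ N : LieSubmodule ℂ H V, N = ⊥ ∨ N = ⊤)
    (a : ℂ) (hc : ∀ v : V, ⁅E.c, v⁆ = a • v)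
    (htor : ∀ i : ℤ, i ≠ 0 → ∃ v : V, v ≠ 0 ∧ ∃ μ : ℂ, ⁅E.e i, ⁅E.e (-i), v⁆⁆ = μ • v) :
    ∀ i : ℤ, i ≠ 0 → ∀ v : V,
      FiniteDimensional ℂ
        (Submodule.span ℂ (Set.range fun k : ℕ => (fun u : V => ⁅E.e i, ⁅E.e (-i), u⁆⁆)^[k] v)) := by
  intro i hi v
  -- the set of eigenvectors of T = e_i e_{-i}
  set S : Set V := {w : V | ∃ μ : ℂ, ⁅E.e i, ⁅E.e (-i), w⁆⁆ = μ • w} with hS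
  -- the span of S is stable under the bracket action of every basis element, hence of all of H
  have hstable : ∀ x : H, ∀ m ∈ Submodule.span ℂ S, ⁅x, m⁆ ∈ Submodule.span ℂ S := by
    have hbasis : ∀ o : Option {i : ℤ // i ≠ 0}, ∀ m ∈ Submodule.span ℂ S,
        ⁅E.basis o, m⁆ ∈ Submodule.span ℂ S := by
      rintro o m hm
      induction hm using Submodule.span_induction with
      | mem w hw =>
        match o with
        | none =>
          rw [E.basis_none, hc]
          exact Submodule.smul_mem _ _ (Submodule.subset_span hw)
        | some j =>
          rw [E.basis_some]
          obtain ⟨μ, hμ⟩ := hw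
          obtain ⟨lam, hlam⟩ := heis_comm E a hc i hi j.1 j.2
          refine Submodule.subset_span ⟨μ + lam, ?_⟩
          rw [hlam w, hμ, lie_smul, add_smul]
      | zero => rw [lie_zero]; exact Submodule.zero_mem _
      | add y z _ _ hy hz => rw [lie_add]; exact Submodule.add_mem _ hy hz
      | smul t y _ hy => rw [lie_smul]; exact Submodule.smul_mem _ _ hy
    intro x m hm
    -- the set of x for which the claim holds is a submodule containing the basis
    let P : Submodule ℂ H :=
      { carrier := {x : H | ∀ m ∈ Submodule.span ℂ S, ⁅x, m⁆ ∈ Submodule.span ℂ S}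
        add_mem' := fun {y z} hy hz m hm => by
          rw [add_lie]; exact Submodule.add_mem _ (hy m hm) (hz m hm)
        zero_mem' := fun m hm => by rw [zero_lie]; exact Submodule.zero_mem _
        smul_mem' := fun t y hy m hm => by
          rw [smul_lie]; exact Submodule.smul_mem _ _ (hy m hm) }
    have hP : P = ⊤ := by
      rw [eq_top_iff, ← E.basis.span_eq]
      exact Submodule.span_le.mpr (Set.range_subset_iff.mpr fun o => hbasis o)
    have hx : x ∈ P := hP ▸ Submodule.mem_top
    exact hx m hm
  -- so span S is a Lie submodule
  let N : LieSubmodule ℂ H V :=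
    { Submodule.span ℂ S with
      lie_mem := fun {x m} hm => hstable x m hm }
  have hNne : N ≠ ⊥ := by
    obtain ⟨w, hw0, μ, hμ⟩ := htor i hi
    intro hbot
    have hwN : w ∈ N := Submodule.subset_span ⟨μ, hμ⟩
    rw [hbot] at hwN
    exact hw0 (by simpa using hwN)
  have hNtop : N = ⊤ := (hirr N).resolve_left hNne
  have hvN : v ∈ Submodule.span ℂ S := by
    have : v ∈ N := hNtop ▸ LieSubmodule.mem_top v
    exact this
  -- extract a finite set of eigenvectors spanning v
  obtain ⟨s, hsS, hvs⟩ := Submodule.mem_span_finite_of_mem_span hvN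
  -- span s is T-stable
  have hTstable : ∀ u ∈ Submodule.span ℂ (s : Set V),
      ⁅E.e i, ⁅E.e (-i), u⁆⁆ ∈ Submodule.span ℂ (s : Set V) := by
    intro u hu
    induction hu using Submodule.span_induction with
    | mem w hw =>
      obtain ⟨μ, hμ⟩ := hsS hw
      rw [hμ]
      exact Submodule.smul_mem _ _ (Submodule.subset_span hw)
    | zero => rw [lie_zero, lie_zero]; exact Submodule.zero_mem _
    | add y z _ _ hy hz => rw [lie_add, lie_add]; exact Submodule.add_mem _ hy hz
    | smul t y _ hy => rw [lie_smul, lie_smul]; exact Submodule.smul_mem _ _ hy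
  have hiter : ∀ k : ℕ, (fun u : V => ⁅E.e i, ⁅E.e (-i), u⁆⁆)^[k] v ∈
      Submodule.span ℂ (s : Set V) := by
    intro k
    induction k with
    | zero => simpa using hvs
    | succ n ih =>
      rw [Function.iterate_succ_apply']
      exact hTstable _ ih
  have hle : Submodule.span ℂ (Set.range fun k : ℕ => (fun u : V => ⁅E.e i, ⁅E.e (-i), u⁆⁆)^[k] v)
      ≤ Submodule.span ℂ (s : Set V) :=
    Submodule.span_le.mpr (Set.range_subset_iff.mpr hiter)
  exact Submodule.finiteDimensional_of_le hle
end

section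
/- Let V be an irreducible H-module on which c acts as multiplication by a scalar, and suppose V is diagonal, i.e., the operators e_i e_{−i}, i ∈ ℤ∖{0}, have a common eigenvector in V. Then V has a basis consisting of simultaneous eigenvectors of all the operators e_i e_{−i}, i ∈ ℤ∖{0}; that is, these operators are simultaneously diagonalizable on V. -/
section Aux

variable {H : Type} [LieRing H] [LieAlgebra ℂ H]
variable {V : Type} [AddCommGroup V] [Module ℂ V] [LieRingModule H V] [LieModule ℂ H V]

/-- Vectors generated from `v` by repeatedly applying the operators `e_j`. -/
inductive HGen (E : HeisenbergH H) (v : V) : V → Prop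
  | base : HGen E v v
  | step (j : ℤ) (hj : j ≠ 0) (w : V) : HGen E v w → HGen E v ⁅E.e j, w⁆

lemma eigen_step (E : HeisenbergH H) (a : ℂ) (hc : ∀ v : V, ⁅E.c, v⁆ = a • v)
    (i j : ℤ) (hi : i ≠ 0) (hj : j ≠ 0) (w : V) (μ : ℂ)
    (hw : ⁅E.e i, ⁅E.e (-i), w⁆⁆ = μ • w) :
    ∃ ν : ℂ, ⁅E.e i, ⁅E.e (-i), ⁅E.e j, w⁆⁆⁆ = ν • ⁅E.e j, w⁆ := by
  rcases eq_or_ne j i with rfl | hji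
  · -- j = i
    have hB : ⁅E.e (-j), E.e j⁆ = (if 0 < j then (-1:ℂ) else 1) • E.c := by
      rcases (lt_or_gt_of_ne hj) with h | h
      · have h2 := E.lie_e_e_same (-j) (by omega)
        rw [neg_neg] at h2
        rw [h2, if_neg (by omega), one_smul]
      · rw [← lie_skew, E.lie_e_e_same j h, if_pos h, neg_one_smul]
    refine ⟨μ + (if 0 < j then (-1:ℂ) else 1) * a, ?_⟩
    rw [leibniz_lie (E.e (-j)) (E.e j) w, hB, lie_add, smul_lie, lie_smul, hc,
      leibniz_lie (E.e j) (E.e j) (⁅E.e (-j), w⁆), lie_self, zero_lie, zero_add, hw,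
      lie_smul, lie_smul]
    module
  rcases eq_or_ne j (-i) with rfl | hji'
  · -- j = -i
    have hB : ⁅E.e i, E.e (-i)⁆ = (if 0 < i then (1:ℂ) else -1) • E.c := by
      rcases (lt_or_gt_of_ne hi) with h | h
      · have h2 := E.lie_e_e_same (-i) (by omega)
        rw [← lie_skew, neg_neg] at h2
        rw [if_neg (by omega), neg_one_smul, ← h2, neg_neg]
      · rw [E.lie_e_e_same i h, if_pos h, one_smul]
    refine ⟨μ + (if 0 < i then (1:ℂ) else -1) * a, ?_⟩
    rw [leibniz_lie (E.e i) (E.e (-i)) (⁅E.e (-i), w⁆), hB, smul_lie, hc, hw, lie_smul]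
    module
  · -- generic case
    have h1 : ⁅E.e (-i), E.e j⁆ = 0 := E.lie_e_e_other (-i) j (by omega) hj (by omega)
    have h2 : ⁅E.e i, E.e j⁆ = 0 := E.lie_e_e_other i j hi hj (by omega)
    refine ⟨μ, ?_⟩
    rw [leibniz_lie (E.e (-i)) (E.e j) w, h1, zero_lie, zero_add,
      leibniz_lie (E.e i) (E.e j) (⁅E.e (-i), w⁆), h2, zero_lie, zero_add, hw, lie_smul]

lemma hgen_eigen (E : HeisenbergH H) (a : ℂ) (hc : ∀ v : V, ⁅E.c, v⁆ = a • v)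
    (v : V) (hv : ∀ i : ℤ, i ≠ 0 → ∃ μ : ℂ, ⁅E.e i, ⁅E.e (-i), v⁆⁆ = μ • v)
    (w : V) (hw : HGen E v w) :
    ∀ i : ℤ, i ≠ 0 → ∃ μ : ℂ, ⁅E.e i, ⁅E.e (-i), w⁆⁆ = μ • w := by
  induction hw with
  | base => exact hv
  | step j hj w hw ih =>
    intro i hi
    obtain ⟨μ, hμ⟩ := ih i hi
    exact eigen_step E a hc i j hi hj w μ hμ

end Aux

theorem stmt_6 (H : Type) [LieRing H] [LieAlgebra ℂ H] (E : HeisenbergH H)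
    (V : Type) [AddCommGroup V] [Module ℂ V] [LieRingModule H V] [LieModule ℂ H V]
    (hnt : Nontrivial V)
    (hirr : ∀ N : LieSubmodule ℂ H V, N = ⊥ ∨ N = ⊤)
    (a : ℂ) (hc : ∀ v : V, ⁅E.c, v⁆ = a • v)
    (hdiag : ∃ v : V, v ≠ 0 ∧ ∀ i : ℤ, i ≠ 0 → ∃ μ : ℂ, ⁅E.e i, ⁅E.e (-i), v⁆⁆ = μ • v) :
    ∃ s : Set V,
      (∀ w ∈ s, ∀ i : ℤ, i ≠ 0 → ∃ μ : ℂ, ⁅E.e i, ⁅E.e (-i), w⁆⁆ = μ • w) ∧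
      Nonempty (Module.Basis s ℂ V) := by
  obtain ⟨v, hv0, hv⟩ := hdiag
  set S : Set V := {w | HGen E v w} with hS
  -- the span of S is a Lie submodule
  have hlie : ∀ (x : H) (w : V), w ∈ Submodule.span ℂ S → ⁅x, w⁆ ∈ Submodule.span ℂ S := by
    intro x w hw
    induction hw using Submodule.span_induction with
    | mem w hwS =>
        -- suffices for basis elements of H
        have : x ∈ Submodule.span ℂ (Set.range E.basis) := by
          rw [E.basis.span_eq]; trivial
        induction this using Submodule.span_induction with
        | mem y hy =>
            obtain ⟨o, rfl⟩ := hy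
            cases o with
            | none =>
                rw [E.basis_none, hc]
                exact Submodule.smul_mem _ _ (Submodule.subset_span hwS)
            | some i =>
                rw [E.basis_some]
                exact Submodule.subset_span (HGen.step i.1 i.2 w hwS)
        | zero => rw [zero_lie]; exact Submodule.zero_mem _
        | add y z _ _ hy hz => rw [add_lie]; exact Submodule.add_mem _ hy hz
        | smul t y _ hy => rw [smul_lie]; exact Submodule.smul_mem _ _ hy
    | zero => rw [lie_zero]; exact Submodule.zero_mem _
    | add y z _ _ hy hz => rw [lie_add]; exact Submodule.add_mem _ hy hz
    | smul t y _ hy => rw [lie_smul]; exact Submodule.smul_mem _ _ hy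
  set N : LieSubmodule ℂ H V := { Submodule.span ℂ S with lie_mem := fun {x w} hw => hlie x w hw }
  have hNtop : (Submodule.span ℂ S) = ⊤ := by
    rcases hirr N with h | h
    · exfalso
      have hvN : v ∈ N := Submodule.subset_span HGen.base
      rw [h] at hvN
      exact hv0 hvN
    · exact congrArg LieSubmodule.toSubmodule h
  obtain ⟨b, hbS, hbspan, hbli⟩ := exists_linearIndependent ℂ S
  refine ⟨b, ?_, ?_⟩
  · intro w hwb i hi
    exact hgen_eigen E a hc v hv w (hbS hwb) i hi
  · refine ⟨Module.Basis.mk hbli ?_⟩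
    rw [Subtype.range_coe, hbspan, hNtop]
end

section
/- Let V be an irreducible H-module on which c acts as multiplication by a scalar, and suppose V is diagonal, i.e., the operators e_i e_{−i}, i ∈ ℤ∖{0}, have a common eigenvector in V. Then V is locally finite: for every i ∈ ℤ∖{0} and every v ∈ V, the subspace span_ℂ{(e_i e_{−i})^k·v : k ≥ 0} is finite-dimensional. -/
theorem stmt_7 (H : Type) [LieRing H] [LieAlgebra ℂ H] (E : HeisenbergH H)
    (V : Type) [AddCommGroup V] [Module ℂ V] [LieRingModule H V] [LieModule ℂ H V]
    (hnt : Nontrivial V)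
    (hirr : ∀ N : LieSubmodule ℂ H V, N = ⊥ ∨ N = ⊤)
    (a : ℂ) (hc : ∀ v : V, ⁅E.c, v⁆ = a • v)
    (hdiag : ∃ v : V, v ≠ 0 ∧ ∀ i : ℤ, i ≠ 0 → ∃ μ : ℂ, ⁅E.e i, ⁅E.e (-i), v⁆⁆ = μ • v) :
    ∀ i : ℤ, i ≠ 0 → ∀ v : V,
      FiniteDimensional ℂ
        (Submodule.span ℂ (Set.range fun k : ℕ => (fun u : V => ⁅E.e i, ⁅E.e (-i), u⁆⁆)^[k] v)) := by
  intro i hi v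
  obtain ⟨v0, hv0, hdi⟩ := hdiag
  set f : V → V := fun u => ⁅E.e i, ⁅E.e (-i), u⁆⁆ with hf
  -- the scalar by which ⁅e i, e (-i)⁆ acts
  obtain ⟨b, hb⟩ : ∃ b : ℂ, ∀ u : V, ⁅(⁅E.e i, E.e (-i)⁆ : H), u⁆ = b • u := by
    rcases lt_or_gt_of_ne hi with h | h
    · refine ⟨-a, fun u => ?_⟩
      have h1 : ⁅E.e (-i), E.e (-(-i))⁆ = E.c := E.lie_e_e_same (-i) (by omega)
      rw [neg_neg] at h1
      rw [← lie_skew, h1, neg_lie, hc, neg_smul]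
    · exact ⟨a, fun u => by rw [E.lie_e_e_same i h, hc]⟩
  have hb' : ∀ u : V, ⁅(⁅E.e (-i), E.e i⁆ : H), u⁆ = (-b) • u := by
    intro u
    rw [← lie_skew, neg_lie, hb, neg_smul]
  -- commutation relation
  have hcomm : ∀ j : ℤ, j ≠ 0 → ∃ l : ℂ, ∀ w : V,
      f ⁅E.e j, w⁆ = ⁅E.e j, f w⁆ + l • ⁅E.e j, w⁆ := by
    intro j hj
    have key : ∀ w : V, f ⁅E.e j, w⁆ =
        ⁅E.e i, ⁅(⁅E.e (-i), E.e j⁆ : H), w⁆⁆ + ⁅(⁅E.e i, E.e j⁆ : H), ⁅E.e (-i), w⁆⁆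
          + ⁅E.e j, f w⁆ := by
      intro w
      simp only [hf]
      rw [leibniz_lie (E.e (-i)) (E.e j) w, lie_add, leibniz_lie (E.e i) (E.e j)]
      abel
    by_cases hji : j = i
    · subst hji
      refine ⟨-b, fun w => ?_⟩
      rw [key, hb', lie_smul, lie_self, zero_lie, add_zero, add_comm]
    · by_cases hjni : j = -i
      · subst hjni
        refine ⟨b, fun w => ?_⟩
        rw [key, hb, lie_self, zero_lie, lie_zero, zero_add, add_comm]
      · refine ⟨0, fun w => ?_⟩
        rw [key, E.lie_e_e_other (-i) j (by omega) hj (by omega),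
          E.lie_e_e_other i j hi hj (by omega), zero_lie, lie_zero, zero_lie, zero_add, zero_add,
          zero_smul, add_zero]
  -- the set of f-eigenvectors
  set S : Set V := {w | ∃ μ : ℂ, f w = μ • w} with hS
  set W : Submodule ℂ V := Submodule.span ℂ S with hW
  have hSsub : S ⊆ W := Submodule.subset_span
  -- S is stable under e j and c
  have hgenE : ∀ j : ℤ, j ≠ 0 → ∀ w ∈ S, ⁅E.e j, w⁆ ∈ S := by
    intro j hj w hw
    obtain ⟨μ, hμ⟩ := hw
    obtain ⟨l, hl⟩ := hcomm j hj
    exact ⟨μ + l, by rw [hl, hμ, lie_smul, add_smul]⟩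
  -- W is a Lie submodule
  have hlie : ∀ (x : H) (w : V), w ∈ W → ⁅x, w⁆ ∈ W := by
    intro x w hw
    induction hw using Submodule.span_induction with
    | mem w hwS =>
      have hx : x ∈ Submodule.span ℂ (Set.range E.basis) := by
        rw [E.basis.span_eq]; trivial
      induction hx using Submodule.span_induction with
      | mem y hy =>
        obtain ⟨o, rfl⟩ := hy
        rcases o with _ | ⟨j, hj⟩
        · rw [E.basis_none, hc]
          exact W.smul_mem a (hSsub hwS)
        · rw [E.basis_some]
          exact hSsub (hgenE j hj w hwS)
      | zero => rw [zero_lie]; exact W.zero_mem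
      | add y z _ _ hy hz => rw [add_lie]; exact W.add_mem hy hz
      | smul r y _ hy => rw [smul_lie]; exact W.smul_mem r hy
    | zero => rw [lie_zero]; exact W.zero_mem
    | add y z _ _ hy hz => rw [lie_add]; exact W.add_mem hy hz
    | smul r y _ hy => rw [lie_smul]; exact W.smul_mem r hy
  set N : LieSubmodule ℂ H V := { W with lie_mem := fun {x w} hw => hlie x w hw } with hN
  have hv0W : v0 ∈ W := hSsub (hdi i hi)
  have hNtop : N = ⊤ := by
    rcases hirr N with hbot | htop
    · exfalso
      apply hv0
      have : v0 ∈ N := hv0W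
      rw [hbot] at this
      exact (LieSubmodule.mem_bot _).mp this
    · exact htop
  have hWtop : ∀ u : V, u ∈ W := by
    intro u
    have : u ∈ N := by rw [hNtop]; trivial
    exact this
  -- extract finitely many eigenvectors spanning v
  obtain ⟨t, hts, hvt⟩ := Submodule.mem_span_finite_of_mem_span (hWtop v)
  -- span t is f-invariant
  have hfinv : ∀ u ∈ Submodule.span ℂ (t : Set V), f u ∈ Submodule.span ℂ (t : Set V) := by
    intro u hu
    induction hu using Submodule.span_induction with
    | mem w hwt =>
      obtain ⟨μ, hμ⟩ := hts hwt
      rw [hμ]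
      exact Submodule.smul_mem _ μ (Submodule.subset_span hwt)
    | zero => simp only [hf, lie_zero]; exact Submodule.zero_mem _
    | add y z _ _ hy hz =>
      simp only [hf, lie_add] at *
      exact Submodule.add_mem _ hy hz
    | smul r y _ hy =>
      simp only [hf, lie_smul] at *
      exact Submodule.smul_mem _ r hy
  have horbit : ∀ k : ℕ, f^[k] v ∈ Submodule.span ℂ (t : Set V) := by
    intro k
    induction k with
    | zero => simpa using hvt
    | succ n ih => rw [Function.iterate_succ_apply']; exact hfinv _ ih
  have hle : Submodule.span ℂ (Set.range fun k : ℕ => f^[k] v) ≤ Submodule.span ℂ (t : Set V) := by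
    rw [Submodule.span_le]
    rintro _ ⟨k, rfl⟩
    exact horbit k
  have : FiniteDimensional ℂ (Submodule.span ℂ (t : Set V)) := FiniteDimensional.span_finset ℂ t
  exact Submodule.finiteDimensional_of_le hle
end

section
/- Let V be a ℤ-graded irreducible diagonal H-module of level a ≠ 0. Then V admits a ℤ^∞-gradation: there exists a family of subspaces V_{k̄} of V, indexed by the finitely supported functions k̄ : ℕ → ℤ, such that V is the (internal) direct sum of the V_{k̄}, each V_{k̄} is at most one-dimensional, and for every j ∈ ℕ and every such k̄ one has e_j·V_{k̄} ⊆ V_{k̄+ζ_j} and e_{−j}·V_{k̄} ⊆ V_{k̄−ζ_j}, where ζ_j : ℕ → ℤ is given by ζ_j(j) = 1 and ζ_j(i) = 0 for i ≠ j. -/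
/-! ### Auxiliary single-mode (Weyl algebra) computations -/

section Single
variable {V : Type} [AddCommGroup V] [Module ℂ V] (p m : Module.End ℂ V) (a μ : ℂ) (v : V)
  (hpm : ∀ w : V, p (m w) = m (p w) + a • w) (hv : p (m v) = μ • v)

include hpm hv in
lemma stmt8_Pm : ∀ k : ℕ, p ((m ^ (k+1)) v) = (μ + k * a) • (m ^ k) v := by
  intro k
  induction k with
  | zero => simpa using hv
  | succ k ih =>
    have h1 : (m ^ (k+2)) v = m ((m ^ (k+1)) v) := by rw [pow_succ' m (k+1)]; rfl
    have h2 : (m ^ (k+1)) v = m ((m^k) v) := by rw [pow_succ' m k]; rfl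
    rw [h1, hpm, ih, map_smul, ← h2, ← add_smul]
    congr 1
    push_cast
    ring

include hpm hv in
lemma stmt8_Mp : ∀ k : ℕ, m ((p ^ (k+1)) v) = (μ - (k+1) * a) • (p ^ k) v := by
  intro k
  induction k with
  | zero =>
    have h1 : (p ^ 1) v = p v := by rw [pow_one]
    have h0 := hpm v
    rw [hv] at h0
    have h2 : m (p v) = μ • v - a • v := by rw [eq_sub_iff_add_eq, ← h0]
    simpa [h1, sub_smul] using h2
  | succ k ih =>
    have h1 : (p ^ (k+1+1)) v = p ((p ^ (k+1)) v) := by rw [pow_succ' p (k+1)]; rfl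
    have h3 := hpm ((p ^ (k+1)) v)
    have h4 : m (p ((p ^ (k+1)) v)) = p (m ((p ^ (k+1)) v)) - a • (p ^ (k+1)) v := by
      rw [eq_sub_iff_add_eq, ← h3]
    have h2 : (p ^ (k+1)) v = p ((p^k) v) := by rw [pow_succ' p k]; rfl
    rw [h1, h4, ih, map_smul, ← h2, ← sub_smul]
    congr 1
    push_cast
    ring

end Single

/-- `stmt8_G p m n = p^n` for `n ≥ 0`, `m^(-n)` for `n ≤ 0`. -/
noncomputable def stmt8_G {V : Type} [AddCommGroup V] [Module ℂ V]
    (p m : Module.End ℂ V) (n : ℤ) : Module.End ℂ V := p ^ n.toNat * m ^ (-n).toNat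

section Single
variable {V : Type} [AddCommGroup V] [Module ℂ V] (p m : Module.End ℂ V) (a μ : ℂ) (v : V)
  (hpm : ∀ w : V, p (m w) = m (p w) + a • w) (hv : p (m v) = μ • v)

lemma stmt8_G_nonneg {n : ℤ} (h : 0 ≤ n) : stmt8_G p m n = p ^ n.toNat := by
  have : (-n).toNat = 0 := by omega
  simp [stmt8_G, this]

lemma stmt8_G_nonpos {n : ℤ} (h : n ≤ 0) : stmt8_G p m n = m ^ (-n).toNat := by
  have : n.toNat = 0 := by omega
  simp [stmt8_G, this]

include hpm hv in
lemma stmt8_G_raise : ∀ n : ℤ, ∃ c : ℂ, p (stmt8_G p m n v) = c • stmt8_G p m (n+1) v := by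
  intro n
  rcases le_or_gt 0 n with h | h
  · refine ⟨1, ?_⟩
    rw [stmt8_G_nonneg p m h, stmt8_G_nonneg p m (by omega)]
    have h1 : (n+1).toNat = n.toNat + 1 := by omega
    rw [h1, one_smul, pow_succ' p n.toNat]
    rfl
  · set k : ℕ := (-(n+1)).toNat with hk
    refine ⟨μ + k * a, ?_⟩
    rw [stmt8_G_nonpos p m (by omega), stmt8_G_nonpos p m (by omega)]
    have h1 : (-n).toNat = k + 1 := by omega
    have h2 : (-(n+1)).toNat = k := rfl
    rw [h1, h2, stmt8_Pm p m a μ v hpm hv k]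

include hpm hv in
lemma stmt8_G_lower : ∀ n : ℤ, ∃ c : ℂ, m (stmt8_G p m n v) = c • stmt8_G p m (n-1) v := by
  intro n
  rcases le_or_gt n 0 with h | h
  · refine ⟨1, ?_⟩
    rw [stmt8_G_nonpos p m h, stmt8_G_nonpos p m (by omega)]
    have h1 : (-(n-1)).toNat = (-n).toNat + 1 := by omega
    rw [h1, one_smul, pow_succ' m (-n).toNat]
    rfl
  · set k : ℕ := (n-1).toNat with hk
    refine ⟨μ - (k+1) * a, ?_⟩
    rw [stmt8_G_nonneg p m (by omega), stmt8_G_nonneg p m (by omega)]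
    have h1 : n.toNat = k + 1 := by omega
    rw [h1, stmt8_Mp p m a μ v hpm hv k]

include hpm hv in
lemma stmt8_G_eigen : ∀ n : ℤ, p (m (stmt8_G p m n v)) = (μ - n * a) • stmt8_G p m n v := by
  intro n
  rcases le_or_gt n 0 with h | h
  · have h1 : m (stmt8_G p m n v) = stmt8_G p m (n-1) v := by
      rw [stmt8_G_nonpos p m h, stmt8_G_nonpos p m (by omega : n - 1 ≤ 0)]
      have h2 : (-(n-1)).toNat = (-n).toNat + 1 := by omega
      rw [h2, pow_succ' m (-n).toNat]
      rfl
    rw [h1, stmt8_G_nonpos p m (by omega : n - 1 ≤ 0), stmt8_G_nonpos p m h]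
    have h2 : (-(n-1)).toNat = (-n).toNat + 1 := by omega
    rw [h2, stmt8_Pm p m a μ v hpm hv (-n).toNat]
    congr 1
    have h3 : ((-n).toNat : ℤ) = -n := by omega
    have h4 : ((-n).toNat : ℂ) = ((-n : ℤ) : ℂ) := by
      exact_mod_cast congrArg (Int.cast (R := ℂ)) h3
    rw [h4]
    push_cast
    ring
  · set k : ℕ := (n-1).toNat with hk
    have h1 : n.toNat = k + 1 := by omega
    have h2 : m (stmt8_G p m n v) = (μ - (k+1) * a) • stmt8_G p m (n-1) v := by
      rw [stmt8_G_nonneg p m (by omega : 0 ≤ n), stmt8_G_nonneg p m (by omega : 0 ≤ n - 1), h1]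
      have : (n-1).toNat = k := rfl
      rw [this, stmt8_Mp p m a μ v hpm hv k]
    rw [h2, map_smul]
    have h3 : p (stmt8_G p m (n-1) v) = stmt8_G p m n v := by
      rw [stmt8_G_nonneg p m (by omega : 0 ≤ n - 1), stmt8_G_nonneg p m (by omega : 0 ≤ n)]
      have h4 : (n-1).toNat = k := rfl
      rw [h4, h1, pow_succ' p k]
      rfl
    rw [h3]
    congr 1
    have h5 : ((k : ℂ) + 1) = ((n : ℤ) : ℂ) := by
      have : (k : ℤ) + 1 = n := by omega
      exact_mod_cast congrArg (Int.cast (R := ℂ)) this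
    rw [h5]

end Single

/-! ### Operators attached to the Heisenberg algebra -/

section Heis
variable {H : Type} [LieRing H] [LieAlgebra ℂ H] (E : HeisenbergH H)
variable (V : Type) [AddCommGroup V] [Module ℂ V] [LieRingModule H V] [LieModule ℂ H V]

noncomputable def stmt8_Aop (i : ℤ) : Module.End ℂ V := LieModule.toEnd ℂ H V (E.e i)

lemma stmt8_Aop_apply (i : ℤ) (w : V) : stmt8_Aop E V i w = ⁅E.e i, w⁆ := rfl

lemma stmt8_commute_Aop {i i' : ℤ} (h : ⁅E.e i, E.e i'⁆ = 0) :
    Commute (stmt8_Aop E V i) (stmt8_Aop E V i') := by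
  have h2 : ⁅stmt8_Aop E V i, stmt8_Aop E V i'⁆ = (0 : Module.End ℂ V) := by
    rw [Ring.lie_def]
    ext w
    have := lie_lie (E.e i) (E.e i') w
    rw [h, zero_lie] at this
    simp only [LinearMap.sub_apply, Module.End.mul_apply, stmt8_Aop, LieModule.toEnd_apply_apply, LinearMap.zero_apply]
    exact this.symm
  rw [Ring.lie_def] at h2
  exact sub_eq_zero.mp h2

lemma stmt8_commute_Aop_pm {j j' : ℕ+} (hjj : j ≠ j') {i i' : ℤ}
    (hi : i = (j:ℤ) ∨ i = -(j:ℤ)) (hi' : i' = (j':ℤ) ∨ i' = -(j':ℤ)) :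
    Commute (stmt8_Aop E V i) (stmt8_Aop E V i') := by
  have hne : (j:ℤ) ≠ (j':ℤ) := by
    have : (j:ℕ) ≠ (j':ℕ) := fun h => hjj (PNat.coe_injective h)
    exact_mod_cast this
  have hj0 : (0:ℤ) < (j:ℤ) := by exact_mod_cast j.pos
  have hj0' : (0:ℤ) < (j':ℤ) := by exact_mod_cast j'.pos
  apply stmt8_commute_Aop
  apply E.lie_e_e_other <;> rcases hi with rfl | rfl <;> rcases hi' with rfl | rfl <;> omega

noncomputable def stmt8_Fop (j : ℕ+) (n : ℤ) : Module.End ℂ V :=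
  stmt8_G (stmt8_Aop E V (j:ℤ)) (stmt8_Aop E V (-(j:ℤ))) n

lemma stmt8_Fop_zero (j : ℕ+) : stmt8_Fop E V j 0 = 1 := by
  simp [stmt8_Fop, stmt8_G]

lemma stmt8_commute_Aop_Fop {j j' : ℕ+} (hjj : j ≠ j') {i : ℤ}
    (hi : i = (j:ℤ) ∨ i = -(j:ℤ)) (n : ℤ) :
    Commute (stmt8_Aop E V i) (stmt8_Fop E V j' n) := by
  have c1 := stmt8_commute_Aop_pm E V hjj hi (Or.inl rfl : ((j':ℤ)) = (j':ℤ) ∨ _)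
  have c2 := stmt8_commute_Aop_pm E V hjj hi (Or.inr rfl : _ ∨ (-(j':ℤ)) = -(j':ℤ))
  exact (c1.pow_right _).mul_right (c2.pow_right _)

lemma stmt8_commute_Fop {j j' : ℕ+} (hjj : j ≠ j') (n n' : ℤ) :
    Commute (stmt8_Fop E V j n) (stmt8_Fop E V j' n') := by
  exact ((stmt8_commute_Aop_Fop E V hjj (Or.inl rfl) n').pow_left _).mul_left
    ((stmt8_commute_Aop_Fop E V hjj (Or.inr rfl) n').pow_left _)

lemma stmt8_pairwise_comm (k : ℕ+ →₀ ℤ) (s : Finset ℕ+) :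
    (↑s : Set ℕ+).Pairwise (Function.onFun Commute (fun j => stmt8_Fop E V j (k j))) :=
  fun _ _ _ _ h => stmt8_commute_Fop E V h _ _

noncomputable def stmt8_vAux (v : V) (s : Finset ℕ+) (k : ℕ+ →₀ ℤ) : V :=
  (s.noncommProd (fun j => stmt8_Fop E V j (k j)) (stmt8_pairwise_comm E V k s)) v

noncomputable def stmt8_vK (v : V) (k : ℕ+ →₀ ℤ) : V := stmt8_vAux E V v k.support k

lemma stmt8_vAux_superset (v : V) {s : Finset ℕ+} {k : ℕ+ →₀ ℤ} (hs : k.support ⊆ s) :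
    stmt8_vAux E V v s k = stmt8_vK E V v k := by
  classical
  unfold stmt8_vK stmt8_vAux
  congr 1
  have hu : k.support ∪ (s \ k.support) = s := Finset.union_sdiff_of_subset hs
  have h2 : (s \ k.support).noncommProd (fun j => stmt8_Fop E V j (k j))
      (stmt8_pairwise_comm E V k _) = 1 := by
    rw [Finset.noncommProd_eq_pow_card _ _ _ 1, one_pow]
    intro x hx
    have : k x = 0 := by
      have := (Finset.mem_sdiff.mp hx).2
      simpa [Finsupp.mem_support_iff] using this
    rw [this, stmt8_Fop_zero]
  calc s.noncommProd (fun j => stmt8_Fop E V j (k j)) (stmt8_pairwise_comm E V k s)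
      = (k.support ∪ (s \ k.support)).noncommProd (fun j => stmt8_Fop E V j (k j))
        (stmt8_pairwise_comm E V k _) := by
        rw [Finset.noncommProd_congr hu.symm (fun _ _ => rfl)]
    _ = _ := by
        rw [Finset.noncommProd_union_of_disjoint (Finset.disjoint_sdiff) _
          (stmt8_pairwise_comm E V k _), h2, mul_one]

lemma stmt8_key_step (v : V) (j : ℕ+) {s : Finset ℕ+} (hj : j ∈ s)
    (k k' : ℕ+ →₀ ℤ) (hkk' : ∀ j' ∈ s, j' ≠ j → k j' = k' j')
    (T : Module.End ℂ V) (hT : ∀ j' : ℕ+, j' ≠ j → ∀ n : ℤ, Commute T (stmt8_Fop E V j' n))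
    (c : ℂ) (hloc : T (stmt8_Fop E V j (k j) v) = c • stmt8_Fop E V j (k' j) v) :
    T (stmt8_vAux E V v s k) = c • stmt8_vAux E V v s k' := by
  classical
  have hR : ∀ kk : ℕ+ →₀ ℤ, Commute T
      ((s.erase j).noncommProd (fun j' => stmt8_Fop E V j' (kk j'))
        (stmt8_pairwise_comm E V kk _)) := by
    intro kk
    apply Finset.noncommProd_commute
    intro x hx
    exact hT x (Finset.ne_of_mem_erase hx) _
  have hprod : ∀ kk : ℕ+ →₀ ℤ, stmt8_vAux E V v s kk
      = ((s.erase j).noncommProd (fun j' => stmt8_Fop E V j' (kk j'))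
          (stmt8_pairwise_comm E V kk _)) (stmt8_Fop E V j (kk j) v) := by
    intro kk
    unfold stmt8_vAux
    rw [← Finset.noncommProd_erase_mul s hj (fun j' => stmt8_Fop E V j' (kk j'))
      (stmt8_pairwise_comm E V kk s) (stmt8_pairwise_comm E V kk _)]
    rfl
  have hRR : (s.erase j).noncommProd (fun j' => stmt8_Fop E V j' (k j'))
        (stmt8_pairwise_comm E V k _)
      = (s.erase j).noncommProd (fun j' => stmt8_Fop E V j' (k' j'))
        (stmt8_pairwise_comm E V k' _) := by
    apply Finset.noncommProd_congr rfl
    intro x hx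
    rw [hkk' x (Finset.mem_of_mem_erase hx) (Finset.ne_of_mem_erase hx)]
  rw [hprod k, hprod k', ← hRR]
  set R := (s.erase j).noncommProd (fun j' => stmt8_Fop E V j' (k j'))
    (stmt8_pairwise_comm E V k _) with hRdef
  have h1 : T (R (stmt8_Fop E V j (k j) v)) = R (T (stmt8_Fop E V j (k j) v)) := by
    have hTR := (hR k).eq
    calc T (R (stmt8_Fop E V j (k j) v)) = (T * R) (stmt8_Fop E V j (k j) v) := rfl
      _ = (R * T) (stmt8_Fop E V j (k j) v) := by rw [← hTR]
      _ = R (T (stmt8_Fop E V j (k j) v)) := rfl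
  rw [h1, hloc, map_smul]

end Heis

theorem stmt_8 (H : Type) [LieRing H] [LieAlgebra ℂ H] (E : HeisenbergH H)
    (V : Type) [AddCommGroup V] [Module ℂ V] [LieRingModule H V] [LieModule ℂ H V]
    (hnt : Nontrivial V)
    (hirr : ∀ N : LieSubmodule ℂ H V, N = ⊥ ∨ N = ⊤)
    (a : ℂ) (ha : a ≠ 0) (hc : ∀ v : V, ⁅E.c, v⁆ = a • v)
    (g : ℤ → Submodule ℂ V) (hg_indep : iSupIndep g) (hg_top : ⨆ n, g n = ⊤)
    (hg_act : ∀ i : ℤ, i ≠ 0 → ∀ n : ℤ, ∀ v ∈ g n, ⁅E.e i, v⁆ ∈ g (i + n))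
    (hdiag : ∃ v : V, v ≠ 0 ∧ ∀ i : ℤ, i ≠ 0 → ∃ μ : ℂ, ⁅E.e i, ⁅E.e (-i), v⁆⁆ = μ • v) :
    ∃ W : (ℕ+ →₀ ℤ) → Submodule ℂ V,
      iSupIndep W ∧ (⨆ k, W k = ⊤) ∧
      (∀ k : ℕ+ →₀ ℤ, Module.rank ℂ (W k) ≤ 1) ∧
      (∀ j : ℕ+, ∀ k : ℕ+ →₀ ℤ, ∀ w ∈ W k,
        ⁅E.e (j : ℤ), w⁆ ∈ W (k + Finsupp.single j 1) ∧
        ⁅E.e (-(j : ℤ)), w⁆ ∈ W (k - Finsupp.single j 1)) := by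
  classical
  obtain ⟨v, hv0, hdg⟩ := hdiag
  have hjpos : ∀ j : ℕ+, (0:ℤ) < (j:ℤ) := fun j => by exact_mod_cast j.pos
  have hds : ∀ j : ℕ+, ∃ μ : ℂ,
      stmt8_Aop E V (j:ℤ) (stmt8_Aop E V (-(j:ℤ)) v) = μ • v := by
    intro j
    obtain ⟨μ, hμ⟩ := hdg (j:ℤ) (by have := hjpos j; omega)
    exact ⟨μ, hμ⟩
  choose μ hμ using hds
  have hpm : ∀ (j : ℕ+) (w : V),
      stmt8_Aop E V (j:ℤ) (stmt8_Aop E V (-(j:ℤ)) w)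
        = stmt8_Aop E V (-(j:ℤ)) (stmt8_Aop E V (j:ℤ) w) + a • w := by
    intro j w
    have h1 := lie_lie (E.e (j:ℤ)) (E.e (-(j:ℤ))) w
    rw [E.lie_e_e_same (j:ℤ) (hjpos j), hc] at h1
    rw [eq_sub_iff_add_eq] at h1
    show (⁅E.e (j:ℤ), ⁅E.e (-(j:ℤ)), w⁆⁆ : V) = ⁅E.e (-(j:ℤ)), ⁅E.e (j:ℤ), w⁆⁆ + a • w
    rw [← h1, add_comm]
  have L1 : ∀ (j : ℕ+) (n : ℤ), ∃ c : ℂ,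
      stmt8_Aop E V (j:ℤ) (stmt8_Fop E V j n v) = c • stmt8_Fop E V j (n+1) v :=
    fun j n => stmt8_G_raise _ _ a (μ j) v (hpm j) (hμ j) n
  have L2 : ∀ (j : ℕ+) (n : ℤ), ∃ c : ℂ,
      stmt8_Aop E V (-(j:ℤ)) (stmt8_Fop E V j n v) = c • stmt8_Fop E V j (n-1) v :=
    fun j n => stmt8_G_lower _ _ a (μ j) v (hpm j) (hμ j) n
  have L3 : ∀ (j : ℕ+) (n : ℤ),
      stmt8_Aop E V (j:ℤ) (stmt8_Aop E V (-(j:ℤ)) (stmt8_Fop E V j n v))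
        = (μ j - n * a) • stmt8_Fop E V j n v :=
    fun j n => stmt8_G_eigen _ _ a (μ j) v (hpm j) (hμ j) n
  -- supports
  have hsub : ∀ (j : ℕ+) (k : ℕ+ →₀ ℤ),
      (k + Finsupp.single j 1).support ⊆ insert j k.support := by
    intro j k x hx
    rcases eq_or_ne x j with rfl | hxj
    · exact Finset.mem_insert_self _ _
    · apply Finset.mem_insert_of_mem
      rw [Finsupp.mem_support_iff] at hx ⊢
      intro h0
      apply hx
      rw [Finsupp.add_apply, Finsupp.single_apply, if_neg (fun h => hxj h.symm), h0, add_zero]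
  have hsub' : ∀ (j : ℕ+) (k : ℕ+ →₀ ℤ),
      (k - Finsupp.single j 1).support ⊆ insert j k.support := by
    intro j k x hx
    rcases eq_or_ne x j with rfl | hxj
    · exact Finset.mem_insert_self _ _
    · apply Finset.mem_insert_of_mem
      rw [Finsupp.mem_support_iff] at hx ⊢
      intro h0
      apply hx
      rw [Finsupp.sub_apply, Finsupp.single_apply, if_neg (fun h => hxj h.symm), h0, sub_zero]
  have hagree : ∀ (j : ℕ+) (k : ℕ+ →₀ ℤ) (k' : ℕ+ →₀ ℤ),
      (∀ x, x ≠ j → k' x = k x) → ∀ j' ∈ insert j k.support, j' ≠ j → k j' = k' j' :=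
    fun j k k' h j' _ hne => (h j' hne).symm
  have hTcomm : ∀ j : ℕ+, ∀ j' : ℕ+, j' ≠ j → ∀ n : ℤ,
      Commute (stmt8_Aop E V (j:ℤ) * stmt8_Aop E V (-(j:ℤ))) (stmt8_Fop E V j' n) :=
    fun j j' hne n => ((stmt8_commute_Aop_Fop E V hne.symm (Or.inl rfl) n).mul_left
      (stmt8_commute_Aop_Fop E V hne.symm (Or.inr rfl) n))
  -- the three main action facts about the vectors v_k
  have hplus : ∀ (j : ℕ+) (k : ℕ+ →₀ ℤ), ∃ c : ℂ,
      stmt8_Aop E V (j:ℤ) (stmt8_vK E V v k) = c • stmt8_vK E V v (k + Finsupp.single j 1) := by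
    intro j k
    obtain ⟨c, hcl⟩ := L1 j (k j)
    refine ⟨c, ?_⟩
    rw [← stmt8_vAux_superset E V v (Finset.subset_insert j k.support),
      ← stmt8_vAux_superset E V v (hsub j k)]
    apply stmt8_key_step E V v j (Finset.mem_insert_self j k.support) k _
      (hagree j k _ (fun x hx => by
        rw [Finsupp.add_apply, Finsupp.single_apply, if_neg (fun h => hx h.symm), add_zero]))
      _ (fun j' hne n => stmt8_commute_Aop_Fop E V hne.symm (Or.inl rfl) n) c
    have hkj : ((k + Finsupp.single j 1 : ℕ+ →₀ ℤ)) j = k j + 1 := by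
      rw [Finsupp.add_apply, Finsupp.single_apply, if_pos rfl]
    rw [hkj]
    exact hcl
  have hminus : ∀ (j : ℕ+) (k : ℕ+ →₀ ℤ), ∃ c : ℂ,
      stmt8_Aop E V (-(j:ℤ)) (stmt8_vK E V v k)
        = c • stmt8_vK E V v (k - Finsupp.single j 1) := by
    intro j k
    obtain ⟨c, hcl⟩ := L2 j (k j)
    refine ⟨c, ?_⟩
    rw [← stmt8_vAux_superset E V v (Finset.subset_insert j k.support),
      ← stmt8_vAux_superset E V v (hsub' j k)]
    apply stmt8_key_step E V v j (Finset.mem_insert_self j k.support) k _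
      (hagree j k _ (fun x hx => by
        rw [Finsupp.sub_apply, Finsupp.single_apply, if_neg (fun h => hx h.symm), sub_zero]))
      _ (fun j' hne n => stmt8_commute_Aop_Fop E V hne.symm (Or.inr rfl) n) c
    have hkj : ((k - Finsupp.single j 1 : ℕ+ →₀ ℤ)) j = k j - 1 := by
      rw [Finsupp.sub_apply, Finsupp.single_apply, if_pos rfl]
    rw [hkj]
    exact hcl
  have heigen : ∀ (j : ℕ+) (k : ℕ+ →₀ ℤ),
      (stmt8_Aop E V (j:ℤ) * stmt8_Aop E V (-(j:ℤ))) (stmt8_vK E V v k)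
        = (μ j - (k j) * a) • stmt8_vK E V v k := by
    intro j k
    rw [← stmt8_vAux_superset E V v (Finset.subset_insert j k.support)]
    apply stmt8_key_step E V v j (Finset.mem_insert_self j k.support) k k
      (fun _ _ _ => rfl) _ (hTcomm j) _
    show stmt8_Aop E V (j:ℤ) (stmt8_Aop E V (-(j:ℤ)) (stmt8_Fop E V j (k j) v)) = _
    exact L3 j (k j)
  have hvK0 : stmt8_vK E V v 0 = v := by
    unfold stmt8_vK stmt8_vAux
    rw [Finsupp.support_zero, Finset.noncommProd_empty]
    rfl
  -- the family of submodules
  refine ⟨fun k => Submodule.span ℂ {stmt8_vK E V v k}, ?_, ?_, ?_, ?_⟩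
  · -- independence
    have hcommf : ∀ i j : ℕ+,
        Commute (stmt8_Aop E V (i:ℤ) * stmt8_Aop E V (-(i:ℤ)))
          (stmt8_Aop E V (j:ℤ) * stmt8_Aop E V (-(j:ℤ))) := by
      intro i j
      rcases eq_or_ne i j with rfl | hne
      · exact Commute.refl _
      · have c11 := stmt8_commute_Aop_pm E V hne (Or.inl rfl) (Or.inl rfl)
        have c12 := stmt8_commute_Aop_pm E V hne (Or.inl rfl) (Or.inr rfl)
        have c21 := stmt8_commute_Aop_pm E V hne (Or.inr rfl) (Or.inl rfl)
        have c22 := stmt8_commute_Aop_pm E V hne (Or.inr rfl) (Or.inr rfl)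
        exact (c11.mul_right c12).mul_left (c21.mul_right c22)
    have indep0 := Module.End.independent_iInf_maxGenEigenspace_of_forall_mapsTo
      (fun j : ℕ+ => stmt8_Aop E V (j:ℤ) * stmt8_Aop E V (-(j:ℤ)))
      (fun i j φ => Module.End.mapsTo_maxGenEigenspace_of_comm (hcommf j i) φ)
    have hχ : Function.Injective (fun (k : ℕ+ →₀ ℤ) (j : ℕ+) => μ j - (k j) * a) := by
      intro k k' h
      ext j
      have h1 := congrFun h j
      simp only at h1
      have h2 : ((k j : ℂ)) * a = (k' j : ℂ) * a := by linear_combination -h1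
      have h3 : ((k j : ℂ)) = (k' j : ℂ) := mul_right_cancel₀ ha h2
      exact_mod_cast h3
    refine (indep0.comp hχ).mono ?_
    intro k
    rw [Submodule.span_le, Set.singleton_subset_iff]
    simp only [Function.comp_apply, SetLike.mem_coe, Submodule.mem_iInf]
    intro j
    rw [Module.End.mem_maxGenEigenspace]
    refine ⟨1, ?_⟩
    rw [pow_one]
    have hei := heigen j k
    rw [LinearMap.sub_apply, LinearMap.smul_apply, Module.End.one_apply, hei, sub_self]
  · -- the supremum is everything
    have hUspan : (⨆ k : ℕ+ →₀ ℤ, Submodule.span ℂ {stmt8_vK E V v k})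
        = Submodule.span ℂ (Set.range (stmt8_vK E V v)) := by
      rw [← Set.iUnion_singleton_eq_range, Submodule.span_iUnion]
    have hmem : ∀ k : ℕ+ →₀ ℤ, stmt8_vK E V v k
        ∈ (⨆ k : ℕ+ →₀ ℤ, Submodule.span ℂ {stmt8_vK E V v k} : Submodule ℂ V) :=
      fun k => (le_iSup (fun k => Submodule.span ℂ {stmt8_vK E V v k}) k)
        (Submodule.mem_span_singleton_self _)
    have hgen : ∀ (x : H) (k : ℕ+ →₀ ℤ), ⁅x, stmt8_vK E V v k⁆
        ∈ (⨆ k : ℕ+ →₀ ℤ, Submodule.span ℂ {stmt8_vK E V v k} : Submodule ℂ V) := by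
      intro x k
      set U := (⨆ k : ℕ+ →₀ ℤ, Submodule.span ℂ {stmt8_vK E V v k} : Submodule ℂ V) with hU
      let ψ : H →ₗ[ℂ] V :=
        { toFun := fun y => ⁅y, stmt8_vK E V v k⁆
          map_add' := fun y z => add_lie y z _
          map_smul' := fun t y => smul_lie t y _ }
      have hspan : Submodule.span ℂ (Set.range E.basis) ≤ Submodule.comap ψ U := by
        rw [Submodule.span_le]
        rintro _ ⟨b, rfl⟩
        simp only [SetLike.mem_coe, Submodule.mem_comap]
        match b with
        | none =>
          have : ψ (E.basis none) = a • stmt8_vK E V v k := by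
            show ⁅E.basis none, stmt8_vK E V v k⁆ = _
            rw [E.basis_none]
            exact hc _
          rw [this]
          exact Submodule.smul_mem _ _ (hmem k)
        | some ⟨i, hi⟩ =>
          have hψ : ψ (E.basis (some ⟨i, hi⟩)) = ⁅E.e i, stmt8_vK E V v k⁆ := by
            show ⁅E.basis (some ⟨i, hi⟩), stmt8_vK E V v k⁆ = _
            rw [E.basis_some]
          rw [hψ]
          rcases hi.lt_or_gt with hneg | hpos
          · set j : ℕ+ := ⟨(-i).toNat, by omega⟩ with hj
            have hji : -((j:ℕ):ℤ) = i := by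
              have : ((j:ℕ):ℤ) = -i := by
                rw [show (j:ℕ) = (-i).toNat from rfl]
                omega
              omega
            obtain ⟨c, hcl⟩ := hminus j k
            have : (⁅E.e i, stmt8_vK E V v k⁆ : V)
                = c • stmt8_vK E V v (k - Finsupp.single j 1) := by
              rw [← hji] at *
              exact hcl
            rw [this]
            exact Submodule.smul_mem _ _ (hmem _)
          · set j : ℕ+ := ⟨i.toNat, by omega⟩ with hj
            have hji : ((j:ℕ):ℤ) = i := by
              rw [show (j:ℕ) = i.toNat from rfl]
              omega
            obtain ⟨c, hcl⟩ := hplus j k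
            have : (⁅E.e i, stmt8_vK E V v k⁆ : V)
                = c • stmt8_vK E V v (k + Finsupp.single j 1) := by
              rw [← hji] at *
              exact hcl
            rw [this]
            exact Submodule.smul_mem _ _ (hmem _)
      have hx : x ∈ Submodule.span ℂ (Set.range E.basis) := by
        rw [E.basis.span_eq]
        trivial
      exact Submodule.mem_comap.mp (hspan hx)
    set U := (⨆ k : ℕ+ →₀ ℤ, Submodule.span ℂ {stmt8_vK E V v k} : Submodule ℂ V) with hU
    let N : LieSubmodule ℂ H V :=
      { U with
        lie_mem := by
          intro x w hw
          have hw' : w ∈ Submodule.span ℂ (Set.range (stmt8_vK E V v)) := by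
            rw [← hUspan]
            exact hw
          show ⁅x, w⁆ ∈ U
          clear hw
          induction hw' using Submodule.span_induction with
          | mem w hwmem =>
            obtain ⟨k, rfl⟩ := hwmem
            exact hgen x k
          | zero => rw [lie_zero]; exact Submodule.zero_mem U
          | add y z hy hz hy' hz' => rw [lie_add]; exact Submodule.add_mem U hy' hz'
          | smul t y hy hy' => rw [lie_smul]; exact Submodule.smul_mem U t hy' }
    rcases hirr N with hbot | htop
    · exfalso
      apply hv0
      have hvN : v ∈ N := by
        show v ∈ U
        rw [← hvK0]
        exact hmem 0
      rw [hbot] at hvN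
      simpa using hvN
    · have hcoe := congrArg (fun N : LieSubmodule ℂ H V => (N : Submodule ℂ V)) htop
      exact hcoe.trans (LieSubmodule.top_toSubmodule)
  · -- rank at most one
    intro k
    exact (rank_span_le _).trans_eq (Cardinal.mk_singleton _)
  · -- compatibility with the action
    intro j k w hw
    obtain ⟨t, rfl⟩ := Submodule.mem_span_singleton.mp hw
    constructor
    · obtain ⟨c, hcl⟩ := hplus j k
      have hb : (⁅E.e (j:ℤ), stmt8_vK E V v k⁆ : V)
          = c • stmt8_vK E V v (k + Finsupp.single j 1) := hcl
      rw [lie_smul, hb]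
      exact Submodule.smul_mem _ _ (Submodule.smul_mem _ _ (Submodule.mem_span_singleton_self _))
    · obtain ⟨c, hcl⟩ := hminus j k
      have hb : (⁅E.e (-(j:ℤ)), stmt8_vK E V v k⁆ : V)
          = c • stmt8_vK E V v (k - Finsupp.single j 1) := hcl
      rw [lie_smul, hb]
      exact Submodule.smul_mem _ _ (Submodule.smul_mem _ _ (Submodule.mem_span_singleton_self _))
end

section
/- Let m be a maximal ideal of D such that t_i ∉ τ(m) for every 1 ≤ i ≤ n and every τ ∈ G (a nondegenerate orbit). Then the left A_n(a)-module A_n(a)/A_n(a)·m is simple. -/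
/-!
STATEMENT 13: if m is a maximal ideal of D = ℂ[t₁,…,tₙ] lying on a nondegenerate orbit of
G (i.e. tᵢ ∉ τ(m) for all i and all τ ∈ G), then A_n(a)/A_n(a)·m is a simple left
A_n(a)-module.  The Weyl algebra A_n(a) is constructed as a quotient of the free algebra
by the defining relations; D is identified with the polynomial algebra MvPolynomial (Fin n) ℂ
mapping tᵢ = Xᵢ to ∂ᵢxᵢ; G is the subgroup of algebra automorphisms of D generated
by the shifts σᵢ : t_j ↦ t_j − δᵢⱼ·a.
-/

/-- Defining relations of the Weyl algebra `A_n(a)`: generators `inl i = xᵢ`, `inr i = ∂ᵢ`,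
relations `xᵢxⱼ = xⱼxᵢ`, `∂ᵢ∂ⱼ = ∂ⱼ∂ᵢ`, `∂ᵢxⱼ = xⱼ∂ᵢ + δᵢⱼ·a`. -/
inductive WeylRel (a : ℂ) (n : ℕ) :
    FreeAlgebra ℂ (Fin n ⊕ Fin n) → FreeAlgebra ℂ (Fin n ⊕ Fin n) → Prop
  | xx (i j : Fin n) : WeylRel a n
      (FreeAlgebra.ι ℂ (Sum.inl i) * FreeAlgebra.ι ℂ (Sum.inl j))
      (FreeAlgebra.ι ℂ (Sum.inl j) * FreeAlgebra.ι ℂ (Sum.inl i))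
  | dd (i j : Fin n) : WeylRel a n
      (FreeAlgebra.ι ℂ (Sum.inr i) * FreeAlgebra.ι ℂ (Sum.inr j))
      (FreeAlgebra.ι ℂ (Sum.inr j) * FreeAlgebra.ι ℂ (Sum.inr i))
  | dx (i j : Fin n) : WeylRel a n
      (FreeAlgebra.ι ℂ (Sum.inr i) * FreeAlgebra.ι ℂ (Sum.inl j))
      (FreeAlgebra.ι ℂ (Sum.inl j) * FreeAlgebra.ι ℂ (Sum.inr i) +
        (if i = j then algebraMap ℂ (FreeAlgebra ℂ (Fin n ⊕ Fin n)) a else 0))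

/-- The Weyl algebra `A_n(a)`. -/
def WeylAlg (a : ℂ) (n : ℕ) : Type := RingQuot (WeylRel a n)

instance (a : ℂ) (n : ℕ) : Ring (WeylAlg a n) :=
  inferInstanceAs (Ring (RingQuot (WeylRel a n)))

instance (a : ℂ) (n : ℕ) : Algebra ℂ (WeylAlg a n) :=
  inferInstanceAs (Algebra ℂ (RingQuot (WeylRel a n)))

/-- The generator `xᵢ` of `A_n(a)`. -/
def wx (a : ℂ) (n : ℕ) (i : Fin n) : WeylAlg a n :=
  RingQuot.mkAlgHom ℂ (WeylRel a n) (FreeAlgebra.ι ℂ (Sum.inl i))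

/-- The generator `∂ᵢ` of `A_n(a)`. -/
def wd (a : ℂ) (n : ℕ) (i : Fin n) : WeylAlg a n :=
  RingQuot.mkAlgHom ℂ (WeylRel a n) (FreeAlgebra.ι ℂ (Sum.inr i))

/-- The element `tᵢ = ∂ᵢxᵢ` of `A_n(a)`. -/
def wt (a : ℂ) (n : ℕ) (i : Fin n) : WeylAlg a n := wd a n i * wx a n i

/-- Evaluation of a polynomial `p ∈ D = ℂ[t₁,…,tₙ]` at the commuting elements
`tᵢ = ∂ᵢxᵢ` of `A_n(a)`; this realizes `D` inside `A_n(a)`. -/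
noncomputable def evalT (a : ℂ) (n : ℕ) (p : MvPolynomial (Fin n) ℂ) : WeylAlg a n :=
  p.support.sum fun mo =>
    MvPolynomial.coeff mo p • (((List.finRange n).map fun i => wt a n i ^ mo i).prod)

/-- The shift `σᵢ` as an algebra endomorphism of `D`: `t_j ↦ t_j − δᵢⱼ·a`. -/
noncomputable def shiftHom (n : ℕ) (a : ℂ) (i : Fin n) :
    MvPolynomial (Fin n) ℂ →ₐ[ℂ] MvPolynomial (Fin n) ℂ :=
  MvPolynomial.aeval (fun j => MvPolynomial.X j - if i = j then MvPolynomial.C a else 0)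

/-- The shift automorphism `σᵢ` of `D`: `t_j ↦ t_j − δᵢⱼ·a`. -/
noncomputable def shiftEquiv (n : ℕ) (a : ℂ) (i : Fin n) :
    MvPolynomial (Fin n) ℂ ≃ₐ[ℂ] MvPolynomial (Fin n) ℂ :=
  AlgEquiv.ofAlgHom (shiftHom n a i) (shiftHom n (-a) i)
    (by
      apply MvPolynomial.algHom_ext
      intro j
      by_cases h : i = j <;>
        simp [shiftHom, h, map_sub, MvPolynomial.aeval_X])
    (by
      apply MvPolynomial.algHom_ext
      intro j
      by_cases h : i = j <;>
        simp [shiftHom, h, map_sub, MvPolynomial.aeval_X])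

/-- The group `G` of automorphisms of `D` generated by the shifts `σ₁,…,σₙ`. -/
noncomputable def shiftGroup (n : ℕ) (a : ℂ) :
    Subgroup (MvPolynomial (Fin n) ℂ ≃ₐ[ℂ] MvPolynomial (Fin n) ℂ) :=
  Subgroup.closure (Set.range (shiftEquiv n a))

namespace Stmt13

variable {a : ℂ} {n : ℕ}

lemma mk_rel {x y : FreeAlgebra ℂ (Fin n ⊕ Fin n)} (h : WeylRel a n x y) :
    RingQuot.mkAlgHom ℂ (WeylRel a n) x = RingQuot.mkAlgHom ℂ (WeylRel a n) y :=
  RingQuot.mkAlgHom_rel ℂ h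

lemma wx_comm (i j : Fin n) : wx a n i * wx a n j = wx a n j * wx a n i := by
  have h := mk_rel (WeylRel.xx (a := a) (n := n) i j)
  rw [map_mul, map_mul] at h
  exact h

lemma wd_comm (i j : Fin n) : wd a n i * wd a n j = wd a n j * wd a n i := by
  have h := mk_rel (WeylRel.dd (a := a) (n := n) i j)
  rw [map_mul, map_mul] at h
  exact h

lemma wd_wx (i j : Fin n) :
    wd a n i * wx a n j
      = wx a n j * wd a n i + (if i = j then a • (1 : WeylAlg a n) else 0) := by
  have h := mk_rel (WeylRel.dx (a := a) (n := n) i j)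
  rw [map_mul, map_add, map_mul, apply_ite (RingQuot.mkAlgHom ℂ (WeylRel a n)), map_zero,
    AlgHom.commutes, Algebra.algebraMap_eq_smul_one] at h
  exact h

lemma wd_wx_self (i : Fin n) :
    wd a n i * wx a n i = wx a n i * wd a n i + a • (1 : WeylAlg a n) := by
  simpa using wd_wx i i

lemma wd_wx_ne {i j : Fin n} (h : i ≠ j) : wd a n i * wx a n j = wx a n j * wd a n i := by
  simpa [h] using wd_wx i j

lemma commute_xx (i j : Fin n) : Commute (wx a n i) (wx a n j) := wx_comm i j
lemma commute_dd (i j : Fin n) : Commute (wd a n i) (wd a n j) := wd_comm i j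
lemma commute_dx {i j : Fin n} (h : i ≠ j) : Commute (wd a n i) (wx a n j) := wd_wx_ne h
lemma commute_xd {i j : Fin n} (h : i ≠ j) : Commute (wx a n i) (wd a n j) :=
  (commute_dx (Ne.symm h)).symm

lemma commute_tx {i j : Fin n} (h : i ≠ j) : Commute (wt a n i) (wx a n j) :=
  (commute_dx h).mul_left (commute_xx i j)

lemma commute_td {i j : Fin n} (h : i ≠ j) : Commute (wt a n i) (wd a n j) :=
  (commute_dd i j).mul_left (commute_xd h)

lemma commute_tt (i j : Fin n) : Commute (wt a n i) (wt a n j) := by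
  by_cases h : i = j
  · subst h; exact Commute.refl _
  · exact (commute_td h).mul_right (commute_tx h)

lemma wx_wd_self (i : Fin n) :
    wx a n i * wd a n i = wt a n i - a • (1 : WeylAlg a n) := by
  rw [wt, wd_wx_self]; abel

lemma wt_wx_self (i : Fin n) :
    wt a n i * wx a n i = wx a n i * wt a n i + a • wx a n i := by
  calc wt a n i * wx a n i = (wd a n i * wx a n i) * wx a n i := rfl
    _ = (wx a n i * wd a n i + a • (1 : WeylAlg a n)) * wx a n i := by rw [wd_wx_self]
    _ = wx a n i * (wd a n i * wx a n i) + a • wx a n i := by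
        rw [add_mul, mul_assoc, smul_mul_assoc, one_mul]
    _ = wx a n i * wt a n i + a • wx a n i := rfl

lemma wt_wd_self (i : Fin n) :
    wt a n i * wd a n i = wd a n i * wt a n i - a • wd a n i := by
  have h : wx a n i * wd a n i = wd a n i * wx a n i - a • (1 : WeylAlg a n) := by
    rw [wd_wx_self]; abel
  calc wt a n i * wd a n i = wd a n i * (wx a n i * wd a n i) := by rw [wt, mul_assoc]
    _ = wd a n i * (wd a n i * wx a n i) - a • wd a n i := by
        rw [h, mul_sub, mul_smul_comm, mul_one]
    _ = wd a n i * wt a n i - a • wd a n i := rfl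

lemma wx_wd_pow (i : Fin n) (p : ℕ) :
    wx a n i * wd a n i ^ (p + 1)
      = wd a n i ^ p * (wt a n i - (((p : ℂ) + 1) * a) • (1 : WeylAlg a n)) := by
  induction p with
  | zero =>
    simp only [pow_one, pow_zero, one_mul, Nat.cast_zero, zero_add, one_mul]
    rw [wx_wd_self]
  | succ p ih =>
    have : wx a n i * wd a n i ^ (p + 1 + 1) = (wx a n i * wd a n i ^ (p + 1)) * wd a n i := by
      rw [pow_succ, mul_assoc]
    rw [this, ih, mul_assoc, sub_mul, wt_wd_self, smul_mul_assoc, one_mul, sub_sub, ← add_smul]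
    conv_rhs => rw [pow_succ, mul_assoc, mul_sub, mul_smul_comm, mul_one]
    congr 2
    push_cast; ring_nf

lemma wd_wx_pow (i : Fin n) (p : ℕ) :
    wd a n i * wx a n i ^ (p + 1)
      = wx a n i ^ p * (wt a n i + ((p : ℂ) * a) • (1 : WeylAlg a n)) := by
  induction p with
  | zero =>
    simp only [pow_one, pow_zero, one_mul, Nat.cast_zero, zero_mul, zero_smul, add_zero]
    rw [pow_one]; rfl
  | succ p ih =>
    have : wd a n i * wx a n i ^ (p + 1 + 1) = (wd a n i * wx a n i ^ (p + 1)) * wx a n i := by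
      rw [pow_succ, mul_assoc]
    rw [this, ih, mul_assoc, add_mul, wt_wx_self, smul_mul_assoc, one_mul, add_assoc, ← add_smul]
    conv_rhs => rw [pow_succ, mul_assoc, mul_add, mul_smul_comm, mul_one]
    congr 2
    push_cast; ring_nf

section ListPull

lemma list_pull {M : Type*} [Monoid M] {n : ℕ} (g : Fin n → M) (i : Fin n)
    (hc : ∀ j, Commute (g i) (g j)) :
    ∀ L : List (Fin n), L.Nodup → i ∈ L →
      (L.map g).prod = g i * (L.map (Function.update g i 1)).prod := by
  intro L
  induction L with
  | nil => simp
  | cons x xs ih =>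
    intro hnd hmem
    rw [List.nodup_cons] at hnd
    by_cases hx : x = i
    · subst hx
      have hxs : xs.map g = xs.map (Function.update g x 1) := by
        apply List.map_congr_left
        intro j hj
        rw [Function.update_of_ne]
        rintro rfl; exact hnd.1 hj
      simp only [List.map_cons, List.prod_cons, Function.update_self, one_mul, hxs]
    · have hmem' : i ∈ xs := by
        rcases List.mem_cons.1 hmem with h | h
        · exact absurd h.symm hx
        · exact h
      simp only [List.map_cons, List.prod_cons]
      rw [ih hnd.2 hmem', ← mul_assoc, ← (hc x).eq, mul_assoc,
        Function.update_of_ne hx]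

end ListPull

noncomputable def xpow (a : ℂ) (n : ℕ) (f : Fin n → ℕ) : WeylAlg a n :=
  ((List.finRange n).map fun i => wx a n i ^ f i).prod

noncomputable def dpow (a : ℂ) (n : ℕ) (f : Fin n → ℕ) : WeylAlg a n :=
  ((List.finRange n).map fun i => wd a n i ^ f i).prod

lemma xpow_zero' : xpow a n (fun _ => 0) = 1 := by
  rw [xpow]
  apply List.prod_eq_one
  intro x hx
  simp only [List.mem_map] at hx
  obtain ⟨j, -, rfl⟩ := hx
  exact pow_zero _

lemma dpow_zero' : dpow a n (fun _ => 0) = 1 := by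
  rw [dpow]
  apply List.prod_eq_one
  intro x hx
  simp only [List.mem_map] at hx
  obtain ⟨j, -, rfl⟩ := hx
  exact pow_zero _

lemma xpow_pull (f : Fin n → ℕ) (i : Fin n) :
    xpow a n f = wx a n i ^ f i * xpow a n (Function.update f i 0) := by
  have h := list_pull (fun j => wx a n j ^ f j) i
    (fun j => (commute_xx i j).pow_pow _ _) (List.finRange n)
    (List.nodup_finRange n) (List.mem_finRange i)
  rw [xpow, h, xpow]
  congr 2
  apply List.map_congr_left
  intro j _
  by_cases hj : j = i
  · subst hj; simp
  · rw [Function.update_of_ne hj, Function.update_of_ne hj]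

lemma dpow_pull (f : Fin n → ℕ) (i : Fin n) :
    dpow a n f = wd a n i ^ f i * dpow a n (Function.update f i 0) := by
  have h := list_pull (fun j => wd a n j ^ f j) i
    (fun j => (commute_dd i j).pow_pow _ _) (List.finRange n)
    (List.nodup_finRange n) (List.mem_finRange i)
  rw [dpow, h, dpow]
  congr 2
  apply List.map_congr_left
  intro j _
  by_cases hj : j = i
  · subst hj; simp
  · rw [Function.update_of_ne hj, Function.update_of_ne hj]

lemma wx_mul_xpow (i : Fin n) (f : Fin n → ℕ) :
    wx a n i * xpow a n f = xpow a n (Function.update f i (f i + 1)) := by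
  rw [xpow_pull f i, ← mul_assoc, ← pow_succ', xpow_pull (Function.update f i (f i + 1)) i,
    Function.update_self, Function.update_idem]

lemma wd_mul_dpow (i : Fin n) (f : Fin n → ℕ) :
    wd a n i * dpow a n f = dpow a n (Function.update f i (f i + 1)) := by
  rw [dpow_pull f i, ← mul_assoc, ← pow_succ', dpow_pull (Function.update f i (f i + 1)) i,
    Function.update_self, Function.update_idem]

lemma commute_x_xpow (i : Fin n) (f : Fin n → ℕ) : Commute (wx a n i) (xpow a n f) := by
  apply Commute.list_prod_right
  intro y hy
  simp only [List.mem_map] at hy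
  obtain ⟨j, -, rfl⟩ := hy
  exact (commute_xx i j).pow_right _

lemma commute_d_xpow (i : Fin n) {f : Fin n → ℕ} (hf : f i = 0) :
    Commute (wd a n i) (xpow a n f) := by
  apply Commute.list_prod_right
  intro y hy
  simp only [List.mem_map] at hy
  obtain ⟨j, -, rfl⟩ := hy
  by_cases hj : i = j
  · subst hj; rw [hf, pow_zero]; exact Commute.one_right _
  · exact (commute_dx hj).pow_right _

lemma commute_t_xpow (i : Fin n) {f : Fin n → ℕ} (hf : f i = 0) :
    Commute (wt a n i) (xpow a n f) := by
  apply Commute.list_prod_right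
  intro y hy
  simp only [List.mem_map] at hy
  obtain ⟨j, -, rfl⟩ := hy
  by_cases hj : i = j
  · subst hj; rw [hf, pow_zero]; exact Commute.one_right _
  · exact (commute_tx hj).pow_right _

lemma commute_t_dpow (i : Fin n) {f : Fin n → ℕ} (hf : f i = 0) :
    Commute (wt a n i) (dpow a n f) := by
  apply Commute.list_prod_right
  intro y hy
  simp only [List.mem_map] at hy
  obtain ⟨j, -, rfl⟩ := hy
  by_cases hj : i = j
  · subst hj; rw [hf, pow_zero]; exact Commute.one_right _
  · exact (commute_td hj).pow_right _

/-- The unit shift `eᵢ` in `ℤⁿ`. -/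
def ee (n : ℕ) (i : Fin n) : Fin n → ℤ := fun j => if i = j then 1 else 0

@[simp] lemma ee_self (i : Fin n) : ee n i i = 1 := by simp [ee]
@[simp] lemma ee_ne {i j : Fin n} (h : i ≠ j) : ee n i j = 0 := by simp [ee, h]

/-- The canonical basis elements `W_k = x^{k⁺} ∂^{k⁻}` of `A_n(a)/A_n(a)m`. -/
noncomputable def Wm (a : ℂ) (n : ℕ) (k : Fin n → ℤ) : WeylAlg a n :=
  xpow a n (fun j => (k j).toNat) * dpow a n (fun j => (-(k j)).toNat)

lemma Wm_zero : Wm a n 0 = 1 := by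
  rw [Wm]
  simp only [Pi.zero_apply, Int.toNat_zero, neg_zero]
  rw [xpow_zero', dpow_zero', one_mul]

lemma Wm_x_nonneg {k : Fin n → ℤ} {i : Fin n} (h : 0 ≤ k i) :
    wx a n i * Wm a n k = Wm a n (k + ee n i) := by
  rw [Wm, ← mul_assoc, wx_mul_xpow, Wm]
  congr 1
  · congr 1
    funext j
    by_cases hj : j = i
    · subst hj
      simp only [Function.update_self, Pi.add_apply, ee_self]
      omega
    · rw [Function.update_of_ne hj]
      simp only [Pi.add_apply, ee_ne (Ne.symm hj), add_zero]
  · congr 1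
    funext j
    by_cases hj : j = i
    · subst hj
      simp only [Pi.add_apply, ee_self]
      omega
    · simp only [Pi.add_apply, ee_ne (Ne.symm hj), add_zero]

lemma Wm_d_nonpos {k : Fin n → ℤ} {i : Fin n} (h : k i ≤ 0) :
    wd a n i * Wm a n k = Wm a n (k - ee n i) := by
  have hf : (fun j => (k j).toNat) i = 0 := by simp only []; omega
  rw [Wm, ← mul_assoc, (commute_d_xpow i hf).eq, mul_assoc, wd_mul_dpow, Wm]
  congr 1
  · congr 1
    funext j
    by_cases hj : j = i
    · subst hj
      simp only [Pi.sub_apply, ee_self]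
      omega
    · simp only [Pi.sub_apply, ee_ne (Ne.symm hj), sub_zero]
  · congr 1
    funext j
    by_cases hj : j = i
    · subst hj
      simp only [Function.update_self, Pi.sub_apply, ee_self]
      omega
    · rw [Function.update_of_ne hj]
      simp only [Pi.sub_apply, ee_ne (Ne.symm hj), sub_zero]

lemma Wm_x_neg {k : Fin n → ℤ} {i : Fin n} (h : k i < 0) :
    ∃ b : ℂ, wx a n i * Wm a n k
      = Wm a n (k + ee n i) * (wt a n i + b • (1 : WeylAlg a n)) := by
  obtain ⟨p, hp⟩ : ∃ p, (-(k i)).toNat = p + 1 := ⟨(-(k i)).toNat - 1, by omega⟩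
  refine ⟨-(((p : ℂ) + 1) * a), ?_⟩
  have h1 : wx a n i * Wm a n k
      = xpow a n (fun j => (k j).toNat)
        * (wx a n i * dpow a n (fun j => (-(k j)).toNat)) := by
    rw [Wm, ← mul_assoc, (commute_x_xpow i _).eq, mul_assoc]
  rw [h1, dpow_pull _ i, ← mul_assoc (wx a n i), hp, wx_wd_pow]
  have hg0 : (Function.update (fun j => (-(k j)).toNat) i 0) i = 0 := Function.update_self ..
  have hcomm : Commute (wt a n i - (((p : ℂ) + 1) * a) • (1 : WeylAlg a n))
      (dpow a n (Function.update (fun j => (-(k j)).toNat) i 0)) :=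
    (commute_t_dpow i hg0).sub_left (Commute.smul_left (Commute.one_left _) _)
  rw [mul_assoc (wd a n i ^ p), hcomm.eq, ← mul_assoc (wd a n i ^ p)]
  have h2 : wd a n i ^ p * dpow a n (Function.update (fun j => (-(k j)).toNat) i 0)
      = dpow a n (Function.update (fun j => (-(k j)).toNat) i p) := by
    rw [dpow_pull (Function.update (fun j => (-(k j)).toNat) i p) i,
      Function.update_self, Function.update_idem]
  rw [h2, ← mul_assoc, Wm]
  congr 1
  · congr 1
    · congr 1
      funext j
      by_cases hj : j = i
      · subst hj
        simp only [Pi.add_apply, ee_self]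
        omega
      · simp only [Pi.add_apply, ee_ne (Ne.symm hj), add_zero]
    · congr 1
      funext j
      by_cases hj : j = i
      · subst hj
        simp only [Function.update_self, Pi.add_apply, ee_self]
        omega
      · rw [Function.update_of_ne hj]
        simp only [Pi.add_apply, ee_ne (Ne.symm hj), add_zero]
  · rw [neg_smul, ← sub_eq_add_neg]

lemma Wm_d_pos {k : Fin n → ℤ} {i : Fin n} (h : 0 < k i) :
    ∃ b : ℂ, wd a n i * Wm a n k
      = Wm a n (k - ee n i) * (wt a n i + b • (1 : WeylAlg a n)) := by
  obtain ⟨p, hp⟩ : ∃ p, (k i).toNat = p + 1 := ⟨(k i).toNat - 1, by omega⟩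
  refine ⟨(p : ℂ) * a, ?_⟩
  rw [Wm, ← mul_assoc, xpow_pull _ i, ← mul_assoc (wd a n i), hp, wd_wx_pow]
  have hg0 : (Function.update (fun j => (k j).toNat) i 0) i = 0 := Function.update_self ..
  have hcomm : Commute (wt a n i + ((p : ℂ) * a) • (1 : WeylAlg a n))
      (xpow a n (Function.update (fun j => (k j).toNat) i 0)) :=
    (commute_t_xpow i hg0).add_left (Commute.smul_left (Commute.one_left _) _)
  rw [mul_assoc (wx a n i ^ p), hcomm.eq, ← mul_assoc (wx a n i ^ p)]
  have h2 : wx a n i ^ p * xpow a n (Function.update (fun j => (k j).toNat) i 0)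
      = xpow a n (Function.update (fun j => (k j).toNat) i p) := by
    rw [xpow_pull (Function.update (fun j => (k j).toNat) i p) i,
      Function.update_self, Function.update_idem]
  rw [h2]
  have hfm : (fun j => (-(k j)).toNat) i = 0 := by simp only []; omega
  have hcomm2 : Commute (wt a n i + ((p : ℂ) * a) • (1 : WeylAlg a n))
      (dpow a n (fun j => (-(k j)).toNat)) :=
    (commute_t_dpow i hfm).add_left (Commute.smul_left (Commute.one_left _) _)
  rw [mul_assoc, hcomm2.eq, ← mul_assoc, Wm]
  congr 1
  congr 1
  · congr 1
    funext j
    by_cases hj : j = i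
    · subst hj
      simp only [Function.update_self, Pi.sub_apply, ee_self]
      omega
    · rw [Function.update_of_ne hj]
      simp only [Pi.sub_apply, ee_ne (Ne.symm hj), sub_zero]
  · congr 1
    funext j
    by_cases hj : j = i
    · subst hj
      simp only [Pi.sub_apply, ee_self]
      omega
    · simp only [Pi.sub_apply, ee_ne (Ne.symm hj), sub_zero]

set_option synthInstance.maxHeartbeats 1000000 in
set_option maxHeartbeats 1000000 in
open MvPolynomial in
/-- The commutative polynomial algebra `D` realized inside `A_n(a)`, as an algebra
homomorphism `ℂ[t₁,…,tₙ] → A_n(a)`, `X i ↦ tᵢ = ∂ᵢxᵢ`. -/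
noncomputable def phiD (a : ℂ) (n : ℕ) : MvPolynomial (Fin n) ℂ →ₐ[ℂ] WeylAlg a n :=
  letI : CommRing (Algebra.adjoin ℂ (Set.range (wt a n))) :=
    Algebra.adjoinCommRingOfComm ℂ (by
      rintro x ⟨i, rfl⟩ y ⟨j, rfl⟩
      exact commute_tt i j)
  ((Algebra.adjoin ℂ (Set.range (wt a n))).val).comp
    (MvPolynomial.aeval fun i =>
      (⟨wt a n i, Algebra.subset_adjoin ⟨i, rfl⟩⟩ : Algebra.adjoin ℂ (Set.range (wt a n))))

set_option synthInstance.maxHeartbeats 1000000 in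
set_option maxHeartbeats 1000000 in
lemma phiD_X (i : Fin n) : phiD a n (MvPolynomial.X i) = wt a n i := by
  simp [phiD]

lemma phiD_monomial (mo : Fin n →₀ ℕ) (b : ℂ) :
    phiD a n (MvPolynomial.monomial mo b)
      = b • ((List.finRange n).map fun i => wt a n i ^ mo i).prod := by
  have h0 : (MvPolynomial.monomial mo) b
      = MvPolynomial.C b * ((List.finRange n).map
          fun i => (MvPolynomial.X i : MvPolynomial (Fin n) ℂ) ^ mo i).prod := by
    rw [MvPolynomial.monomial_eq, Finsupp.prod_pow, Fin.prod_univ_def]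
  rw [h0, map_mul, map_list_prod, List.map_map]
  have h1 : ((List.finRange n).map ((phiD a n) ∘ fun i => (MvPolynomial.X i : MvPolynomial (Fin n) ℂ) ^ mo i))
      = ((List.finRange n).map fun i => wt a n i ^ mo i) := by
    apply List.map_congr_left
    intro j _
    simp [Function.comp, map_pow, phiD_X]
  rw [h1, Algebra.smul_def]
  congr 1
  rw [← MvPolynomial.algebraMap_eq, AlgHom.commutes]

lemma evalT_eq (p : MvPolynomial (Fin n) ℂ) : evalT a n p = phiD a n p := by
  conv_rhs => rw [p.as_sum, map_sum]
  rw [evalT]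
  exact Finset.sum_congr rfl fun mo _ => (phiD_monomial mo _).symm

/-- The underlying space of the weight-module model: basis indexed by `ℤⁿ`. -/
abbrev Pmod (n : ℕ) := (Fin n → ℤ) →₀ ℂ

/-- Eigenvalue data for the model: `∂ᵢ` maps `v_k ↦ lam k • v_{k−eᵢ}`. -/
noncomputable def lam (a : ℂ) (c : Fin n → ℂ) (i : Fin n) (k : Fin n → ℤ) : ℂ :=
  c i + a * ((k i : ℂ) - 1)

/-- Action of `xᵢ` on the model. -/
noncomputable def Xop (n : ℕ) (i : Fin n) : Module.End ℂ (Pmod n) :=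
  Finsupp.lsum ℂ fun k => Finsupp.lsingle (k + ee n i)

/-- Action of `∂ᵢ` on the model. -/
noncomputable def Dop (a : ℂ) (c : Fin n → ℂ) (i : Fin n) : Module.End ℂ (Pmod n) :=
  Finsupp.lsum ℂ fun k => lam a c i k • Finsupp.lsingle (k - ee n i)

variable {c : Fin n → ℂ}

@[simp] lemma Xop_single (i : Fin n) (k : Fin n → ℤ) (x : ℂ) :
    Xop n i (Finsupp.single k x) = Finsupp.single (k + ee n i) x := by
  simp [Xop]

@[simp] lemma Dop_single (i : Fin n) (k : Fin n → ℤ) (x : ℂ) :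
    Dop a c i (Finsupp.single k x) = lam a c i k • Finsupp.single (k - ee n i) x := by
  simp [Dop]

lemma lam_add_ne {i j : Fin n} (h : i ≠ j) (k : Fin n → ℤ) :
    lam a c i (k + ee n j) = lam a c i k := by
  simp [lam, ee_ne (Ne.symm h)]

lemma lam_sub_ne {i j : Fin n} (h : i ≠ j) (k : Fin n → ℤ) :
    lam a c i (k - ee n j) = lam a c i k := by
  simp [lam, ee_ne (Ne.symm h)]

lemma lam_add_self (i : Fin n) (k : Fin n → ℤ) :
    lam a c i (k + ee n i) = lam a c i k + a := by
  simp only [lam, Pi.add_apply, ee_self]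
  push_cast
  ring

/-- The representation of `A_n(a)` on the model. -/
noncomputable def Phi (a : ℂ) (n : ℕ) (c : Fin n → ℂ) :
    WeylAlg a n →ₐ[ℂ] Module.End ℂ (Pmod n) :=
  RingQuot.liftAlgHom ℂ
    ⟨FreeAlgebra.lift ℂ (Sum.elim (fun i => Xop n i) (fun i => Dop a c i)), by
      intro x y h
      cases h with
      | xx i j =>
        simp only [map_mul, FreeAlgebra.lift_ι_apply, Sum.elim_inl]
        apply Finsupp.lhom_ext
        intro k x
        simp only [Module.End.mul_apply, Xop_single]
        rw [add_right_comm]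
      | dd i j =>
        simp only [map_mul, FreeAlgebra.lift_ι_apply, Sum.elim_inr]
        apply Finsupp.lhom_ext
        intro k x
        simp only [Module.End.mul_apply, Dop_single, Finsupp.smul_single, map_smul,
          Finsupp.smul_single]
        rw [smul_smul, smul_smul, sub_right_comm]
        by_cases hij : i = j
        · subst hij; rfl
        · rw [lam_sub_ne hij, lam_sub_ne (Ne.symm hij), mul_comm]
      | dx i j =>
        simp only [map_mul, map_add,
          apply_ite (FreeAlgebra.lift ℂ (Sum.elim (fun i => Xop n i) (fun i => Dop a c i))),
          map_zero, AlgHom.commutes, FreeAlgebra.lift_ι_apply, Sum.elim_inl, Sum.elim_inr]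
        apply Finsupp.lhom_ext
        intro k x
        by_cases hij : i = j
        · subst hij
          simp only [if_pos rfl, LinearMap.add_apply, Module.End.mul_apply, Xop_single,
            Dop_single, map_smul, Finsupp.smul_single, add_sub_cancel_right, sub_add_cancel]
          rw [lam_add_self, add_smul]
          simp [Module.algebraMap_end_apply, Finsupp.single_add, Finsupp.smul_single]
        · simp only [if_neg hij, LinearMap.add_apply, Module.End.mul_apply, Xop_single,
            Dop_single, map_smul, LinearMap.zero_apply, add_zero, Finsupp.smul_single]
          rw [lam_add_ne hij, sub_add_eq_add_sub]⟩

lemma Phi_mk (y : FreeAlgebra ℂ (Fin n ⊕ Fin n)) :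
    Phi a n c (RingQuot.mkAlgHom ℂ (WeylRel a n) y)
      = FreeAlgebra.lift ℂ (Sum.elim (fun i => Xop n i) (fun i => Dop a c i)) y := by
  unfold Phi
  exact RingQuot.liftAlgHom_mkAlgHom_apply (S := ℂ)
    (FreeAlgebra.lift ℂ (Sum.elim (fun i => Xop n i) (fun i => Dop a c i))) _ y

lemma Phi_wx (i : Fin n) : Phi a n c (wx a n i) = Xop n i := by
  have h := Phi_mk (a := a) (c := c) (FreeAlgebra.ι ℂ (Sum.inl i))
  rw [FreeAlgebra.lift_ι_apply, Sum.elim_inl] at h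
  exact h

lemma Phi_wd (i : Fin n) : Phi a n c (wd a n i) = Dop a c i := by
  have h := Phi_mk (a := a) (c := c) (FreeAlgebra.ι ℂ (Sum.inr i))
  rw [FreeAlgebra.lift_ι_apply, Sum.elim_inr] at h
  exact h

lemma Phi_wt_single (i : Fin n) (k : Fin n → ℤ) (x : ℂ) :
    Phi a n c (wt a n i) (Finsupp.single k x)
      = (c i + a * (k i : ℂ)) • Finsupp.single k x := by
  rw [wt, map_mul, Module.End.mul_apply, Phi_wx, Phi_wd, Xop_single, Dop_single,
    add_sub_cancel_right, lam_add_self]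
  congr 1
  simp [lam]
  ring

lemma Phi_wt_apply (i : Fin n) (f : Pmod n) (k : Fin n → ℤ) :
    Phi a n c (wt a n i) f k = (c i + a * (k i : ℂ)) * f k := by
  induction f using Finsupp.induction_linear with
  | zero => simp
  | add f g hf hg => simp [map_add, hf, hg, mul_add]
  | single k' x =>
    rw [Phi_wt_single]
    rcases eq_or_ne k' k with rfl | hne
    · simp
    · simp [Finsupp.single_eq_of_ne' hne]

/-- The vacuum-vector evaluation `ψ : A_n(a) → P`, `r ↦ Φ(r)(v₀)`. -/
noncomputable def psi (a : ℂ) (n : ℕ) (c : Fin n → ℂ) : WeylAlg a n →ₗ[ℂ] Pmod n :=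
  (LinearMap.applyₗ (Finsupp.single 0 1)).comp (Phi a n c).toLinearMap

lemma psi_apply (r : WeylAlg a n) : psi a n c r = Phi a n c r (Finsupp.single 0 1) := rfl

lemma psi_mul (s r : WeylAlg a n) : psi a n c (s * r) = Phi a n c s (psi a n c r) := by
  rw [psi_apply, map_mul, Module.End.mul_apply, psi_apply]

open MvPolynomial in
lemma Phi_phiD_apply (p : MvPolynomial (Fin n) ℂ) :
    Phi a n c (phiD a n p) (Finsupp.single 0 1)
      = MvPolynomial.eval c p • Finsupp.single 0 1 := by
  induction p using MvPolynomial.induction_on with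
  | C b =>
    rw [← MvPolynomial.algebraMap_eq, AlgHom.commutes, AlgHom.commutes,
      Module.algebraMap_end_apply]
    simp [MvPolynomial.algebraMap_eq]
  | add p q hp hq =>
    rw [map_add, map_add, LinearMap.add_apply, hp, hq, map_add, add_smul]
  | mul_X p i hp =>
    rw [map_mul, map_mul, Module.End.mul_apply, phiD_X, Phi_wt_single, map_smul, hp,
      map_mul, eval_X, smul_smul]
    congr 1
    simp only [Pi.zero_apply, Int.cast_zero, mul_zero, add_zero]
    ring

lemma sum_natAbs_lt {k k' : Fin n → ℤ} {i : Fin n} (hne : ∀ j, j ≠ i → k' j = k j)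
    (hlt : (k' i).natAbs < (k i).natAbs) :
    ∑ j, (k' j).natAbs < ∑ j, (k j).natAbs :=
  Finset.sum_lt_sum
    (fun j _ => by
      rcases eq_or_ne j i with rfl | h
      · exact hlt.le
      · rw [hne j h])
    ⟨i, Finset.mem_univ i, hlt⟩

lemma psi_Wm (hlam : ∀ (i : Fin n) (k : Fin n → ℤ), lam a c i k ≠ 0) (k : Fin n → ℤ) :
    ∃ ν : ℂ, ν ≠ 0 ∧ psi a n c (Wm a n k) = ν • Finsupp.single k 1 := by
  suffices H : ∀ N (k : Fin n → ℤ), (∑ j, (k j).natAbs) = N →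
      ∃ ν : ℂ, ν ≠ 0 ∧ psi a n c (Wm a n k) = ν • Finsupp.single k 1 by
    exact H _ k rfl
  intro N
  induction N using Nat.strong_induction_on with
  | _ N IH =>
    intro k hk
    by_cases h0 : k = 0
    · subst h0
      refine ⟨1, one_ne_zero, ?_⟩
      rw [Wm_zero, psi_apply, map_one, Module.End.one_apply, one_smul]
    · obtain ⟨i, hi⟩ : ∃ i, k i ≠ 0 := by
        by_contra hcon
        push_neg at hcon
        exact h0 (funext hcon)
      rcases lt_or_gt_of_ne hi with hneg | hpos
      · have h1 : (k + ee n i) i ≤ 0 := by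
          simp only [Pi.add_apply, ee_self]
          omega
        have h2 : wd a n i * Wm a n (k + ee n i) = Wm a n k := by
          rw [Wm_d_nonpos h1, add_sub_cancel_right]
        have hmeas : (∑ j, ((k + ee n i) j).natAbs) < N := by
          rw [← hk]
          apply sum_natAbs_lt (i := i)
          · intro j hj
            simp [ee_ne (Ne.symm hj)]
          · simp only [Pi.add_apply, ee_self]
            omega
        obtain ⟨ν, hν, hpsi⟩ := IH _ hmeas _ rfl
        refine ⟨ν * lam a c i (k + ee n i), mul_ne_zero hν (hlam _ _), ?_⟩
        rw [← h2, psi_mul, hpsi, map_smul, Phi_wd, Dop_single, add_sub_cancel_right,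
          smul_smul]
      · have h1 : (0 : ℤ) ≤ (k - ee n i) i := by
          simp only [Pi.sub_apply, ee_self]
          omega
        have h2 : wx a n i * Wm a n (k - ee n i) = Wm a n k := by
          rw [Wm_x_nonneg h1, sub_add_cancel]
        have hmeas : (∑ j, ((k - ee n i) j).natAbs) < N := by
          rw [← hk]
          apply sum_natAbs_lt (i := i)
          · intro j hj
            simp [ee_ne (Ne.symm hj)]
          · simp only [Pi.sub_apply, ee_self]
            omega
        obtain ⟨ν, hν, hpsi⟩ := IH _ hmeas _ rfl
        refine ⟨ν, hν, ?_⟩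
        rw [← h2, psi_mul, hpsi, map_smul, Phi_wx, Xop_single, sub_add_cancel]

open MvPolynomial in
lemma shiftEquiv_apply_X (i : Fin n) (b : ℂ) :
    (shiftEquiv n b i) (X i) = X i - C b := by
  show shiftHom n b i (X i) = _
  simp [shiftHom]

open MvPolynomial in
lemma shiftEquiv_pow_X (i : Fin n) (p : ℕ) :
    ((shiftEquiv n a i) ^ p) (X i) = X i - C ((p : ℂ) * a) := by
  induction p with
  | zero => simp
  | succ p ih =>
    rw [pow_succ, AlgEquiv.mul_apply, shiftEquiv_apply_X, map_sub, ih,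
      ← MvPolynomial.algebraMap_eq, AlgEquiv.commutes, MvPolynomial.algebraMap_eq,
      sub_sub, ← map_add]
    congr 2
    push_cast
    ring

open MvPolynomial in
lemma shiftEquiv_zpow_X (i : Fin n) (z : ℤ) :
    ((shiftEquiv n a i) ^ z) (X i) = X i - C ((z : ℂ) * a) := by
  obtain ⟨p, rfl | rfl⟩ := Int.eq_nat_or_neg z
  · rw [zpow_natCast, shiftEquiv_pow_X]
    norm_num
  · rw [zpow_neg, zpow_natCast]
    apply ((shiftEquiv n a i) ^ p).injective
    have hinv : ((shiftEquiv n a i) ^ p)⁻¹ = ((shiftEquiv n a i) ^ p).symm := rfl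
    rw [hinv, AlgEquiv.apply_symm_apply, map_sub, shiftEquiv_pow_X,
      ← MvPolynomial.algebraMap_eq, AlgEquiv.commutes, MvPolynomial.algebraMap_eq,
      sub_sub, ← map_add]
    have hz : ((p : ℕ) : ℂ) * a + (((-(p : ℤ) : ℤ)) : ℂ) * a = 0 := by push_cast; ring
    rw [show ((-(p : ℕ) : ℤ) : ℂ) = (((-(p : ℤ) : ℤ)) : ℂ) by norm_cast, hz, map_zero, sub_zero]

/-- Projection to the quotient, typed in `WeylAlg`. -/
noncomputable def wmk (a : ℂ) (n : ℕ) (y : FreeAlgebra ℂ (Fin n ⊕ Fin n)) : WeylAlg a n :=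
  RingQuot.mkAlgHom ℂ (WeylRel a n) y

lemma wmk_mul (y z : FreeAlgebra ℂ (Fin n ⊕ Fin n)) :
    wmk a n (y * z) = wmk a n y * wmk a n z := by
  unfold wmk
  exact map_mul _ _ _

lemma wmk_add (y z : FreeAlgebra ℂ (Fin n ⊕ Fin n)) :
    wmk a n (y + z) = wmk a n y + wmk a n z := by
  unfold wmk
  exact map_add _ _ _

lemma wmk_algebraMap (b : ℂ) :
    wmk a n (algebraMap ℂ (FreeAlgebra ℂ (Fin n ⊕ Fin n)) b) = b • (1 : WeylAlg a n) := by
  unfold wmk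
  rw [AlgHom.commutes]
  exact Algebra.algebraMap_eq_smul_one (A := RingQuot (WeylRel a n)) b

lemma wmk_inl (i : Fin n) : wmk a n (FreeAlgebra.ι ℂ (Sum.inl i)) = wx a n i := rfl

lemma wmk_inr (i : Fin n) : wmk a n (FreeAlgebra.ι ℂ (Sum.inr i)) = wd a n i := rfl

lemma wmk_surjective : ∀ r : WeylAlg a n, ∃ y, wmk a n y = r :=
  RingQuot.mkAlgHom_surjective ℂ (WeylRel a n)

end Stmt13

open Stmt13 MvPolynomial in
theorem stmt_13 (a : ℂ) (ha : a ≠ 0) (n : ℕ)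
    (m : Ideal (MvPolynomial (Fin n) ℂ)) (hm : m.IsMaximal)
    (hnd : ∀ τ ∈ shiftGroup n a, ∀ i : Fin n,
      MvPolynomial.X i ∉ m.map (τ : MvPolynomial (Fin n) ℂ ≃ₐ[ℂ] MvPolynomial (Fin n) ℂ).toAlgHom) :
    IsSimpleModule (WeylAlg a n)
      (WeylAlg a n ⧸ Submodule.span (WeylAlg a n)
        (evalT a n '' (m : Set (MvPolynomial (Fin n) ℂ)))) := by
  classical
  obtain ⟨c, hc⟩ := (isMaximal_iff_eq_vanishingIdeal_singleton (I := m)).1 hm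
  have hmem : ∀ p : MvPolynomial (Fin n) ℂ, p ∈ m ↔ eval c p = 0 := by
    intro p
    rw [hc]
    exact mem_vanishingIdeal_singleton_iff c p
  -- nondegeneracy of the orbit, in coordinates
  have hndeg : ∀ (i : Fin n) (z : ℤ), c i + (z : ℂ) * a ≠ 0 := by
    intro i z hzero
    have hτG : (shiftEquiv n a i) ^ z ∈ shiftGroup n a :=
      Subgroup.zpow_mem _ (Subgroup.subset_closure (Set.mem_range_self i)) z
    apply hnd ((shiftEquiv n a i) ^ z) hτG i
    have hq : (X i - C (c i) : MvPolynomial (Fin n) ℂ) ∈ m := by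
      rw [hmem]
      simp
    have himg : ((shiftEquiv n a i) ^ z).toAlgHom (X i - C (c i)) = X i := by
      show ((shiftEquiv n a i) ^ z) (X i - C (c i)) = X i
      rw [map_sub, shiftEquiv_zpow_X, ← MvPolynomial.algebraMap_eq, AlgEquiv.commutes,
        MvPolynomial.algebraMap_eq, sub_sub, ← map_add]
      have hz : (z : ℂ) * a + c i = 0 := by rw [add_comm]; exact hzero
      rw [hz, map_zero, sub_zero]
    exact himg ▸ Ideal.mem_map_of_mem _ hq
  have hlam : ∀ (i : Fin n) (k : Fin n → ℤ), Stmt13.lam a c i k ≠ 0 := by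
    intro i k
    have h1 := hndeg i (k i - 1)
    have h2 : c i + ((k i - 1 : ℤ) : ℂ) * a = c i + a * ((k i : ℂ) - 1) := by
      push_cast
      ring
    rw [h2] at h1
    exact h1
  set I := Submodule.span (WeylAlg a n) (evalT a n '' (m : Set (MvPolynomial (Fin n) ℂ)))
    with hIdef
  rw [isSimpleModule_iff_isCoatom]
  have hgen : ∀ p ∈ m, phiD a n p ∈ I := by
    intro p hp
    have hx : evalT a n p ∈ evalT a n '' (m : Set (MvPolynomial (Fin n) ℂ)) :=
      ⟨p, hp, rfl⟩
    have := Submodule.subset_span (R := WeylAlg a n) hx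
    rwa [evalT_eq] at this
  have hpsiI : ∀ u ∈ I, psi a n c u = 0 := by
    intro u hu
    induction hu using Submodule.span_induction with
    | mem u hu =>
      obtain ⟨p, hp, rfl⟩ := hu
      rw [evalT_eq, psi_apply, Phi_phiD_apply, (hmem p).1 hp, zero_smul]
    | zero => rw [map_zero]
    | add x y hx hy ihx ihy => rw [map_add, ihx, ihy, add_zero]
    | smul r u hu ihu =>
      rw [smul_eq_mul, psi_mul, ihu, map_zero]
  -- the ℂ-span of the W's together with I exhausts the algebra
  set WS := Submodule.span ℂ (Set.range (Wm a n)) with hWSdef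
  set S := (Submodule.restrictScalars ℂ I) ⊔ WS with hSdef
  have hone : (1 : WeylAlg a n) ∈ S :=
    Submodule.mem_sup_right (Submodule.subset_span ⟨0, Wm_zero⟩)
  have hWt : ∀ (k : Fin n → ℤ) (i : Fin n) (b : ℂ),
      Wm a n k * (wt a n i + b • 1) ∈ S := by
    intro k i b
    have hq : (X i - C (c i) : MvPolynomial (Fin n) ℂ) ∈ m := by
      rw [hmem]; simp
    have hdec : wt a n i + b • (1 : WeylAlg a n)
        = phiD a n (X i - C (c i)) + (c i + b) • 1 := by
      rw [map_sub, phiD_X, ← MvPolynomial.algebraMap_eq, AlgHom.commutes,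
        Algebra.algebraMap_eq_smul_one, add_smul]
      abel
    rw [hdec, mul_add, mul_smul_comm, mul_one]
    apply Submodule.add_mem
    · apply Submodule.mem_sup_left
      show Wm a n k * phiD a n (X i - C (c i)) ∈ I
      have := Submodule.smul_mem I (Wm a n k) (hgen _ hq)
      rwa [smul_eq_mul] at this
    · exact Submodule.mem_sup_right (Submodule.smul_mem _ _ (Submodule.subset_span ⟨k, rfl⟩))
  have hxW : ∀ (i : Fin n) (w : WeylAlg a n), w ∈ WS → wx a n i * w ∈ S := by
    intro i w hw
    induction hw using Submodule.span_induction with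
    | mem w hw =>
      obtain ⟨k, rfl⟩ := hw
      rcases le_or_gt 0 (k i) with hge | hlt
      · rw [Wm_x_nonneg hge]
        exact Submodule.mem_sup_right (Submodule.subset_span ⟨_, rfl⟩)
      · obtain ⟨b, hb⟩ := Wm_x_neg hlt
        rw [hb]
        exact hWt _ _ _
    | zero => rw [mul_zero]; exact S.zero_mem
    | add x y hx hy ihx ihy => rw [mul_add]; exact S.add_mem ihx ihy
    | smul r w hw ihw => rw [mul_smul_comm]; exact S.smul_mem r ihw
  have hdW : ∀ (i : Fin n) (w : WeylAlg a n), w ∈ WS → wd a n i * w ∈ S := by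
    intro i w hw
    induction hw using Submodule.span_induction with
    | mem w hw =>
      obtain ⟨k, rfl⟩ := hw
      rcases le_or_gt (k i) 0 with hle | hgt
      · rw [Wm_d_nonpos hle]
        exact Submodule.mem_sup_right (Submodule.subset_span ⟨_, rfl⟩)
      · obtain ⟨b, hb⟩ := Wm_d_pos hgt
        rw [hb]
        exact hWt _ _ _
    | zero => rw [mul_zero]; exact S.zero_mem
    | add x y hx hy ihx ihy => rw [mul_add]; exact S.add_mem ihx ihy
    | smul r w hw ihw => rw [mul_smul_comm]; exact S.smul_mem r ihw
  have hIM : ∀ (r u : WeylAlg a n), u ∈ I → r * u ∈ S := by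
    intro r u hu
    apply Submodule.mem_sup_left
    show r * u ∈ I
    have := Submodule.smul_mem I r hu
    rwa [smul_eq_mul] at this
  have hxS : ∀ (i : Fin n) (r : WeylAlg a n), r ∈ S → wx a n i * r ∈ S := by
    intro i r hr
    obtain ⟨u, hu, w, hw, hsum⟩ := Submodule.mem_sup.1 hr
    rw [← hsum, mul_add]
    exact S.add_mem (hIM _ _ hu) (hxW i w hw)
  have hdS : ∀ (i : Fin n) (r : WeylAlg a n), r ∈ S → wd a n i * r ∈ S := by
    intro i r hr
    obtain ⟨u, hu, w, hw, hsum⟩ := Submodule.mem_sup.1 hr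
    rw [← hsum, mul_add]
    exact S.add_mem (hIM _ _ hu) (hdW i w hw)
  have hS : ∀ r : WeylAlg a n, r ∈ S := by
    have key : ∀ y : FreeAlgebra ℂ (Fin n ⊕ Fin n), ∀ w ∈ S,
        wmk a n y * w ∈ S := by
      intro y
      induction y using FreeAlgebra.induction with
      | grade0 b =>
        intro w hw
        rw [wmk_algebraMap, smul_mul_assoc, one_mul]
        exact S.smul_mem b hw
      | grade1 v =>
        rcases v with i | i
        · rw [wmk_inl]
          exact fun w hw => hxS i w hw
        · rw [wmk_inr]
          exact fun w hw => hdS i w hw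
      | mul y z ihy ihz =>
        intro w hw
        rw [wmk_mul, mul_assoc]
        exact ihy _ (ihz w hw)
      | add y z ihy ihz =>
        intro w hw
        rw [wmk_add, add_mul]
        exact S.add_mem (ihy w hw) (ihz w hw)
    intro r
    obtain ⟨y, rfl⟩ := wmk_surjective r
    have h := key y 1 hone
    rwa [mul_one] at h
  -- the inverse map χ on the span of the W's
  choose ν hν hψW using psi_Wm (c := c) hlam
  set χ : Pmod n →ₗ[ℂ] WeylAlg a n :=
    Finsupp.lsum ℂ (fun k => LinearMap.toSpanSingleton ℂ _ ((ν k)⁻¹ • Wm a n k)) with hχdef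
  have hχψ : ∀ w ∈ WS, χ (psi a n c w) = w := by
    intro w hw
    induction hw using Submodule.span_induction with
    | mem w hw =>
      obtain ⟨k, rfl⟩ := hw
      rw [hψW k, map_smul, hχdef]
      rw [Finsupp.lsum_single, LinearMap.toSpanSingleton_apply, one_smul, smul_smul,
        mul_inv_cancel₀ (hν k), one_smul]
    | zero => rw [map_zero, map_zero]
    | add x y hx hy ihx ihy => rw [map_add, map_add, ihx, ihy]
    | smul r w hw ihw => rw [map_smul, map_smul, ihw]
  have hker : ∀ r : WeylAlg a n, psi a n c r = 0 → r ∈ I := by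
    intro r hr
    obtain ⟨u, hu, w, hw, hsum⟩ := Submodule.mem_sup.1 (hS r)
    have hpu : psi a n c u = 0 := hpsiI u hu
    have hpw : psi a n c w = 0 := by
      have h := hr
      rw [← hsum, map_add, hpu, zero_add] at h
      exact h
    have hw0 : w = 0 := by
      rw [← hχψ w hw, hpw, map_zero]
    rw [← hsum, hw0, add_zero]
    exact hu
  constructor
  · -- I ≠ ⊤
    intro htop
    have h1 : (1 : WeylAlg a n) ∈ I := by rw [htop]; trivial
    have h2 := hpsiI 1 h1
    rw [psi_apply, map_one, Module.End.one_apply] at h2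
    exact one_ne_zero (Finsupp.single_eq_zero.1 h2)
  · intro J hJ
    obtain ⟨r, hrJ, hrI⟩ := SetLike.exists_of_lt hJ
    set V := Submodule.map (psi a n c) (Submodule.restrictScalars ℂ J) with hVdef
    have hVclosed : ∀ (s : WeylAlg a n), ∀ f ∈ V, Phi a n c s f ∈ V := by
      rintro s f ⟨j, hj, rfl⟩
      refine ⟨s * j, ?_, ?_⟩
      · have := Submodule.smul_mem J s hj
        rwa [smul_eq_mul] at this
      · exact psi_mul (c := c) s j
    have hfV : psi a n c r ∈ V := ⟨r, hrJ, rfl⟩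
    have hfne : psi a n c r ≠ 0 := fun h => hrI (hker r h)
    -- Step A: some single k 1 lies in V
    have hstepA : ∀ (N : ℕ) (f : Pmod n), f ∈ V → f ≠ 0 → f.support.card ≤ N →
        ∃ k : Fin n → ℤ, Finsupp.single k (1 : ℂ) ∈ V := by
      intro N
      induction N with
      | zero =>
        intro f _ hne hcard
        exact absurd (Finsupp.card_support_eq_zero.1 (Nat.le_zero.1 hcard)) hne
      | succ N IH =>
        intro f hfV' hfne' hcard
        obtain ⟨k0, hk0⟩ := Finset.Nonempty.exists_mem (Finsupp.support_nonempty_iff.2 hfne')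
        by_cases hex : ∃ k1 ∈ f.support, k1 ≠ k0
        · obtain ⟨k1, hk1s, hk1ne⟩ := hex
          obtain ⟨i, hi⟩ : ∃ i, k1 i ≠ k0 i := Function.ne_iff.1 hk1ne
          set g := Phi a n c (wt a n i) f - (c i + a * (k1 i : ℂ)) • f with hg
          have hgV : g ∈ V :=
            Submodule.sub_mem _ (hVclosed _ f hfV') (Submodule.smul_mem _ _ hfV')
          have hgapply : ∀ k, g k
              = ((c i + a * (k i : ℂ)) - (c i + a * (k1 i : ℂ))) * f k := by
            intro k
            rw [hg, Finsupp.sub_apply, Finsupp.smul_apply, Phi_wt_apply, smul_eq_mul]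
            ring
          have hfactor : ∀ k : Fin n → ℤ,
              (c i + a * (k i : ℂ)) - (c i + a * (k1 i : ℂ)) = a * ((k i : ℂ) - (k1 i : ℂ)) := by
            intro k; ring
          have hgk0 : g k0 ≠ 0 := by
            rw [hgapply, hfactor]
            apply mul_ne_zero
            · apply mul_ne_zero ha
              rw [sub_ne_zero]
              intro h
              exact hi (by exact_mod_cast h.symm)
            · exact Finsupp.mem_support_iff.1 hk0
          have hgne : g ≠ 0 := by
            intro h
            apply hgk0
            rw [h]
            rfl
          have hsub : g.support ⊆ f.support.erase k1 := by
            intro k hk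
            rw [Finsupp.mem_support_iff] at hk
            rw [Finset.mem_erase, Finsupp.mem_support_iff]
            constructor
            · rintro rfl
              apply hk
              rw [hgapply, sub_self, zero_mul]
            · intro hfk
              apply hk
              rw [hgapply, hfk, mul_zero]
          have hcard' : g.support.card ≤ N := by
            have h1 := Finset.card_le_card hsub
            rw [Finset.card_erase_of_mem hk1s] at h1
            omega
          exact IH g hgV hgne hcard'
        · push_neg at hex
          refine ⟨k0, ?_⟩
          have hf0 : f k0 ≠ 0 := Finsupp.mem_support_iff.1 hk0
          have hfs : f = Finsupp.single k0 (f k0) := by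
            ext k
            rcases eq_or_ne k k0 with rfl | h
            · rw [Finsupp.single_eq_same]
            · rw [Finsupp.single_eq_of_ne' (Ne.symm h)]
              by_contra hcon
              exact h (hex k (Finsupp.mem_support_iff.2 hcon))
          obtain ⟨b, hbne, hfs'⟩ : ∃ b, b ≠ 0 ∧ f = Finsupp.single k0 b :=
            ⟨f k0, hf0, hfs⟩
          have hsm := Submodule.smul_mem V b⁻¹ hfV'
          rw [hfs', Finsupp.smul_single, smul_eq_mul, inv_mul_cancel₀ hbne] at hsm
          exact hsm
    obtain ⟨k, hkV⟩ := hstepA (psi a n c r).support.card (psi a n c r) hfV hfne le_rfl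
    -- Step B: move down to single 0 1
    have hstepB : ∀ (N : ℕ) (k : Fin n → ℤ), (∑ j, (k j).natAbs) = N →
        Finsupp.single k (1 : ℂ) ∈ V → Finsupp.single (0 : Fin n → ℤ) (1 : ℂ) ∈ V := by
      intro N
      induction N using Nat.strong_induction_on with
      | _ N IH =>
        intro k hkN hkV'
        by_cases h0 : k = 0
        · rw [h0] at hkV'
          exact hkV'
        · obtain ⟨i, hi⟩ : ∃ i, k i ≠ 0 := by
            by_contra hcon
            push_neg at hcon
            exact h0 (funext hcon)
          rcases lt_or_gt_of_ne hi with hneg | hpos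
          · have hx1 := hVclosed (wx a n i) _ hkV'
            rw [Phi_wx, Xop_single] at hx1
            have hmeas : (∑ j, ((k + ee n i) j).natAbs) < N := by
              rw [← hkN]
              apply sum_natAbs_lt (i := i)
              · intro j hj
                simp [ee_ne (Ne.symm hj)]
              · simp only [Pi.add_apply, ee_self]
                omega
            exact IH _ hmeas _ rfl hx1
          · have hd1 := hVclosed (wd a n i) _ hkV'
            rw [Phi_wd, Dop_single] at hd1
            have hd2 := Submodule.smul_mem V (Stmt13.lam a c i k)⁻¹ hd1
            rw [smul_smul, inv_mul_cancel₀ (hlam i k), one_smul] at hd2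
            have hmeas : (∑ j, ((k - ee n i) j).natAbs) < N := by
              rw [← hkN]
              apply sum_natAbs_lt (i := i)
              · intro j hj
                simp [ee_ne (Ne.symm hj)]
              · simp only [Pi.sub_apply, ee_self]
                omega
            exact IH _ hmeas _ rfl hd2
    have hv0 : Finsupp.single (0 : Fin n → ℤ) (1 : ℂ) ∈ V := hstepB _ k rfl hkV
    obtain ⟨u, hu, hpu⟩ := hv0
    have h1u : (1 : WeylAlg a n) - u ∈ I := by
      apply hker
      rw [map_sub, hpu, psi_apply, map_one, Module.End.one_apply, sub_self]
    have h1J : (1 : WeylAlg a n) ∈ J := by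
      have hsum := J.add_mem (le_of_lt hJ h1u) hu
      rwa [sub_add_cancel] at hsum
    rw [eq_top_iff]
    intro r' _
    have := Submodule.smul_mem J r' h1J
    rwa [smul_eq_mul, mul_one] at this
end
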